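/- arXiv:2209.00013 — 9 statements merged into one kernel-verified Lean document; each statement's English description precedes it below -/
import Mathlib

section
/- Let d ≥ 2 be an integer, L > 0, k a real constant, U ⊆ ℝ² open, and f, r : U → ℝ twice continuously differentiable with r > 0 on U. Suppose the continuous functions T₊₊, T₋₋, T₊₋ : U → ℝ satisfy the reduced Einstein equations: r·T₊₊/(d−1) = −(∂₊f)(∂₊r) − ∂₊∂₊r, r·T₋₋/(d−1) = −(∂₋f)(∂₋r) − ∂₋∂₋r, and r·T₊₋/(d−1) = ∂₊∂₋r + ((d−2)/r)[ (e^{−f}/2)(k + r²/L²) + (∂₊r)(∂₋r) ] + (r/L²)e^{−f}. Define the null expansions θ± = (d−1)∂±r/r and the mass function μ = k r^{d−2} + 2 e^{f} r^{d−2} (∂₊r)(∂₋r) + r^{d}/L². Then on U one has the identities ∂₊μ = (2 e^{f} r^{d}/(d−1)²)(T₊₋ θ₊ − θ₋ T₊₊) and ∂₋μ = (2 e^{f} r^{d}/(d−1)²)(T₊₋ θ₋ − θ₊ T₋₋). -/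
/-- Partial derivative in the `x⁺` (first coordinate) direction. -/
noncomputable def dplus (g : ℝ × ℝ → ℝ) (x : ℝ × ℝ) : ℝ := fderiv ℝ g x (1, 0)

/-- Partial derivative in the `x⁻` (second coordinate) direction. -/
noncomputable def dminus (g : ℝ × ℝ → ℝ) (x : ℝ × ℝ) : ℝ := fderiv ℝ g x (0, 1)

private lemma alg (m : ℕ) (R E a b fp P Q L k T1 T2 : ℝ) (hR : R ≠ 0) (hL : L ≠ 0)
    (hE : E ≠ 0) (hm : ((m:ℝ)+1) ≠ 0)
    (hpp : R * T1 / ((m:ℝ)+1) = -fp * a - P)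
    (hpm : R * T2 / ((m:ℝ)+1) = Q + (m:ℝ)/R * (E⁻¹/2*(k + R^2/L^2) + a*b) + R/L^2*E⁻¹) :
    k * ((m:ℝ)*R^(m-1)*a)
      + (2*E*R^m*a*Q + b*(2*E*R^m*P + a*(2*E*((m:ℝ)*R^(m-1))*a + R^m*(2*(E*fp)))))
      + (L^2)⁻¹*(((m:ℝ)+2)*R^(m+1)*a)
    = 2*E*R^(m+2)/((m:ℝ)+1)^2 * (T2 * (((m:ℝ)+1)*a/R) - ((m:ℝ)+1)*b/R*T1) := by
  have hT1 : T1 = ((m:ℝ)+1) * (-fp*a - P) / R := by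
    field_simp at hpp ⊢; linarith
  have hT2 : T2 = ((m:ℝ)+1) * (Q + (m:ℝ)/R * (E⁻¹/2*(k + R^2/L^2) + a*b) + R/L^2*E⁻¹) / R := by
    field_simp at hpm ⊢; linarith
  have hpow : (m:ℝ)*R^(m-1) = (m:ℝ)*R^m/R := by
    cases m with
    | zero => simp
    | succ n => field_simp [pow_succ]; simp [Nat.add_sub_cancel_left, pow_succ]
  rw [hT1, hT2, hpow, pow_succ, pow_succ, pow_succ]
  field_simp
  ring

theorem mass_derivative_identities
    (d : ℕ) (hd : 2 ≤ d) (L k : ℝ) (hL : 0 < L)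
    (U : Set (ℝ × ℝ)) (hU : IsOpen U)
    (f r : ℝ × ℝ → ℝ)
    (hf : ContDiffOn ℝ 2 f U) (hr : ContDiffOn ℝ 2 r U)
    (hrpos : ∀ x ∈ U, 0 < r x)
    (Tpp Tmm Tpm : ℝ × ℝ → ℝ)
    (hTpp : ContinuousOn Tpp U) (hTmm : ContinuousOn Tmm U) (hTpm : ContinuousOn Tpm U)
    (hEpp : ∀ x ∈ U, r x * Tpp x / ((d : ℝ) - 1) =
      -(dplus f x) * dplus r x - dplus (dplus r) x)
    (hEmm : ∀ x ∈ U, r x * Tmm x / ((d : ℝ) - 1) =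
      -(dminus f x) * dminus r x - dminus (dminus r) x)
    (hEpm : ∀ x ∈ U, r x * Tpm x / ((d : ℝ) - 1) =
      dplus (dminus r) x + (((d : ℝ) - 2) / r x) *
        (Real.exp (-(f x)) / 2 * (k + r x ^ 2 / L ^ 2) + dplus r x * dminus r x)
      + (r x / L ^ 2) * Real.exp (-(f x)))
    (μ : ℝ × ℝ → ℝ)
    (hμ : ∀ x, μ x = k * r x ^ (d - 2)
      + 2 * Real.exp (f x) * r x ^ (d - 2) * dplus r x * dminus r x
      + r x ^ d / L ^ 2) :
    ∀ x ∈ U,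
      dplus μ x = (2 * Real.exp (f x) * r x ^ d / ((d : ℝ) - 1) ^ 2) *
        (Tpm x * (((d : ℝ) - 1) * dplus r x / r x)
          - (((d : ℝ) - 1) * dminus r x / r x) * Tpp x) ∧
      dminus μ x = (2 * Real.exp (f x) * r x ^ d / ((d : ℝ) - 1) ^ 2) *
        (Tpm x * (((d : ℝ) - 1) * dminus r x / r x)
          - (((d : ℝ) - 1) * dplus r x / r x) * Tmm x) := by
  obtain ⟨m, rfl⟩ : ∃ m, d = m + 2 := ⟨d - 2, by omega⟩
  intro x hx
  have hxU : U ∈ nhds x := hU.mem_nhds hx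
  have hR : r x ≠ 0 := (hrpos x hx).ne'
  have hLne : L ≠ 0 := hL.ne'
  have hEne : Real.exp (f x) ≠ 0 := (Real.exp_pos _).ne'
  have hmne : ((m:ℝ)+1) ≠ 0 := by positivity
  -- differentiability of r, f at x
  have hrd : DifferentiableOn ℝ r U := hr.differentiableOn (by norm_num)
  have hfd : DifferentiableOn ℝ f U := hf.differentiableOn (by norm_num)
  have hrx : HasFDerivAt r (fderiv ℝ r x) x :=
    ((hrd x hx).differentiableAt hxU).hasFDerivAt
  have hfx : HasFDerivAt f (fderiv ℝ f x) x :=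
    ((hfd x hx).differentiableAt hxU).hasFDerivAt
  -- the second derivative of r
  have hr1 : ContDiffOn ℝ 1 (fderiv ℝ r) U := hr.fderiv_of_isOpen hU (by norm_num)
  have hr1d : DifferentiableAt ℝ (fderiv ℝ r) x :=
    ((hr1.differentiableOn one_ne_zero) x hx).differentiableAt hxU
  set r'' := fderiv ℝ (fderiv ℝ r) x with hr''def
  have hr'' : HasFDerivAt (fderiv ℝ r) r'' x := hr1d.hasFDerivAt
  -- derivatives of dplus r, dminus r
  have hA : HasFDerivAt (dplus r)
      ((ContinuousLinearMap.apply ℝ ℝ ((1:ℝ), (0:ℝ))).comp r'') x :=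
    (ContinuousLinearMap.apply ℝ ℝ ((1:ℝ), (0:ℝ))).hasFDerivAt.comp x hr''
  have hB : HasFDerivAt (dminus r)
      ((ContinuousLinearMap.apply ℝ ℝ ((0:ℝ), (1:ℝ))).comp r'') x :=
    (ContinuousLinearMap.apply ℝ ℝ ((0:ℝ), (1:ℝ))).hasFDerivAt.comp x hr''
  -- second-derivative identities
  have hPP : dplus (dplus r) x = r'' (1, 0) (1, 0) := by
    rw [dplus, hA.fderiv]; rfl
  have hPM : dplus (dminus r) x = r'' (1, 0) (0, 1) := by
    rw [dplus, hB.fderiv]; rfl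
  have hMM : dminus (dminus r) x = r'' (0, 1) (0, 1) := by
    rw [dminus, hB.fderiv]; rfl
  have hMP : dminus (dplus r) x = r'' (0, 1) (1, 0) := by
    rw [dminus, hA.fderiv]; rfl
  -- symmetry of second derivative
  have hsymm : r'' (0, 1) (1, 0) = r'' (1, 0) (0, 1) := by
    have hev : ∀ᶠ y in nhds x, HasFDerivAt r (fderiv ℝ r y) y := by
      filter_upwards [hU.eventually_mem hx] with y hy
      exact ((hrd y hy).differentiableAt (hU.mem_nhds hy)).hasFDerivAt
    exact second_derivative_symmetric_of_eventually hev hr'' _ _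
  -- derivative of powers of r
  have hpow : ∀ n : ℕ, HasFDerivAt (fun y => r y ^ n)
      (((n : ℝ) * r x ^ (n - 1)) • fderiv ℝ r x) x := fun n =>
    (hasDerivAt_pow n (r x)).comp_hasFDerivAt x hrx
  -- explicit μ and its derivative
  have hμfun : μ = fun y => k * r y ^ m
      + 2 * Real.exp (f y) * r y ^ m * dplus r y * dminus r y
      + r y ^ (m + 2) * (L ^ 2)⁻¹ := by
    funext y
    rw [hμ y]
    simp [div_eq_mul_inv]
  have h1 := (hpow m).const_mul k
  have h2 := (((hfx.exp.const_mul 2).mul (hpow m)).mul hA).mul hB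
  have h3 := (hpow (m + 2)).mul_const ((L ^ 2)⁻¹)
  have hmu := (h1.add h2).add h3
  replace hmu := hmu.congr_of_eventuallyEq (f₁ := μ) (Filter.Eventually.of_forall fun y => congrFun hμfun y)
  have hDp := hmu.fderiv
  -- the scalar values of the two partial derivatives of μ
  have hvalp : dplus μ x =
      k * ((m:ℝ) * r x ^ (m-1) * dplus r x)
      + (2 * Real.exp (f x) * r x ^ m * dplus r x * r'' (1,0) (0,1)
         + dminus r x * (2 * Real.exp (f x) * r x ^ m * r'' (1,0) (1,0)
            + dplus r x * (2 * Real.exp (f x) * ((m:ℝ) * r x ^ (m-1)) * dplus r x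
               + r x ^ m * (2 * (Real.exp (f x) * dplus f x)))))
      + (L^2)⁻¹ * (((m:ℝ)+2) * r x ^ (m+1) * dplus r x) := by
    rw [dplus, hDp]
    simp only [ContinuousLinearMap.add_apply, ContinuousLinearMap.smul_apply,
      ContinuousLinearMap.comp_apply, ContinuousLinearMap.apply_apply, smul_eq_mul,
      dplus, dminus, Pi.mul_apply]
    push_cast
    ring
  have hvalm : dminus μ x =
      k * ((m:ℝ) * r x ^ (m-1) * dminus r x)
      + (2 * Real.exp (f x) * r x ^ m * dminus r x * r'' (1,0) (0,1)
         + dplus r x * (2 * Real.exp (f x) * r x ^ m * r'' (0,1) (0,1)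
            + dminus r x * (2 * Real.exp (f x) * ((m:ℝ) * r x ^ (m-1)) * dminus r x
               + r x ^ m * (2 * (Real.exp (f x) * dminus f x)))))
      + (L^2)⁻¹ * (((m:ℝ)+2) * r x ^ (m+1) * dminus r x) := by
    rw [dminus, hDp]
    simp only [ContinuousLinearMap.add_apply, ContinuousLinearMap.smul_apply,
      ContinuousLinearMap.comp_apply, ContinuousLinearMap.apply_apply, smul_eq_mul,
      dplus, dminus, Pi.mul_apply]
    rw [hsymm]
    push_cast
    ring
  have hpp := hEpp x hx
  have hmm := hEmm x hx
  have hpm := hEpm x hx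
  rw [Real.exp_neg, hPM] at hpm
  rw [hPP] at hpp
  rw [hMM] at hmm
  push_cast at hpp hmm hpm ⊢
  rw [show ((m:ℝ) + 2 - 1) = (m:ℝ) + 1 from by ring]
  constructor
  · rw [hvalp]
    exact alg m (r x) (Real.exp (f x)) (dplus r x) (dminus r x) (dplus f x)
      (r'' (1,0) (1,0)) (r'' (1,0) (0,1)) L k (Tpp x) (Tpm x) hR hLne hEne hmne
      (by linear_combination hpp) (by linear_combination hpm)
  · rw [hvalm]
    exact alg m (r x) (Real.exp (f x)) (dminus r x) (dplus r x) (dminus f x)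
      (r'' (0,1) (0,1)) (r'' (1,0) (0,1)) L k (Tmm x) (Tpm x) hR hLne hEne hmne
      (by linear_combination hmm) (by linear_combination hpm)
end

section
/- Let d ≥ 2 be an integer, L > 0, k a real constant, U ⊆ ℝ² open, and f, r : U → ℝ twice continuously differentiable with r > 0 on U. Suppose T₊₊, T₋₋, T₊₋ : U → ℝ satisfy the reduced Einstein equations: r·T±±/(d−1) = −(∂±f)(∂±r) − ∂±∂±r and r·T₊₋/(d−1) = ∂₊∂₋r + ((d−2)/r)[ (e^{−f}/2)(k + r²/L²) + (∂₊r)(∂₋r) ] + (r/L²)e^{−f}, and that T₊₊ ≥ 0, T₋₋ ≥ 0, T₊₋ ≥ 0 on U. Define μ = k r^{d−2} + 2 e^{f} r^{d−2} (∂₊r)(∂₋r) + r^{d}/L². Then at every point of U where the untrapped condition ∂₊r ≥ 0 and ∂₋r ≤ 0 holds, one has ∂₊μ ≥ 0 and ∂₋μ ≤ 0. -/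
lemma myHasFDerivAt_pow {g : ℝ × ℝ → ℝ} {g' : ℝ × ℝ →L[ℝ] ℝ} {x : ℝ × ℝ}
    (h : HasFDerivAt g g' x) (n : ℕ) :
    HasFDerivAt (fun y => g y ^ n) (((n : ℝ) * g x ^ (n - 1)) • g') x := by
  induction n with
  | zero => simpa using hasFDerivAt_const (1 : ℝ) x
  | succ n ih =>
    have hfun : (fun y => g y ^ (n + 1)) = fun y => g y ^ n * g y :=
      funext fun y => pow_succ _ _
    have hc : (((n + 1 : ℕ) : ℝ) * g x ^ (n + 1 - 1)) • g'
        = (g x ^ n) • g' + g x • (((n : ℝ) * g x ^ (n - 1)) • g') := by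
      rw [smul_smul, ← add_smul, Nat.add_sub_cancel]
      congr 1
      cases n with
      | zero => simp
      | succ n =>
        rw [Nat.add_sub_cancel, pow_succ]
        push_cast
        ring
    rw [hfun, hc]
    exact ih.mul h

lemma deriv_mu_formula (f r : ℝ × ℝ → ℝ) (x v : ℝ × ℝ)
    (hf : ContDiffAt ℝ 2 f x) (hr : ContDiffAt ℝ 2 r x) (m : ℕ) (k c : ℝ) :
    fderiv ℝ (fun y => k * r y ^ m
      + 2 * Real.exp (f y) * r y ^ m * dplus r y * dminus r y
      + r y ^ (m + 2) / c) x v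
    = k * ((m : ℝ) * r x ^ (m - 1) * fderiv ℝ r x v)
      + (2 * (Real.exp (f x) * fderiv ℝ f x v) * r x ^ m
         + 2 * Real.exp (f x) * ((m : ℝ) * r x ^ (m - 1) * fderiv ℝ r x v))
        * dplus r x * dminus r x
      + 2 * Real.exp (f x) * r x ^ m * fderiv ℝ (dplus r) x v * dminus r x
      + 2 * Real.exp (f x) * r x ^ m * dplus r x * fderiv ℝ (dminus r) x v
      + ((m : ℝ) + 2) * r x ^ (m + 1) * fderiv ℝ r x v / c := by
  have hrd : DifferentiableAt ℝ r x := hr.differentiableAt (by norm_num)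
  have hfd : DifferentiableAt ℝ f x := hf.differentiableAt (by norm_num)
  have hDr : DifferentiableAt ℝ (fderiv ℝ r) x :=
    (hr.fderiv_right (m := 1) (by norm_num)).differentiableAt one_ne_zero
  have hA : DifferentiableAt ℝ (dplus r) x := by
    unfold dplus; exact hDr.clm_apply (differentiableAt_const _)
  have hB : DifferentiableAt ℝ (dminus r) x := by
    unfold dminus; exact hDr.clm_apply (differentiableAt_const _)
  have Hr := hrd.hasFDerivAt
  have Hf := hfd.hasFDerivAt
  have HA := hA.hasFDerivAt
  have HB := hB.hasFDerivAt
  have Hexp : HasFDerivAt (fun y => Real.exp (f y)) (Real.exp (f x) • fderiv ℝ f x) x := Hf.exp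
  have Hpow := myHasFDerivAt_pow Hr m
  have Hpow2 := myHasFDerivAt_pow Hr (m + 2)
  have H := ((Hpow.const_mul k).add
    ((((Hexp.const_mul 2).mul Hpow).mul HA).mul HB)).add (Hpow2.mul_const' c⁻¹)
  have heq := H.fderiv
  simp only [div_eq_mul_inv]
  rw [show fderiv ℝ (fun y => k * r y ^ m
      + 2 * Real.exp (f y) * r y ^ m * dplus r y * dminus r y
      + r y ^ (m + 2) * c⁻¹) x = _ from heq]
  simp only [ContinuousLinearMap.add_apply, ContinuousLinearMap.smul_apply, smul_eq_mul,
    ContinuousLinearMap.coe_smul', Pi.smul_apply, ContinuousLinearMap.smulRight_apply,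
    Nat.add_sub_cancel, Pi.mul_apply, op_smul_eq_mul]
  push_cast
  ring

lemma alg_plus (m : ℕ) (ρ E a b fp Tpp Tpm k L : ℝ)
    (hρ : ρ ≠ 0) (hE : E ≠ 0) (hL : L ≠ 0) :
    k * ((m : ℝ) * ρ ^ (m - 1) * a)
      + (2 * (E * fp) * ρ ^ m + 2 * E * ((m : ℝ) * ρ ^ (m - 1) * a)) * a * b
      + 2 * E * ρ ^ m * (-fp * a - ρ * Tpp / ((m : ℝ) + 1)) * b
      + 2 * E * ρ ^ m * a * (ρ * Tpm / ((m : ℝ) + 1)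
          - ((m : ℝ) / ρ) * (E⁻¹ / 2 * (k + ρ ^ 2 / L ^ 2) + a * b)
          - (ρ / L ^ 2) * E⁻¹)
      + ((m : ℝ) + 2) * ρ ^ (m + 1) * a / L ^ 2
    = 2 * E * ρ ^ (m + 1) / ((m : ℝ) + 1) * (a * Tpm - b * Tpp) := by
  have hm : ((m : ℝ) + 1) ≠ 0 := by positivity
  cases m with
  | zero => field_simp; ring
  | succ n =>
    simp only [Nat.add_sub_cancel]
    have hn : ((n : ℝ) + 1 + 1) ≠ 0 := by positivity
    push_cast
    field_simp
    ring

lemma alg_minus (m : ℕ) (ρ E a b fm Tmm Tpm k L : ℝ)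
    (hρ : ρ ≠ 0) (hE : E ≠ 0) (hL : L ≠ 0) :
    k * ((m : ℝ) * ρ ^ (m - 1) * b)
      + (2 * (E * fm) * ρ ^ m + 2 * E * ((m : ℝ) * ρ ^ (m - 1) * b)) * a * b
      + 2 * E * ρ ^ m * (ρ * Tpm / ((m : ℝ) + 1)
          - ((m : ℝ) / ρ) * (E⁻¹ / 2 * (k + ρ ^ 2 / L ^ 2) + a * b)
          - (ρ / L ^ 2) * E⁻¹) * b
      + 2 * E * ρ ^ m * a * (-fm * b - ρ * Tmm / ((m : ℝ) + 1))
      + ((m : ℝ) + 2) * ρ ^ (m + 1) * b / L ^ 2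
    = 2 * E * ρ ^ (m + 1) / ((m : ℝ) + 1) * (b * Tpm - a * Tmm) := by
  have hm : ((m : ℝ) + 1) ≠ 0 := by positivity
  cases m with
  | zero => field_simp; ring
  | succ n =>
    simp only [Nat.add_sub_cancel]
    have hn : ((n : ℝ) + 1 + 1) ≠ 0 := by positivity
    push_cast
    field_simp
    ring

set_option maxHeartbeats 2000000 in
lemma mass_monotone_aux
    (d : ℕ) (hd : 2 ≤ d) (L k : ℝ) (hL : 0 < L)
    (U : Set (ℝ × ℝ)) (hU : IsOpen U)
    (f r : ℝ × ℝ → ℝ)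
    (hf : ContDiffOn ℝ 2 f U) (hr : ContDiffOn ℝ 2 r U)
    (hrpos : ∀ x ∈ U, 0 < r x)
    (Tpp Tmm Tpm : ℝ × ℝ → ℝ)
    (hEpp : ∀ x ∈ U, r x * Tpp x / ((d : ℝ) - 1) =
      -(dplus f x) * dplus r x - dplus (dplus r) x)
    (hEmm : ∀ x ∈ U, r x * Tmm x / ((d : ℝ) - 1) =
      -(dminus f x) * dminus r x - dminus (dminus r) x)
    (hEpm : ∀ x ∈ U, r x * Tpm x / ((d : ℝ) - 1) =
      dplus (dminus r) x + (((d : ℝ) - 2) / r x) *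
        (Real.exp (-(f x)) / 2 * (k + r x ^ 2 / L ^ 2) + dplus r x * dminus r x)
      + (r x / L ^ 2) * Real.exp (-(f x)))
    (hTppnn : ∀ x ∈ U, 0 ≤ Tpp x) (hTmmnn : ∀ x ∈ U, 0 ≤ Tmm x)
    (hTpmnn : ∀ x ∈ U, 0 ≤ Tpm x)
    (μ : ℝ × ℝ → ℝ)
    (hμ : ∀ x, μ x = k * r x ^ (d - 2)
      + 2 * Real.exp (f x) * r x ^ (d - 2) * dplus r x * dminus r x
      + r x ^ d / L ^ 2) :
    ∀ x ∈ U, 0 ≤ dplus r x → dminus r x ≤ 0 →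
      0 ≤ dplus μ x ∧ dminus μ x ≤ 0 := by
  obtain ⟨m, rfl⟩ : ∃ m, d = m + 2 := ⟨d - 2, by omega⟩
  intro x hx ha hb
  have hfx : ContDiffAt ℝ 2 f x := hf.contDiffAt (hU.mem_nhds hx)
  have hrx : ContDiffAt ℝ 2 r x := hr.contDiffAt (hU.mem_nhds hx)
  have hρ : 0 < r x := hrpos x hx
  have hr0 : r x ≠ 0 := ne_of_gt hρ
  have hE0 : Real.exp (f x) ≠ 0 := (Real.exp_pos _).ne'
  have hL0 : L ≠ 0 := ne_of_gt hL
  have hμfun : μ = fun y => k * r y ^ m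
      + 2 * Real.exp (f y) * r y ^ m * dplus r y * dminus r y
      + r y ^ (m + 2) / L ^ 2 := by
    funext y
    have := hμ y
    simpa [Nat.add_sub_cancel] using this
  have hc1 : ((((m : ℕ) + 2 : ℕ) : ℝ) - 1) = (m : ℝ) + 1 := by push_cast; ring
  have hc2 : ((((m : ℕ) + 2 : ℕ) : ℝ) - 2) = (m : ℝ) := by push_cast; ring
  have happ : dplus (dplus r) x
      = -(dplus f x) * dplus r x - r x * Tpp x / ((m : ℝ) + 1) := by
    have h := hEpp x hx
    rw [hc1] at h
    linarith
  have hbmm : dminus (dminus r) x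
      = -(dminus f x) * dminus r x - r x * Tmm x / ((m : ℝ) + 1) := by
    have h := hEmm x hx
    rw [hc1] at h
    linarith
  have hapm : dplus (dminus r) x
      = r x * Tpm x / ((m : ℝ) + 1)
        - ((m : ℝ) / r x) * ((Real.exp (f x))⁻¹ / 2 * (k + r x ^ 2 / L ^ 2)
            + dplus r x * dminus r x)
        - (r x / L ^ 2) * (Real.exp (f x))⁻¹ := by
    have h := hEpm x hx
    rw [hc1, hc2, Real.exp_neg] at h
    linarith
  have hDr : DifferentiableAt ℝ (fderiv ℝ r) x :=
    (hrx.fderiv_right (m := 1) (by norm_num)).differentiableAt one_ne_zero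
  have hsymm : dminus (dplus r) x = dplus (dminus r) x := by
    have h1 : dminus (dplus r) x = fderiv ℝ (fderiv ℝ r) x (0, 1) (1, 0) := by
      show fderiv ℝ (fun y => fderiv ℝ r y (1, 0)) x (0, 1) = _
      rw [fderiv_clm_apply hDr (differentiableAt_const _)]
      simp
    have h2 : dplus (dminus r) x = fderiv ℝ (fderiv ℝ r) x (1, 0) (0, 1) := by
      show fderiv ℝ (fun y => fderiv ℝ r y (0, 1)) x (1, 0) = _
      rw [fderiv_clm_apply hDr (differentiableAt_const _)]
      simp
    rw [h1, h2, (hrx.isSymmSndFDerivAt (by norm_num)) (0, 1) (1, 0)]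
  have hplus := deriv_mu_formula f r x (1, 0) hfx hrx m k (L ^ 2)
  have hminus := deriv_mu_formula f r x (0, 1) hfx hrx m k (L ^ 2)
  have e1 : fderiv ℝ r x ((1 : ℝ), (0 : ℝ)) = dplus r x := rfl
  have e2 : fderiv ℝ (dplus r) x ((1 : ℝ), (0 : ℝ)) = dplus (dplus r) x := rfl
  have e3 : fderiv ℝ (dminus r) x ((1 : ℝ), (0 : ℝ)) = dplus (dminus r) x := rfl
  have e4 : fderiv ℝ f x ((1 : ℝ), (0 : ℝ)) = dplus f x := rfl
  have e5 : fderiv ℝ r x ((0 : ℝ), (1 : ℝ)) = dminus r x := rfl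
  have e6 : fderiv ℝ (dplus r) x ((0 : ℝ), (1 : ℝ)) = dminus (dplus r) x := rfl
  have e7 : fderiv ℝ (dminus r) x ((0 : ℝ), (1 : ℝ)) = dminus (dminus r) x := rfl
  have e8 : fderiv ℝ f x ((0 : ℝ), (1 : ℝ)) = dminus f x := rfl
  rw [e1, e2, e3, e4] at hplus
  rw [e5, e6, e7, e8, hsymm] at hminus
  have keyplus : dplus μ x
      = 2 * Real.exp (f x) * r x ^ (m + 1) / ((m : ℝ) + 1)
        * (dplus r x * Tpm x - dminus r x * Tpp x) := by
    show fderiv ℝ μ x (1, 0) = _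
    rw [hμfun, hplus, happ, hapm]
    exact alg_plus m (r x) (Real.exp (f x)) (dplus r x) (dminus r x) (dplus f x)
      (Tpp x) (Tpm x) k L hr0 hE0 hL0
  have keyminus : dminus μ x
      = 2 * Real.exp (f x) * r x ^ (m + 1) / ((m : ℝ) + 1)
        * (dminus r x * Tpm x - dplus r x * Tmm x) := by
    show fderiv ℝ μ x (0, 1) = _
    rw [hμfun, hminus, hbmm, hapm]
    exact alg_minus m (r x) (Real.exp (f x)) (dplus r x) (dminus r x) (dminus f x)
      (Tmm x) (Tpm x) k L hr0 hE0 hL0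
  have hfac : 0 ≤ 2 * Real.exp (f x) * r x ^ (m + 1) / ((m : ℝ) + 1) := by positivity
  constructor
  · rw [keyplus]
    apply mul_nonneg hfac
    have h1 := mul_nonneg ha (hTpmnn x hx)
    have h2 := mul_nonneg (neg_nonneg.2 hb) (hTppnn x hx)
    nlinarith
  · rw [keyminus]
    have h1 := mul_nonneg ha (hTmmnn x hx)
    have h2 := mul_nonneg (neg_nonneg.2 hb) (hTpmnn x hx)
    have h3 : dminus r x * Tpm x - dplus r x * Tmm x ≤ 0 := by nlinarith
    exact mul_nonpos_of_nonneg_of_nonpos hfac h3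

theorem mass_monotone_untrapped_pointwise
    (d : ℕ) (hd : 2 ≤ d) (L k : ℝ) (hL : 0 < L)
    (U : Set (ℝ × ℝ)) (hU : IsOpen U)
    (f r : ℝ × ℝ → ℝ)
    (hf : ContDiffOn ℝ 2 f U) (hr : ContDiffOn ℝ 2 r U)
    (hrpos : ∀ x ∈ U, 0 < r x)
    (Tpp Tmm Tpm : ℝ × ℝ → ℝ)
    (hEpp : ∀ x ∈ U, r x * Tpp x / ((d : ℝ) - 1) =
      -(dplus f x) * dplus r x - dplus (dplus r) x)
    (hEmm : ∀ x ∈ U, r x * Tmm x / ((d : ℝ) - 1) =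
      -(dminus f x) * dminus r x - dminus (dminus r) x)
    (hEpm : ∀ x ∈ U, r x * Tpm x / ((d : ℝ) - 1) =
      dplus (dminus r) x + (((d : ℝ) - 2) / r x) *
        (Real.exp (-(f x)) / 2 * (k + r x ^ 2 / L ^ 2) + dplus r x * dminus r x)
      + (r x / L ^ 2) * Real.exp (-(f x)))
    (hTppnn : ∀ x ∈ U, 0 ≤ Tpp x) (hTmmnn : ∀ x ∈ U, 0 ≤ Tmm x)
    (hTpmnn : ∀ x ∈ U, 0 ≤ Tpm x)
    (μ : ℝ × ℝ → ℝ)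
    (hμ : ∀ x, μ x = k * r x ^ (d - 2)
      + 2 * Real.exp (f x) * r x ^ (d - 2) * dplus r x * dminus r x
      + r x ^ d / L ^ 2) :
    ∀ x ∈ U, 0 ≤ dplus r x → dminus r x ≤ 0 →
      0 ≤ dplus μ x ∧ dminus μ x ≤ 0 :=
  mass_monotone_aux d hd L k hL U hU f r hf hr hrpos Tpp Tmm Tpm hEpp hEmm hEpm
    hTppnn hTmmnn hTpmnn μ hμ
end

section
/- Let d ≥ 2 be an integer, L > 0, k a real constant, U ⊆ ℝ² open, and f, r : U → ℝ twice continuously differentiable with r > 0 on U. Suppose T₊₊, T₋₋, T₊₋ : U → ℝ satisfy the reduced Einstein equations: r·T±±/(d−1) = −(∂±f)(∂±r) − ∂±∂±r and r·T₊₋/(d−1) = ∂₊∂₋r + ((d−2)/r)[ (e^{−f}/2)(k + r²/L²) + (∂₊r)(∂₋r) ] + (r/L²)e^{−f}, with T₊₊ ≥ 0, T₋₋ ≥ 0, T₊₋ ≥ 0 on U. Define μ = k r^{d−2} + 2 e^{f} r^{d−2} (∂₊r)(∂₋r) + r^{d}/L². Let γ = (γ⁺, γ⁻) : [0,1] → U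 be continuously differentiable with (γ⁺)′(t) ≥ 0 and (γ⁻)′(t) ≤ 0 for all t, and suppose ∂₊r ≥ 0 and ∂₋r ≤ 0 at every point γ(t). Then the function t ↦ μ(γ(t)) is monotonically non-decreasing on [0,1]. -/
open Topology

set_option maxHeartbeats 2000000

private lemma clm_eval {E : Type*} [NormedAddCommGroup E] [NormedSpace ℝ E]
    (T : ℝ × ℝ →L[ℝ] E) (a b : ℝ) : T (a, b) = a • T (1, 0) + b • T (0, 1) := by
  have h : (a, b) = a • ((1:ℝ), (0:ℝ)) + b • ((0:ℝ), (1:ℝ)) := by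
    simp [Prod.ext_iff]
  rw [h, map_add, map_smul, map_smul]

private lemma clm_eval1 (T : ℝ × ℝ →L[ℝ] ℝ) (a b : ℝ) :
    T (a, b) = a * T (1, 0) + b * T (0, 1) := by
  rw [clm_eval T a b]; simp [smul_eq_mul]

private lemma clm_eval2 (S : ℝ × ℝ →L[ℝ] (ℝ × ℝ →L[ℝ] ℝ)) (a b : ℝ) (v : ℝ × ℝ) :
    S (a, b) v = a * S (1,0) v + b * S (0,1) v := by
  rw [clm_eval S a b]; simp [smul_eq_mul]

theorem mass_monotone_along_outward_path
    (d : ℕ) (hd : 2 ≤ d) (L k : ℝ) (hL : 0 < L)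
    (U : Set (ℝ × ℝ)) (hU : IsOpen U)
    (f r : ℝ × ℝ → ℝ)
    (hf : ContDiffOn ℝ 2 f U) (hr : ContDiffOn ℝ 2 r U)
    (hrpos : ∀ x ∈ U, 0 < r x)
    (Tpp Tmm Tpm : ℝ × ℝ → ℝ)
    (hEpp : ∀ x ∈ U, r x * Tpp x / ((d : ℝ) - 1) =
      -(dplus f x) * dplus r x - dplus (dplus r) x)
    (hEmm : ∀ x ∈ U, r x * Tmm x / ((d : ℝ) - 1) =
      -(dminus f x) * dminus r x - dminus (dminus r) x)
    (hEpm : ∀ x ∈ U, r x * Tpm x / ((d : ℝ) - 1) =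
      dplus (dminus r) x + (((d : ℝ) - 2) / r x) *
        (Real.exp (-(f x)) / 2 * (k + r x ^ 2 / L ^ 2) + dplus r x * dminus r x)
      + (r x / L ^ 2) * Real.exp (-(f x)))
    (hTppnn : ∀ x ∈ U, 0 ≤ Tpp x) (hTmmnn : ∀ x ∈ U, 0 ≤ Tmm x)
    (hTpmnn : ∀ x ∈ U, 0 ≤ Tpm x)
    (μ : ℝ × ℝ → ℝ)
    (hμ : ∀ x, μ x = k * r x ^ (d - 2)
      + 2 * Real.exp (f x) * r x ^ (d - 2) * dplus r x * dminus r x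
      + r x ^ d / L ^ 2)
    (γp γm : ℝ → ℝ)
    (hγmem : ∀ t ∈ Set.Icc (0 : ℝ) 1, (γp t, γm t) ∈ U)
    (hγC1 : ContDiffOn ℝ 1 (fun t => (γp t, γm t)) (Set.Icc (0 : ℝ) 1))
    (hγp' : ∀ t ∈ Set.Icc (0 : ℝ) 1, 0 ≤ derivWithin γp (Set.Icc (0 : ℝ) 1) t)
    (hγm' : ∀ t ∈ Set.Icc (0 : ℝ) 1, derivWithin γm (Set.Icc (0 : ℝ) 1) t ≤ 0)
    (huntrapped : ∀ t ∈ Set.Icc (0 : ℝ) 1,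
      0 ≤ dplus r (γp t, γm t) ∧ dminus r (γp t, γm t) ≤ 0) :
    MonotoneOn (fun t => μ (γp t, γm t)) (Set.Icc (0 : ℝ) 1) := by
  obtain ⟨n, rfl⟩ : ∃ n, d = n + 2 := ⟨d - 2, (Nat.sub_add_cancel hd).symm⟩
  simp only [Nat.add_sub_cancel] at hμ
  have hL2 : (L:ℝ) ≠ 0 := ne_of_gt hL
  -- continuity of μ ∘ γ on the interval
  have hμfun : μ = fun y => k * r y ^ n
      + 2 * Real.exp (f y) * r y ^ n * dplus r y * dminus r y
      + r y ^ (n + 2) / L ^ 2 := funext hμ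
  have hrc : ContinuousOn r U := hr.continuousOn
  have hfc : ContinuousOn f U := hf.continuousOn
  have hfdc : ContinuousOn (fderiv ℝ r) U :=
    hr.continuousOn_fderiv_of_isOpen hU (by norm_num)
  have hPc : ContinuousOn (dplus r) U := hfdc.clm_apply continuousOn_const
  have hMc : ContinuousOn (dminus r) U := hfdc.clm_apply continuousOn_const
  have hμc : ContinuousOn μ U := by
    rw [hμfun]
    exact ((continuousOn_const.mul (hrc.pow n)).add
      ((((continuousOn_const.mul (Real.continuous_exp.comp_continuousOn hfc)).mul
        (hrc.pow n)).mul hPc).mul hMc)).add ((hrc.pow (n+2)).div_const _)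
  have hγcont : ContinuousOn (fun t => (γp t, γm t)) (Set.Icc (0:ℝ) 1) :=
    hγC1.continuousOn
  have hgc : ContinuousOn (fun t => μ (γp t, γm t)) (Set.Icc (0:ℝ) 1) :=
    hμc.comp hγcont hγmem
  -- main pointwise claim at interior points
  have main : ∀ t ∈ Set.Ioo (0:ℝ) 1,
      DifferentiableAt ℝ (fun t => μ (γp t, γm t)) t ∧
      0 ≤ deriv (fun t => μ (γp t, γm t)) t := by
    intro t ht
    have htI : t ∈ Set.Icc (0:ℝ) 1 := Set.Ioo_subset_Icc_self ht
    have hxU : (γp t, γm t) ∈ U := hγmem t htI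
    set x : ℝ × ℝ := (γp t, γm t) with hxdef
    have hUx : U ∈ 𝓝 x := hU.mem_nhds hxU
    have hIt : Set.Icc (0:ℝ) 1 ∈ 𝓝 t := Icc_mem_nhds ht.1 ht.2
    -- the path
    have hγat : ContDiffAt ℝ 1 (fun t => (γp t, γm t)) t := hγC1.contDiffAt hIt
    have hγdiff : DifferentiableAt ℝ (fun t => (γp t, γm t)) t :=
      hγat.differentiableAt one_ne_zero
    have hγpd : DifferentiableAt ℝ γp t := by simpa using hγdiff.fst
    have hγmd : DifferentiableAt ℝ γm t := by simpa using hγdiff.snd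
    set a := deriv γp t with hadef
    set b := deriv γm t with hbdef
    have hap : HasDerivAt γp a t := hγpd.hasDerivAt
    have hbm : HasDerivAt γm b t := hγmd.hasDerivAt
    have ha0 : 0 ≤ a := by
      have := hγp' t htI; rwa [derivWithin_of_mem_nhds hIt] at this
    have hb0 : b ≤ 0 := by
      have := hγm' t htI; rwa [derivWithin_of_mem_nhds hIt] at this
    have hγ' : HasDerivAt (fun t => (γp t, γm t)) (a, b) t := hap.prodMk hbm
    -- derivatives of f, r and the second derivative of r at x
    have hrx : ContDiffAt ℝ 2 r x := hr.contDiffAt hUx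
    have hfx : ContDiffAt ℝ 2 f x := hf.contDiffAt hUx
    set R : ℝ × ℝ →L[ℝ] ℝ := fderiv ℝ r x with hRdef
    set F : ℝ × ℝ →L[ℝ] ℝ := fderiv ℝ f x with hFdef
    have hRd : HasFDerivAt r R x :=
      (hrx.differentiableAt (by norm_num)).hasFDerivAt
    have hFd : HasFDerivAt f F x :=
      (hfx.differentiableAt (by norm_num)).hasFDerivAt
    have hr1 : ContDiffAt ℝ 1 (fderiv ℝ r) x := hrx.fderiv_right (by norm_num)
    set S : ℝ × ℝ →L[ℝ] (ℝ × ℝ →L[ℝ] ℝ) := fderiv ℝ (fderiv ℝ r) x with hSdef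
    have hSd : HasFDerivAt (fderiv ℝ r) S x :=
      (hr1.differentiableAt one_ne_zero).hasFDerivAt
    -- symmetry of the second derivative
    have hsymm : S (0,1) (1,0) = S (1,0) (0,1) := by
      refine second_derivative_symmetric_of_eventually (f := r) ?_ hSd (0,1) (1,0)
      filter_upwards [hUx] with y hy
      exact ((hr.differentiableOn (by norm_num) y hy).differentiableAt
        (hU.mem_nhds hy)).hasFDerivAt
    -- notation
    set p := R (1,0) with hpdef
    set m := R (0,1) with hmdef
    set fp := F (1,0) with hfpdef
    set fm := F (0,1) with hfmdef
    set q := S (1,0) (1,0) with hqdef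
    set s := S (1,0) (0,1) with hsdef
    set w := S (0,1) (0,1) with hwdef
    have hpr : dplus r x = p := rfl
    have hmr : dminus r x = m := rfl
    have hfp : dplus f x = fp := rfl
    have hfm : dminus f x = fm := rfl
    have hp0 : 0 ≤ p := by rw [← hpr]; exact (huntrapped t htI).1
    have hm0 : m ≤ 0 := by rw [← hmr]; exact (huntrapped t htI).2
    clear_value a b
    -- fderivs of dplus r and dminus r
    have hPd : HasFDerivAt (dplus r)
        ((ContinuousLinearMap.apply ℝ ℝ ((1:ℝ),(0:ℝ))).comp S) x :=
      (ContinuousLinearMap.apply ℝ ℝ ((1:ℝ),(0:ℝ))).hasFDerivAt.comp x hSd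
    have hMd : HasFDerivAt (dminus r)
        ((ContinuousLinearMap.apply ℝ ℝ ((0:ℝ),(1:ℝ))).comp S) x :=
      (ContinuousLinearMap.apply ℝ ℝ ((0:ℝ),(1:ℝ))).hasFDerivAt.comp x hSd
    have hq2 : dplus (dplus r) x = q := by
      show fderiv ℝ (dplus r) x (1,0) = q
      rw [hPd.fderiv]; rfl
    have hs2 : dplus (dminus r) x = s := by
      show fderiv ℝ (dminus r) x (1,0) = s
      rw [hMd.fderiv]; rfl
    have hw2 : dminus (dminus r) x = w := by
      show fderiv ℝ (dminus r) x (0,1) = w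
      rw [hMd.fderiv]; rfl
    -- composite derivatives along the path
    have hρ : HasDerivAt (fun u => r (γp u, γm u)) (a * p + b * m) t := by
      have h1 := hRd.comp_hasDerivAt t hγ'
      rw [clm_eval1 R a b] at h1
      exact h1
    have hφ : HasDerivAt (fun u => f (γp u, γm u)) (a * fp + b * fm) t := by
      have h1 := hFd.comp_hasDerivAt t hγ'
      rw [clm_eval1 F a b] at h1
      exact h1
    have hPγ : HasDerivAt (fun u => dplus r (γp u, γm u)) (a * q + b * s) t := by
      have h1 := hPd.comp_hasDerivAt t hγ'
      have h2 : ((ContinuousLinearMap.apply ℝ ℝ ((1:ℝ),(0:ℝ))).comp S) (a, b)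
          = a * q + b * s := by
        simp only [ContinuousLinearMap.coe_comp', Function.comp_apply,
          ContinuousLinearMap.apply_apply]
        rw [clm_eval2, hsymm]
      rw [h2] at h1
      exact h1
    have hMγ : HasDerivAt (fun u => dminus r (γp u, γm u)) (a * s + b * w) t := by
      have h1 := hMd.comp_hasDerivAt t hγ'
      have h2 : ((ContinuousLinearMap.apply ℝ ℝ ((0:ℝ),(1:ℝ))).comp S) (a, b)
          = a * s + b * w := by
        simp only [ContinuousLinearMap.coe_comp', Function.comp_apply,
          ContinuousLinearMap.apply_apply]
        rw [clm_eval2]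
      rw [h2] at h1
      exact h1
    -- assemble μ ∘ γ
    have hexp : HasDerivAt (fun u => Real.exp (f (γp u, γm u)))
        (Real.exp (f x) * (a * fp + b * fm)) t := hφ.exp
    have hgd := ((((hρ.pow n).const_mul k).add
      ((((hexp.const_mul 2).mul (hρ.pow n)).mul hPγ).mul hMγ)).add
      (((hρ.pow (n+2)).div_const (L^2))))
    have hfun : (fun u => μ (γp u, γm u)) = (fun u => k * (r (γp u, γm u)) ^ n
        + 2 * Real.exp (f (γp u, γm u)) * (r (γp u, γm u)) ^ n
          * dplus r (γp u, γm u) * dminus r (γp u, γm u)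
        + (r (γp u, γm u)) ^ (n + 2) / L ^ 2) := by
      funext u; rw [hμ]
    constructor
    · rw [hfun]; exact hgd.differentiableAt
    · rw [hfun]; erw [hgd.deriv]; simp only [Pi.pow_apply, Pi.mul_apply]
      rw [← hxdef, hpr, hmr]
      -- Einstein equations at x
      have hc1 : ((n+2:ℕ):ℝ) - 1 = (n:ℝ) + 1 := by push_cast; ring
      have hc2 : ((n+2:ℕ):ℝ) - 2 = (n:ℝ) := by push_cast; ring
      have hn1 : ((n:ℝ) + 1) ≠ 0 := by positivity
      have e1 := hEpp x hxU
      rw [hfp, hpr, hq2, hc1] at e1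
      have e2 := hEmm x hxU
      rw [hfm, hmr, hw2, hc1] at e2
      have e3 := hEpm x hxU
      rw [hs2, hpr, hmr, hc1, hc2] at e3
      have hq' : q = -(fp * p) - r x * Tpp x / ((n:ℝ) + 1) := by linarith
      have hw' : w = -(fm * m) - r x * Tmm x / ((n:ℝ) + 1) := by linarith
      have hs' : s = r x * Tpm x / ((n:ℝ) + 1)
          - (n:ℝ) / r x * (Real.exp (-f x) / 2 * (k + r x ^ 2 / L ^ 2) + p * m)
          - r x / L ^ 2 * Real.exp (-f x) := by linarith
      rw [hq', hw', hs']
      clear e1 e2 e3 hq' hw' hs' hgd hexp hPγ hMγ hρ hφ hfun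
      clear_value x R F S p m fp fm q s w
      have hrx0 : (0:ℝ) < r x := hrpos x hxU
      have hrne : r x ≠ 0 := ne_of_gt hrx0
      have hTpp0 := hTppnn x hxU
      have hTmm0 := hTmmnn x hxU
      have hTpm0 := hTpmnn x hxU
      have hpos : 0 ≤ 2 * Real.exp (f x) * r x ^ (n+1) / ((n:ℝ)+1)
          * (a * (p * Tpm x - m * Tpp x) + b * (m * Tpm x - p * Tmm x)) := by
        apply mul_nonneg
        · positivity
        · apply add_nonneg
          · apply mul_nonneg ha0
            nlinarith [mul_nonneg hp0 hTpm0, mul_nonneg (neg_nonneg.mpr hm0) hTpp0]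
          · have h1 : m * Tpm x - p * Tmm x ≤ 0 := by
              nlinarith [mul_nonneg hp0 hTmm0, mul_nonneg (neg_nonneg.mpr hm0) hTpm0]
            have h2 := mul_nonneg (neg_nonneg.mpr hb0) (neg_nonneg.mpr h1)
            nlinarith [h2]
      refine le_trans hpos (le_of_eq ?_)
      rw [Real.exp_neg]
      rcases n with _ | nn
      · push_cast
        field_simp
        ring
      · push_cast
        field_simp
        ring
  rw [show Set.Icc (0:ℝ) 1 = Set.Icc (0:ℝ) 1 from rfl]
  apply monotoneOn_of_deriv_nonneg (convex_Icc 0 1) hgc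
  · intro t ht
    rw [interior_Icc] at ht
    exact (main t ht).1.differentiableWithinAt
  · intro t ht
    rw [interior_Icc] at ht
    exact (main t ht).2
end

section
/- (Theorem 1, reduced null-coordinate form.) Let d ≥ 2 be an integer, L > 0, k a real constant, U ⊆ ℝ² open, and f, r : U → ℝ twice continuously differentiable with r > 0 on U. Suppose T₊₊, T₋₋, T₊₋ : U → ℝ satisfy the reduced Einstein equations: r·T±±/(d−1) = −(∂±f)(∂±r) − ∂±∂±r and r·T₊₋/(d−1) = ∂₊∂₋r + ((d−2)/r)[ (e^{−f}/2)(k + r²/L²) + (∂₊r)(∂₋r) ] + (r/L²)e^{−f}, with T₊₊ ≥ 0, T₋₋ ≥ 0, T₊₋ ≥ 0 on U. Define μ = k r^{d−2} + 2 e^{f} r^{d−2} (∂₊r)(∂₋r) + r^{d}/L². Let γ = (γ⁺, γ⁻) : [0,1] → U be continuously differentiable with (γ⁺)′ ≥ 0 and (γ⁻)′ ≤ 0, with ∂₊r ≥ 0 and ∂₋r ≤ 0 along γ, and with ∂₊r(γ(0)) = 0. Fix any Ω > 0, set r₀ = r(γ(0)), define the horizon area A = Ω·r₀^{d−1} and the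 mass parameter M by 16πG_N M = (d−1)·Ω·μ(γ(1)) (for any fixed G_N > 0). Then 16πG_N M/((d−1)Ω) ≥ k·(A/Ω)^{(d−2)/(d−1)} + (1/L²)·(A/Ω)^{d/(d−1)}. -/
lemma evalCLM {M : Type*} [NormedAddCommGroup M] [NormedSpace ℝ M]
    (D : ℝ×ℝ →L[ℝ] M) (v : ℝ×ℝ) : D v = v.1 • D (1,0) + v.2 • D (0,1) := by
  have hv : v = v.1 • ((1:ℝ),(0:ℝ)) + v.2 • ((0:ℝ),(1:ℝ)) := by ext <;> simp
  rw [← map_smul, ← map_smul, ← map_add, ← hv]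

lemma natmul_pow_pred (j : ℕ) (R : ℝ) (hR : R ≠ 0) :
    (j:ℝ) * R ^ (j-1) = (j:ℝ) * R ^ j / R := by
  cases j with
  | zero => simp
  | succ i => rw [pow_succ, Nat.add_sub_cancel, mul_div_assoc, mul_div_cancel_right₀ _ hR]

set_option maxHeartbeats 2000000 in
theorem penrose_inequality_reduced
    (d : ℕ) (hd : 2 ≤ d) (L k : ℝ) (hL : 0 < L)
    (U : Set (ℝ × ℝ)) (hU : IsOpen U)
    (f r : ℝ × ℝ → ℝ)
    (hf : ContDiffOn ℝ 2 f U) (hr : ContDiffOn ℝ 2 r U)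
    (hrpos : ∀ x ∈ U, 0 < r x)
    (Tpp Tmm Tpm : ℝ × ℝ → ℝ)
    (hEpp : ∀ x ∈ U, r x * Tpp x / ((d : ℝ) - 1) =
      -(dplus f x) * dplus r x - dplus (dplus r) x)
    (hEmm : ∀ x ∈ U, r x * Tmm x / ((d : ℝ) - 1) =
      -(dminus f x) * dminus r x - dminus (dminus r) x)
    (hEpm : ∀ x ∈ U, r x * Tpm x / ((d : ℝ) - 1) =
      dplus (dminus r) x + (((d : ℝ) - 2) / r x) *
        (Real.exp (-(f x)) / 2 * (k + r x ^ 2 / L ^ 2) + dplus r x * dminus r x)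
      + (r x / L ^ 2) * Real.exp (-(f x)))
    (hTppnn : ∀ x ∈ U, 0 ≤ Tpp x) (hTmmnn : ∀ x ∈ U, 0 ≤ Tmm x)
    (hTpmnn : ∀ x ∈ U, 0 ≤ Tpm x)
    (μ : ℝ × ℝ → ℝ)
    (hμ : ∀ x, μ x = k * r x ^ (d - 2)
      + 2 * Real.exp (f x) * r x ^ (d - 2) * dplus r x * dminus r x
      + r x ^ d / L ^ 2)
    (γp γm : ℝ → ℝ)
    (hγmem : ∀ t ∈ Set.Icc (0 : ℝ) 1, (γp t, γm t) ∈ U)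
    (hγC1 : ContDiffOn ℝ 1 (fun t => (γp t, γm t)) (Set.Icc (0 : ℝ) 1))
    (hγp' : ∀ t ∈ Set.Icc (0 : ℝ) 1, 0 ≤ derivWithin γp (Set.Icc (0 : ℝ) 1) t)
    (hγm' : ∀ t ∈ Set.Icc (0 : ℝ) 1, derivWithin γm (Set.Icc (0 : ℝ) 1) t ≤ 0)
    (huntrapped : ∀ t ∈ Set.Icc (0 : ℝ) 1,
      0 ≤ dplus r (γp t, γm t) ∧ dminus r (γp t, γm t) ≤ 0)
    (hmarg : dplus r (γp 0, γm 0) = 0)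
    (Ω GN A M : ℝ) (hΩ : 0 < Ω) (hGN : 0 < GN)
    (hA : A = Ω * r (γp 0, γm 0) ^ (d - 1))
    (hM : 16 * Real.pi * GN * M = ((d : ℝ) - 1) * Ω * μ (γp 1, γm 1)) :
    16 * Real.pi * GN * M / (((d : ℝ) - 1) * Ω) ≥
      k * (A / Ω) ^ (((d : ℝ) - 2) / ((d : ℝ) - 1))
      + (1 / L ^ 2) * (A / Ω) ^ ((d : ℝ) / ((d : ℝ) - 1)) := by
  obtain ⟨n, rfl⟩ : ∃ n, d = n + 2 := ⟨d - 2, by omega⟩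
  have hn1 : ((↑(n+2) : ℝ) - 1) = (n:ℝ) + 1 := by push_cast; ring
  have hn2 : ((↑(n+2) : ℝ) - 2) = (n:ℝ) := by push_cast; ring
  have hnpos : ((n:ℝ) + 1) ≠ 0 := by positivity
  have hudiff : UniqueDiffOn ℝ (Set.Icc (0:ℝ) 1) := uniqueDiffOn_Icc one_pos
  have hLne : L ≠ 0 := ne_of_gt hL
  set G : ℝ → ℝ := fun t =>
    2 * Real.exp (f (γp t, γm t)) * r (γp t, γm t) ^ (n+1) / ((n:ℝ)+1) *
      (derivWithin γp (Set.Icc (0:ℝ) 1) t *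
        (dplus r (γp t, γm t) * Tpm (γp t, γm t) - dminus r (γp t, γm t) * Tpp (γp t, γm t))
       + derivWithin γm (Set.Icc (0:ℝ) 1) t *
        (dminus r (γp t, γm t) * Tpm (γp t, γm t) - dplus r (γp t, γm t) * Tmm (γp t, γm t)))
    with hG
  have key : ∀ t ∈ Set.Icc (0:ℝ) 1,
      HasDerivWithinAt (fun s => μ (γp s, γm s)) (G t) (Set.Icc (0:ℝ) 1) t ∧ 0 ≤ G t := by
    intro t ht
    have hx : (γp t, γm t) ∈ U := hγmem t ht
    have hrx : ContDiffAt ℝ 2 r (γp t, γm t) := hr.contDiffAt (hU.mem_nhds hx)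
    have hfx : ContDiffAt ℝ 2 f (γp t, γm t) := hf.contDiffAt (hU.mem_nhds hx)
    have hrd : DifferentiableAt ℝ r (γp t, γm t) := hrx.differentiableAt two_ne_zero
    have hfd : DifferentiableAt ℝ f (γp t, γm t) := hfx.differentiableAt two_ne_zero
    have hRpos : 0 < r (γp t, γm t) := hrpos _ hx
    have hRne : r (γp t, γm t) ≠ 0 := ne_of_gt hRpos
    have hEne : Real.exp (f (γp t, γm t)) ≠ 0 := Real.exp_ne_zero _
    have hD2' : ContDiffAt ℝ 1 (fderiv ℝ r) (γp t, γm t) := hrx.fderiv_right (le_refl 2)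
    have hD2 : HasFDerivAt (fderiv ℝ r) (fderiv ℝ (fderiv ℝ r) (γp t, γm t)) (γp t, γm t) :=
      (hD2'.differentiableAt one_ne_zero).hasFDerivAt
    set D2 := fderiv ℝ (fderiv ℝ r) (γp t, γm t) with hD2def
    have hsym : D2 (0,1) (1,0) = D2 (1,0) (0,1) := hrx.isSymmSndFDerivAt (by rw [minSmoothness_of_isRCLikeNormedField]) _ _
    -- curve derivative
    have hγd : HasDerivWithinAt (fun s => (γp s, γm s))
        (derivWithin (fun s => (γp s, γm s)) (Set.Icc (0:ℝ) 1) t) (Set.Icc (0:ℝ) 1) t :=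
      ((hγC1.differentiableOn one_ne_zero) t ht).hasDerivWithinAt
    set V := derivWithin (fun s => (γp s, γm s)) (Set.Icc (0:ℝ) 1) t with hV
    have hγpd : HasDerivWithinAt γp V.1 (Set.Icc (0:ℝ) 1) t := by
      have h := (ContinuousLinearMap.fst ℝ ℝ ℝ).hasFDerivAt.comp_hasDerivWithinAt t hγd
      exact h
    have hγmd : HasDerivWithinAt γm V.2 (Set.Icc (0:ℝ) 1) t := by
      have h := (ContinuousLinearMap.snd ℝ ℝ ℝ).hasFDerivAt.comp_hasDerivWithinAt t hγd
      exact h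
    have hc1 : derivWithin γp (Set.Icc (0:ℝ) 1) t = V.1 := hγpd.derivWithin (hudiff t ht)
    have hm1 : derivWithin γm (Set.Icc (0:ℝ) 1) t = V.2 := hγmd.derivWithin (hudiff t ht)
    have hc : 0 ≤ V.1 := hc1 ▸ hγp' t ht
    have hm : V.2 ≤ 0 := hm1 ▸ hγm' t ht
    -- second derivative identifications
    have hDa : HasFDerivAt (dplus r)
        ((ContinuousLinearMap.apply ℝ ℝ ((1:ℝ),(0:ℝ))).comp D2) (γp t, γm t) :=
      (ContinuousLinearMap.apply ℝ ℝ ((1:ℝ),(0:ℝ))).hasFDerivAt.comp _ hD2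
    have hDb : HasFDerivAt (dminus r)
        ((ContinuousLinearMap.apply ℝ ℝ ((0:ℝ),(1:ℝ))).comp D2) (γp t, γm t) :=
      (ContinuousLinearMap.apply ℝ ℝ ((0:ℝ),(1:ℝ))).hasFDerivAt.comp _ hD2
    have happ : dplus (dplus r) (γp t, γm t) = D2 (1,0) (1,0) := by
      show fderiv ℝ (dplus r) _ (1,0) = _
      rw [hDa.fderiv]; rfl
    have hapm : dplus (dminus r) (γp t, γm t) = D2 (1,0) (0,1) := by
      show fderiv ℝ (dminus r) _ (1,0) = _
      rw [hDb.fderiv]; rfl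
    have hamm : dminus (dminus r) (γp t, γm t) = D2 (0,1) (0,1) := by
      show fderiv ℝ (dminus r) _ (0,1) = _
      rw [hDb.fderiv]; rfl
    -- Einstein equations at the point
    have happ' : D2 (1,0) (1,0) = -(dplus f (γp t, γm t)) * dplus r (γp t, γm t)
        - r (γp t, γm t) * Tpp (γp t, γm t) / ((n:ℝ)+1) := by
      have h := hEpp _ hx
      rw [happ, hn1] at h
      linarith
    have hamm' : D2 (0,1) (0,1) = -(dminus f (γp t, γm t)) * dminus r (γp t, γm t)
        - r (γp t, γm t) * Tmm (γp t, γm t) / ((n:ℝ)+1) := by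
      have h := hEmm _ hx
      rw [hamm, hn1] at h
      linarith
    have hapm' : D2 (1,0) (0,1) = r (γp t, γm t) * Tpm (γp t, γm t) / ((n:ℝ)+1)
        - ((n:ℝ) / r (γp t, γm t)) *
          (Real.exp (-(f (γp t, γm t))) / 2 * (k + r (γp t, γm t) ^ 2 / L ^ 2)
            + dplus r (γp t, γm t) * dminus r (γp t, γm t))
        - (r (γp t, γm t) / L ^ 2) * Real.exp (-(f (γp t, γm t))) := by
      have h := hEpm _ hx
      rw [hapm, hn1, hn2] at h
      linarith
    -- chain rules
    have h1 : HasDerivWithinAt (fun s => r (γp s, γm s))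
        (V.1 * dplus r (γp t, γm t) + V.2 * dminus r (γp t, γm t)) (Set.Icc (0:ℝ) 1) t := by
      have h := hrd.hasFDerivAt.comp_hasDerivWithinAt t hγd
      rw [evalCLM (fderiv ℝ r (γp t, γm t)) V] at h
      exact h
    have h2 : HasDerivWithinAt (fun s => f (γp s, γm s))
        (V.1 * dplus f (γp t, γm t) + V.2 * dminus f (γp t, γm t)) (Set.Icc (0:ℝ) 1) t := by
      have h := hfd.hasFDerivAt.comp_hasDerivWithinAt t hγd
      rw [evalCLM (fderiv ℝ f (γp t, γm t)) V] at h
      exact h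
    have h3 : HasDerivWithinAt (fun s => dplus r (γp s, γm s))
        (V.1 * D2 (1,0) (1,0) + V.2 * D2 (0,1) (1,0)) (Set.Icc (0:ℝ) 1) t := by
      have h := hDa.comp_hasDerivWithinAt t hγd
      have he : ((ContinuousLinearMap.apply ℝ ℝ ((1:ℝ),(0:ℝ))).comp D2) V
          = V.1 * D2 (1,0) (1,0) + V.2 * D2 (0,1) (1,0) := by
        rw [ContinuousLinearMap.comp_apply, evalCLM D2 V]; simp
      rw [he] at h
      exact h
    have h4 : HasDerivWithinAt (fun s => dminus r (γp s, γm s))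
        (V.1 * D2 (1,0) (0,1) + V.2 * D2 (0,1) (0,1)) (Set.Icc (0:ℝ) 1) t := by
      have h := hDb.comp_hasDerivWithinAt t hγd
      have he : ((ContinuousLinearMap.apply ℝ ℝ ((0:ℝ),(1:ℝ))).comp D2) V
          = V.1 * D2 (1,0) (0,1) + V.2 * D2 (0,1) (0,1) := by
        rw [ContinuousLinearMap.comp_apply, evalCLM D2 V]; simp
      rw [he] at h
      exact h
    have hgeq : (fun s => μ (γp s, γm s)) = (fun s =>
        k * r (γp s, γm s) ^ n
        + 2 * Real.exp (f (γp s, γm s)) * r (γp s, γm s) ^ n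
            * dplus r (γp s, γm s) * dminus r (γp s, γm s)
        + r (γp s, γm s) ^ (n+2) / L^2) := by
      funext s; rw [hμ]; norm_num
    have hbig := (((h1.pow n).const_mul k).add
      ((((h2.exp.const_mul 2).mul (h1.pow n)).mul h3).mul h4)).add
      ((h1.pow (n+2)).div_const (L^2))
    have hmain : HasDerivWithinAt (fun s => μ (γp s, γm s)) (G t) (Set.Icc (0:ℝ) 1) t := by
      rw [hgeq]
      convert hbig using 1
      case e'_4 => rfl
      case e'_5 => rfl
      case e'_8 => rfl
      rw [hG]
      simp only [hc1, hm1, Pi.pow_apply, Pi.mul_apply]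
      rw [hsym, happ', hamm', hapm', natmul_pow_pred n _ hRne,
        natmul_pow_pred (n+2) _ hRne, Real.exp_neg]
      field_simp
      push_cast
      ring
    refine ⟨hmain, ?_⟩
    have hT1 := hTppnn _ hx
    have hT2 := hTmmnn _ hx
    have hT3 := hTpmnn _ hx
    obtain ⟨ha, hb⟩ := huntrapped t ht
    have hfac : (0:ℝ) ≤ 2 * Real.exp (f (γp t, γm t)) * r (γp t, γm t) ^ (n+1) / ((n:ℝ)+1) := by
      positivity
    rw [hG]
    apply mul_nonneg hfac
    have e1 : 0 ≤ derivWithin γp (Set.Icc (0:ℝ) 1) t *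
        (dplus r (γp t, γm t) * Tpm (γp t, γm t) - dminus r (γp t, γm t) * Tpp (γp t, γm t)) := by
      apply mul_nonneg (hγp' t ht)
      nlinarith [mul_nonneg ha hT3, mul_nonneg (neg_nonneg.2 hb) hT1]
    have e2 : 0 ≤ derivWithin γm (Set.Icc (0:ℝ) 1) t *
        (dminus r (γp t, γm t) * Tpm (γp t, γm t) - dplus r (γp t, γm t) * Tmm (γp t, γm t)) := by
      nlinarith [mul_nonneg (neg_nonneg.2 (hγm' t ht))
        (by nlinarith [mul_nonneg (neg_nonneg.2 hb) hT3, mul_nonneg ha hT2] :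
          (0:ℝ) ≤ -(dminus r (γp t, γm t) * Tpm (γp t, γm t) - dplus r (γp t, γm t) * Tmm (γp t, γm t)))]
    linarith
  -- monotonicity of μ along the curve
  have hmono : MonotoneOn (fun s => μ (γp s, γm s)) (Set.Icc (0:ℝ) 1) := by
    apply monotoneOn_of_hasDerivWithinAt_nonneg (convex_Icc 0 1)
      (fun t ht => ((key t ht).1).continuousWithinAt)
      (f' := G) (fun t ht => (((key t (interior_subset ht)).1).mono interior_subset))
      (fun t ht => (key t (interior_subset ht)).2)
  have h01 : μ (γp 0, γm 0) ≤ μ (γp 1, γm 1) :=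
    hmono (Set.left_mem_Icc.2 zero_le_one) (Set.right_mem_Icc.2 zero_le_one) zero_le_one
  -- endpoint values
  have hr0 : 0 < r (γp 0, γm 0) := hrpos _ (hγmem 0 (Set.left_mem_Icc.2 zero_le_one))
  set r₀ := r (γp 0, γm 0) with hr₀def
  have hμ0 : μ (γp 0, γm 0) = k * r₀ ^ n + r₀ ^ (n+2) / L^2 := by
    rw [hμ]; rw [hmarg]; norm_num; rfl
  have hAΩ : A / Ω = r₀ ^ (n+1) := by
    rw [hA]
    have : n + 2 - 1 = n + 1 := by omega
    rw [this, mul_div_cancel_left₀ _ (ne_of_gt hΩ)]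
  have hn1 : ((↑(n+2) : ℝ) - 1) = (n:ℝ) + 1 := by push_cast; ring
  have hn2 : ((↑(n+2) : ℝ) - 2) = (n:ℝ) := by push_cast; ring
  have hnpos : ((n:ℝ) + 1) ≠ 0 := by positivity
  have e1 : (r₀ ^ (n+1) : ℝ) ^ (((↑(n+2):ℝ) - 2)/((↑(n+2):ℝ) - 1)) = r₀ ^ n := by
    rw [hn1, hn2, ← Real.rpow_natCast r₀ (n+1), ← Real.rpow_mul hr0.le]
    push_cast
    rw [mul_div_cancel₀ _ hnpos]
    exact Real.rpow_natCast r₀ n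
  have e2 : (r₀ ^ (n+1) : ℝ) ^ ((↑(n+2):ℝ)/((↑(n+2):ℝ) - 1)) = r₀ ^ (n+2) := by
    rw [hn1, ← Real.rpow_natCast r₀ (n+1), ← Real.rpow_mul hr0.le]
    push_cast
    have hh : ((n:ℝ)+1) * (((n:ℝ)+2)/((n:ℝ)+1)) = (n:ℝ)+2 := by field_simp
    rw [hh]
    exact_mod_cast Real.rpow_natCast r₀ (n+2)
  have hLHS : 16 * Real.pi * GN * M / (((↑(n+2):ℝ) - 1) * Ω) = μ (γp 1, γm 1) := by
    rw [hM, hn1]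
    exact mul_div_cancel_left₀ _ (by positivity)
  rw [ge_iff_le, hLHS, hAΩ, e1, e2]
  have : (1/L^2) * r₀ ^ (n+2) = r₀ ^ (n+2) / L^2 := by ring
  rw [this]
  rw [hμ0] at h01
  linarith
end

section
/- (Asymptotically flat corollary of Theorem 1, reduced null-coordinate form.) Let d ≥ 2 be an integer, k a real constant, U ⊆ ℝ² open, and f, r : U → ℝ twice continuously differentiable with r > 0 on U. Suppose T₊₊, T₋₋, T₊₋ : U → ℝ satisfy the reduced Einstein equations with vanishing cosmological constant: r·T±±/(d−1) = −(∂±f)(∂±r) − ∂±∂±r and r·T₊₋/(d−1) = ∂₊∂₋r + ((d−2)/r)[ (e^{−f}/2)·k + (∂₊r)(∂₋r) ], with T₊₊ ≥ 0, T₋₋ ≥ 0, T₊₋ ≥ 0 on U. Define μ = k r^{d−2} + 2 e^{f} r^{d−2} (∂₊r)(∂₋r). Let γ = (γ⁺, γ⁻) : [0,1] → U be continuously differentiable with (γ⁺)′ ≥ 0 and (γ⁻)′ ≤ 0, with ∂₊r ≥ 0 and ∂₋r ≤ 0 along γ, and with ∂₊r(γ(0)) = 0. Then μ(γ(1)) ≥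 k·r(γ(0))^{d−2}. -/
/-- Evaluation of a continuous linear map on a pair in terms of the basis vectors. -/
lemma pair_eval {M : Type*} [NormedAddCommGroup M] [NormedSpace ℝ M]
    (G : ℝ × ℝ →L[ℝ] M) (a b : ℝ) : G (a, b) = a • G (1, 0) + b • G (0, 1) := by
  have h : ((a, b) : ℝ × ℝ) = a • ((1 : ℝ), (0 : ℝ)) + b • ((0 : ℝ), (1 : ℝ)) := by
    simp [Prod.ext_iff]
  rw [h, map_add, map_smul, map_smul]

set_option maxHeartbeats 1000000 in
/-- The algebraic identity underlying the monotonicity of the Misner-Sharp mass. -/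
lemma penrose_algebra (e : ℕ) (k R expF P M fp fm tpp tmm tpm a b D1 : ℝ)
    (hR : R ≠ 0) (hD : D1 ≠ 0) (hexp : expF ≠ 0) :
    2 * expF * R ^ e * R / D1 *
        (a * (tpm * P - tpp * M) + b * (tpm * M - tmm * P)) =
      k * ((e : ℝ) * R ^ (e - 1) * (a * P + b * M)) +
        (((2 * (expF * (a * fp + b * fm)) * R ^ e +
              2 * expF * ((e : ℝ) * R ^ (e - 1) * (a * P + b * M))) * P +
            2 * expF * R ^ e *
              (a * (-fp * P - R * tpp / D1) +
               b * (R * tpm / D1 - (e : ℝ) / R * (expF⁻¹ / 2 * k + P * M)))) * M +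
          2 * expF * R ^ e * P *
            (a * (R * tpm / D1 - (e : ℝ) / R * (expF⁻¹ / 2 * k + P * M)) +
             b * (-fm * M - R * tmm / D1))) := by
  cases e with
  | zero => field_simp; ring
  | succ m =>
    rw [Nat.succ_sub_one, pow_succ]
    field_simp
    ring

theorem penrose_inequality_asymptotically_flat_reduced
    (d : ℕ) (hd : 2 ≤ d) (k : ℝ)
    (U : Set (ℝ × ℝ)) (hU : IsOpen U)
    (f r : ℝ × ℝ → ℝ)
    (hf : ContDiffOn ℝ 2 f U) (hr : ContDiffOn ℝ 2 r U)
    (hrpos : ∀ x ∈ U, 0 < r x)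
    (Tpp Tmm Tpm : ℝ × ℝ → ℝ)
    (hEpp : ∀ x ∈ U, r x * Tpp x / ((d : ℝ) - 1) =
      -(dplus f x) * dplus r x - dplus (dplus r) x)
    (hEmm : ∀ x ∈ U, r x * Tmm x / ((d : ℝ) - 1) =
      -(dminus f x) * dminus r x - dminus (dminus r) x)
    (hEpm : ∀ x ∈ U, r x * Tpm x / ((d : ℝ) - 1) =
      dplus (dminus r) x + (((d : ℝ) - 2) / r x) *
        (Real.exp (-(f x)) / 2 * k + dplus r x * dminus r x))
    (hTppnn : ∀ x ∈ U, 0 ≤ Tpp x) (hTmmnn : ∀ x ∈ U, 0 ≤ Tmm x)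
    (hTpmnn : ∀ x ∈ U, 0 ≤ Tpm x)
    (μ : ℝ × ℝ → ℝ)
    (hμ : ∀ x, μ x = k * r x ^ (d - 2)
      + 2 * Real.exp (f x) * r x ^ (d - 2) * dplus r x * dminus r x)
    (γp γm : ℝ → ℝ)
    (hγmem : ∀ t ∈ Set.Icc (0 : ℝ) 1, (γp t, γm t) ∈ U)
    (hγC1 : ContDiffOn ℝ 1 (fun t => (γp t, γm t)) (Set.Icc (0 : ℝ) 1))
    (hγp' : ∀ t ∈ Set.Icc (0 : ℝ) 1, 0 ≤ derivWithin γp (Set.Icc (0 : ℝ) 1) t)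
    (hγm' : ∀ t ∈ Set.Icc (0 : ℝ) 1, derivWithin γm (Set.Icc (0 : ℝ) 1) t ≤ 0)
    (huntrapped : ∀ t ∈ Set.Icc (0 : ℝ) 1,
      0 ≤ dplus r (γp t, γm t) ∧ dminus r (γp t, γm t) ≤ 0)
    (hmarg : dplus r (γp 0, γm 0) = 0) :
    μ (γp 1, γm 1) ≥ k * r (γp 0, γm 0) ^ (d - 2) := by
  set I : Set ℝ := Set.Icc (0 : ℝ) 1 with hIdef
  set e : ℕ := d - 2 with hedef
  have hd2 : (2 : ℝ) ≤ (d : ℝ) := by exact_mod_cast hd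
  have hd1 : (0 : ℝ) < (d : ℝ) - 1 := by linarith
  have hde : ((d : ℝ) - 2) = (e : ℝ) := by
    rw [hedef]; push_cast [Nat.cast_sub hd]; ring
  -- the mass function along the curve
  set h : ℝ → ℝ := fun t => k * r (γp t, γm t) ^ e
      + 2 * Real.exp (f (γp t, γm t)) * r (γp t, γm t) ^ e
          * dplus r (γp t, γm t) * dminus r (γp t, γm t) with hhdef
  -- derivative of h along the curve
  have key : ∀ t ∈ I, HasDerivWithinAt h
      (2 * Real.exp (f (γp t, γm t)) * r (γp t, γm t) ^ e * r (γp t, γm t) / ((d : ℝ) - 1) *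
        (derivWithin γp I t *
            (Tpm (γp t, γm t) * dplus r (γp t, γm t) - Tpp (γp t, γm t) * dminus r (γp t, γm t))
          + derivWithin γm I t *
            (Tpm (γp t, γm t) * dminus r (γp t, γm t) - Tmm (γp t, γm t) * dplus r (γp t, γm t))))
      I t := by
    intro t ht
    have hx : (γp t, γm t) ∈ U := hγmem t ht
    set x : ℝ × ℝ := (γp t, γm t) with hxdef
    set a : ℝ := derivWithin γp I t with hadef
    set b : ℝ := derivWithin γm I t with hbdef
    have hrx : ContDiffAt ℝ 2 r x := hr.contDiffAt (hU.mem_nhds hx)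
    have hfx : ContDiffAt ℝ 2 f x := hf.contDiffAt (hU.mem_nhds hx)
    have hrd : HasFDerivAt r (fderiv ℝ r x) x :=
      (hrx.differentiableAt two_ne_zero).hasFDerivAt
    have hfd : HasFDerivAt f (fderiv ℝ f x) x :=
      (hfx.differentiableAt two_ne_zero).hasFDerivAt
    have hr2 : HasFDerivAt (fderiv ℝ r) (fderiv ℝ (fderiv ℝ r) x) x := by
      have h1 : ContDiffAt ℝ 1 (fderiv ℝ r) x := hrx.fderiv_right (by norm_num)
      exact (h1.differentiableAt one_ne_zero).hasFDerivAt
    set F2 := fderiv ℝ (fderiv ℝ r) x with hF2def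
    have hev : ∀ᶠ y in nhds x, HasFDerivAt r (fderiv ℝ r y) y := by
      filter_upwards [hU.mem_nhds hx] with y hy
      exact ((hr.contDiffAt (hU.mem_nhds hy)).differentiableAt two_ne_zero).hasFDerivAt
    have hsym := second_derivative_symmetric_of_eventually hev hr2
    -- derivatives of dplus r and dminus r
    have hPd : HasFDerivAt (dplus r)
        ((fderiv ℝ r x).comp (0 : ℝ × ℝ →L[ℝ] ℝ × ℝ) + F2.flip ((1 : ℝ), (0 : ℝ))) x :=
      hr2.clm_apply (hasFDerivAt_const _ _)
    have hMd : HasFDerivAt (dminus r)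
        ((fderiv ℝ r x).comp (0 : ℝ × ℝ →L[ℝ] ℝ × ℝ) + F2.flip ((0 : ℝ), (1 : ℝ))) x :=
      hr2.clm_apply (hasFDerivAt_const _ _)
    have hPP : dplus (dplus r) x = F2 (1, 0) (1, 0) := by
      show fderiv ℝ (dplus r) x (1, 0) = _
      rw [hPd.fderiv]; simp
    have hPM : dplus (dminus r) x = F2 (1, 0) (0, 1) := by
      show fderiv ℝ (dminus r) x (1, 0) = _
      rw [hMd.fderiv]; simp
    have hMM : dminus (dminus r) x = F2 (0, 1) (0, 1) := by
      show fderiv ℝ (dminus r) x (0, 1) = _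
      rw [hMd.fderiv]; simp
    -- the curve
    have hgd : DifferentiableWithinAt ℝ (fun s => (γp s, γm s)) I t :=
      (hγC1.differentiableOn one_ne_zero) t ht
    have hγpd : DifferentiableWithinAt ℝ γp I t := hgd.fst
    have hγmd : DifferentiableWithinAt ℝ γm I t := hgd.snd
    have hγd : HasDerivWithinAt (fun s => (γp s, γm s)) (a, b) I t :=
      hγpd.hasDerivWithinAt.prodMk hγmd.hasDerivWithinAt
    -- derivatives of the composed quantities
    have hR : HasDerivWithinAt (fun s => r (γp s, γm s))
        (a * dplus r x + b * dminus r x) I t := by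
      have hc := hrd.comp_hasDerivWithinAt t hγd
      have hv : fderiv ℝ r x (a, b) = a * dplus r x + b * dminus r x := by
        rw [pair_eval]; simp [dplus, dminus]
      exact hv ▸ hc
    have hF : HasDerivWithinAt (fun s => f (γp s, γm s))
        (a * dplus f x + b * dminus f x) I t := by
      have hc := hfd.comp_hasDerivWithinAt t hγd
      have hv : fderiv ℝ f x (a, b) = a * dplus f x + b * dminus f x := by
        rw [pair_eval]; simp [dplus, dminus]
      exact hv ▸ hc
    have hP : HasDerivWithinAt (fun s => dplus r (γp s, γm s))
        (a * dplus (dplus r) x + b * dplus (dminus r) x) I t := by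
      have hc := hPd.comp_hasDerivWithinAt t hγd
      have hv : ((fderiv ℝ r x).comp (0 : ℝ × ℝ →L[ℝ] ℝ × ℝ)
          + F2.flip ((1 : ℝ), (0 : ℝ))) (a, b)
          = a * dplus (dplus r) x + b * dplus (dminus r) x := by
        rw [hPP, hPM]
        simp only [ContinuousLinearMap.add_apply, ContinuousLinearMap.comp_apply,
          ContinuousLinearMap.zero_apply, map_zero, ContinuousLinearMap.flip_apply]
        rw [pair_eval F2 a b]
        simp [hsym (0, 1) (1, 0)]
      exact hv ▸ hc
    have hM : HasDerivWithinAt (fun s => dminus r (γp s, γm s))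
        (a * dplus (dminus r) x + b * dminus (dminus r) x) I t := by
      have hc := hMd.comp_hasDerivWithinAt t hγd
      have hv : ((fderiv ℝ r x).comp (0 : ℝ × ℝ →L[ℝ] ℝ × ℝ)
          + F2.flip ((0 : ℝ), (1 : ℝ))) (a, b)
          = a * dplus (dminus r) x + b * dminus (dminus r) x := by
        rw [hPM, hMM]
        simp only [ContinuousLinearMap.add_apply, ContinuousLinearMap.comp_apply,
          ContinuousLinearMap.zero_apply, map_zero, ContinuousLinearMap.flip_apply]
        rw [pair_eval F2 a b]
        simp
      exact hv ▸ hc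
    -- assemble
    have hRpow : HasDerivWithinAt (fun s => r (γp s, γm s) ^ e)
        ((e : ℝ) * r x ^ (e - 1) * (a * dplus r x + b * dminus r x)) I t := hR.pow e
    have hExp : HasDerivWithinAt (fun s => 2 * Real.exp (f (γp s, γm s)))
        (2 * (Real.exp (f x) * (a * dplus f x + b * dminus f x))) I t :=
      hF.exp.const_mul 2
    have htot := (hRpow.const_mul k).add (((hExp.mul hRpow).mul hP).mul hM)
    refine htot.congr_deriv ?_
    simp only [Pi.mul_apply]
    -- algebraic identity using the Einstein equations
    have e1 := hEpp x hx
    have e2 := hEmm x hx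
    have e3 := hEpm x hx
    have hQ : dplus (dplus r) x
        = -(dplus f x) * dplus r x - r x * Tpp x / ((d : ℝ) - 1) := by linarith
    have hW : dminus (dminus r) x
        = -(dminus f x) * dminus r x - r x * Tmm x / ((d : ℝ) - 1) := by linarith
    have hS : dplus (dminus r) x
        = r x * Tpm x / ((d : ℝ) - 1)
          - (((d : ℝ) - 2) / r x) * (Real.exp (-(f x)) / 2 * k
            + dplus r x * dminus r x) := by linarith
    rw [hQ, hW, hS, hde, Real.exp_neg]
    have hr0 : r x ≠ 0 := ne_of_gt (hrpos x hx)
    have hd1' : ((d : ℝ) - 1) ≠ 0 := ne_of_gt hd1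
    have hexp : Real.exp (f x) ≠ 0 := (Real.exp_pos _).ne'
    simp only [← hxdef]
    linarith [penrose_algebra e k (r x) (Real.exp (f x)) (dplus r x) (dminus r x)
      (dplus f x) (dminus f x) (Tpp x) (Tmm x) (Tpm x) a b ((d : ℝ) - 1) hr0 hd1' hexp]
  -- monotonicity of h on I
  have hmono : MonotoneOn h I := by
    apply monotoneOn_of_deriv_nonneg (convex_Icc 0 1)
    · intro t ht
      exact (key t ht).differentiableWithinAt.continuousWithinAt
    · intro t ht
      rw [interior_Icc] at ht
      exact (((key t (Set.mem_Icc_of_Ioo ht)).hasDerivAt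
        (Icc_mem_nhds ht.1 ht.2)).differentiableAt).differentiableWithinAt
    · intro t ht
      rw [interior_Icc] at ht
      have ht' : t ∈ I := Set.mem_Icc_of_Ioo ht
      have hD := ((key t ht').hasDerivAt (Icc_mem_nhds ht.1 ht.2)).deriv
      rw [hD]
      have hx := hγmem t ht'
      have h1 := hγp' t ht'
      have h2 := hγm' t ht'
      obtain ⟨hP0, hM0⟩ := huntrapped t ht'
      have hrx := (hrpos _ hx).le
      have cpos : 0 ≤ 2 * Real.exp (f (γp t, γm t)) * r (γp t, γm t) ^ e
          * r (γp t, γm t) / ((d : ℝ) - 1) := by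
        apply div_nonneg _ hd1.le
        have := (Real.exp_pos (f (γp t, γm t))).le
        positivity
      apply mul_nonneg cpos
      have t1 : 0 ≤ derivWithin γp I t *
          (Tpm (γp t, γm t) * dplus r (γp t, γm t)
            - Tpp (γp t, γm t) * dminus r (γp t, γm t)) := by
        apply mul_nonneg h1
        have := mul_nonneg (hTpmnn _ hx) hP0
        have := mul_nonpos_of_nonneg_of_nonpos (hTppnn _ hx) hM0
        linarith
      have t2 : 0 ≤ derivWithin γm I t *
          (Tpm (γp t, γm t) * dminus r (γp t, γm t)
            - Tmm (γp t, γm t) * dplus r (γp t, γm t)) := by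
        apply mul_nonneg_of_nonpos_of_nonpos h2
        have := mul_nonpos_of_nonneg_of_nonpos (hTpmnn _ hx) hM0
        have := mul_nonneg (hTmmnn _ hx) hP0
        linarith
      linarith
  have h01 : h 0 ≤ h 1 :=
    hmono (Set.left_mem_Icc.mpr zero_le_one) (Set.right_mem_Icc.mpr zero_le_one) zero_le_one
  have h0 : h 0 = k * r (γp 0, γm 0) ^ e := by
    rw [hhdef]; simp [hmarg]
  have h1 : h 1 = μ (γp 1, γm 1) := (hμ (γp 1, γm 1)).symm
  rw [ge_iff_le, ← h0, ← h1]
  exact h01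
end

section
/- Let d ≥ 2 be an integer, L > 0, r₀ > 0, μ ∈ ℝ, N ≥ 2 an integer, and let g₂, …, g_N be real coupling constants defining the potential V(φ) = Σ_{n=2}^{N} g_n φⁿ. Set ω₀ = r₀^{d−2} + r₀^{d}/L² and λ = d(d−1) + μ². For each R₀ > r₀ consider the logarithmic profile φ(r) = μ·log(r/R₀) for r₀ ≤ r ≤ R₀ and φ(r) = 0 for r ≥ R₀, and define ω_{R₀}(∞) = (R₀/r₀)^{−μ²/(d−1)} [ ω₀ + (1/(d−1)) ∫_{r₀}^{R₀} (ρ/r₀)^{μ²/(d−1)} ρ^{d−1} ( (1 + ρ²/L²)·μ²/ρ² + 2V(μ log(ρ/R₀)) ) dρ ]. Then lim_{R₀ → ∞} λ · ω_{R₀}(∞) / R₀^{d} = μ²/L² + 2 Σ_{n=2}^{N} n!·g_n·[ (1−d)μ / (d(d−1)+μ²) ]ⁿ. -/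
open Filter Real MeasureTheory intervalIntegral

private lemma div_rpow_tendsto_zero {b : ℝ} (hb : 0 < b) (c : ℝ) :
    Tendsto (fun R : ℝ => c / R ^ b) atTop (nhds 0) :=
  tendsto_const_nhds.div_atTop (tendsto_rpow_atTop hb)

private lemma aux_log (c : ℝ) {b : ℝ} (hb : 0 < b) (n : ℕ) :
    Tendsto (fun R : ℝ => (Real.log R - c) ^ n / R ^ b) atTop (nhds 0) := by
  rcases Nat.eq_zero_or_pos n with h | h
  · subst h
    simpa using div_rpow_tendsto_zero hb 1
  · have hbn : 0 < b / n := by positivity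
    have h1 : Tendsto (fun R : ℝ => (Real.log R - c) / R ^ (b / n)) atTop (nhds 0) := by
      have := (isLittleO_log_rpow_atTop hbn).tendsto_div_nhds_zero
      have h2 := div_rpow_tendsto_zero hbn c
      simpa [sub_div] using this.sub h2
    have h2 : Tendsto (fun R : ℝ => ((Real.log R - c) / R ^ (b / n)) ^ n) atTop
        (nhds 0) := by
      simpa [zero_pow h.ne'] using h1.pow n
    apply h2.congr'
    filter_upwards [eventually_gt_atTop 0] with R hR
    rw [div_pow, ← Real.rpow_natCast (R ^ (b/n)) n, ← Real.rpow_mul hR.le,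
      div_mul_cancel₀ _ (by exact_mod_cast h.ne' : (n:ℝ) ≠ 0)]

private lemma integrable_aux (e c : ℝ) (m : ℕ) {r₀ R : ℝ} (hr₀ : 0 < r₀) (hR : r₀ ≤ R) :
    IntervalIntegrable (fun ρ : ℝ => ρ ^ e * (Real.log ρ - c) ^ m) volume r₀ R := by
  apply ContinuousOn.intervalIntegrable
  have hsub : Set.uIcc r₀ R ⊆ {x : ℝ | x ≠ 0} := by
    rw [Set.uIcc_of_le hR]
    intro x hx
    exact (lt_of_lt_of_le hr₀ hx.1).ne'
  apply ContinuousOn.mul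
  · exact fun x hx => ((Real.continuousAt_rpow_const x e (Or.inl (hsub hx))).continuousWithinAt)
  · exact (((Real.continuousOn_log.mono hsub).sub continuousOn_const).pow m)

private lemma hasDeriv_base {b : ℝ} (hb : b ≠ 0) {x : ℝ} (hx : 0 < x) :
    HasDerivAt (fun ρ : ℝ => ρ ^ b / b) (x ^ (b - 1)) x := by
  have h1 : HasDerivAt (fun ρ : ℝ => ρ ^ b) (b * x ^ (b - 1)) x :=
    Real.hasDerivAt_rpow_const (Or.inl hx.ne')
  simpa [mul_div_assoc, mul_div_cancel_left₀ _ hb] using h1.div_const b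

private lemma hasDeriv_step {b : ℝ} (hb : b ≠ 0) (c : ℝ) (n : ℕ) {x : ℝ} (hx : 0 < x) :
    HasDerivAt (fun ρ : ℝ => ρ ^ b * (Real.log ρ - c) ^ (n + 1) / b)
      (x ^ (b - 1) * (Real.log x - c) ^ (n + 1)
        + ((n + 1 : ℝ) / b) * (x ^ (b - 1) * (Real.log x - c) ^ n)) x := by
  have h1 : HasDerivAt (fun ρ : ℝ => ρ ^ b) (b * x ^ (b - 1)) x :=
    Real.hasDerivAt_rpow_const (Or.inl hx.ne')
  have hl : HasDerivAt (fun ρ : ℝ => Real.log ρ - c) (1 / x) x :=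
    by simpa [one_div] using (Real.hasDerivAt_log hx.ne').sub_const c
  have h2 : HasDerivAt (fun ρ : ℝ => (Real.log ρ - c) ^ (n + 1))
      ((n + 1 : ℝ) * (Real.log x - c) ^ n * (1 / x)) x := by
    simpa using hl.fun_pow (n + 1)
  have h3 := (h1.fun_mul h2).div_const b
  refine h3.congr_deriv ?_
  have hxb : x ^ (b - 1) = x ^ b / x := Real.rpow_sub_one hx.ne' b
  rw [hxb]
  field_simp

private lemma J_base {b r₀ : ℝ} (hb : 0 < b) (hr₀ : 0 < r₀) {R : ℝ} (hR : r₀ ≤ R) :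
    ∫ ρ in r₀..R, ρ ^ (b - 1) = (R ^ b - r₀ ^ b) / b := by
  rw [show (R ^ b - r₀ ^ b) / b = R ^ b / b - r₀ ^ b / b by ring]
  apply intervalIntegral.integral_eq_sub_of_hasDerivAt
  · intro x hx
    rw [Set.uIcc_of_le hR] at hx
    exact hasDeriv_base hb.ne' (lt_of_lt_of_le hr₀ hx.1)
  · simpa using integrable_aux (b - 1) 0 0 hr₀ hR

private lemma J_step {b r₀ : ℝ} (hb : 0 < b) (hr₀ : 0 < r₀) (n : ℕ) {R : ℝ} (hR : r₀ ≤ R) :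
    ∫ ρ in r₀..R, ρ ^ (b - 1) * (Real.log ρ - Real.log R) ^ (n + 1)
      = -(r₀ ^ b * (Real.log r₀ - Real.log R) ^ (n + 1)) / b
        - ((n + 1 : ℝ) / b) * ∫ ρ in r₀..R, ρ ^ (b - 1) * (Real.log ρ - Real.log R) ^ n := by
  have hint1 := integrable_aux (b - 1) (Real.log R) (n + 1) hr₀ hR
  have hint2 := integrable_aux (b - 1) (Real.log R) n hr₀ hR
  have key : ∫ ρ in r₀..R,
      (ρ ^ (b - 1) * (Real.log ρ - Real.log R) ^ (n + 1)
        + ((n + 1 : ℝ) / b) * (ρ ^ (b - 1) * (Real.log ρ - Real.log R) ^ n))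
      = R ^ b * (Real.log R - Real.log R) ^ (n + 1) / b
        - r₀ ^ b * (Real.log r₀ - Real.log R) ^ (n + 1) / b := by
    refine intervalIntegral.integral_eq_sub_of_hasDerivAt
      (f := fun ρ : ℝ => ρ ^ b * (Real.log ρ - Real.log R) ^ (n + 1) / b) ?_ ?_
    · intro x hx
      rw [Set.uIcc_of_le hR] at hx
      exact hasDeriv_step hb.ne' (Real.log R) n (lt_of_lt_of_le hr₀ hx.1)
    · exact hint1.add (hint2.const_mul _)
  rw [intervalIntegral.integral_add hint1 (hint2.const_mul _),
    intervalIntegral.integral_const_mul] at key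
  rw [eq_sub_iff_add_eq, key]
  ring

private lemma tendsto_J {b r₀ : ℝ} (hb : 0 < b) (hr₀ : 0 < r₀) (n : ℕ) :
    Tendsto (fun R : ℝ => (∫ ρ in r₀..R, ρ ^ (b - 1) * (Real.log ρ - Real.log R) ^ n) / R ^ b)
      atTop (nhds ((-1) ^ n * n.factorial / b ^ (n + 1))) := by
  induction n with
  | zero =>
    have h : Tendsto (fun R : ℝ => 1 / b - (r₀ ^ b / b) / R ^ b) atTop (nhds (1 / b - 0)) :=
      tendsto_const_nhds.sub (div_rpow_tendsto_zero hb _)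
    simp only [sub_zero] at h
    apply (by simpa using h : Tendsto _ atTop (nhds ((-1:ℝ) ^ 0 * (Nat.factorial 0 : ℝ) / b ^ (0+1)))).congr'
    filter_upwards [eventually_ge_atTop r₀, eventually_gt_atTop 0] with R hR hR0
    have hRb : (0:ℝ) < R ^ b := Real.rpow_pos_of_pos hR0 b
    simp only [pow_zero, mul_one]
    rw [J_base hb hr₀ hR]
    field_simp
  | succ n ih =>
    have t1 : Tendsto (fun R : ℝ =>
        (-(r₀ ^ b) * (-1 : ℝ) ^ (n + 1) / b) * ((Real.log R - Real.log r₀) ^ (n + 1) / R ^ b))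
        atTop (nhds 0) := by
      simpa using (aux_log (Real.log r₀) hb (n + 1)).const_mul (-(r₀ ^ b) * (-1 : ℝ) ^ (n + 1) / b)
    have t2 := ih.const_mul (-((n + 1 : ℝ) / b))
    have h := t1.add t2
    rw [zero_add] at h
    have heq : -((n + 1 : ℝ) / b) * ((-1) ^ n * n.factorial / b ^ (n + 1))
        = (-1) ^ (n + 1) * (n + 1).factorial / b ^ (n + 1 + 1) := by
      rw [Nat.factorial_succ]
      push_cast
      field_simp
      ring
    rw [heq] at h
    apply h.congr'
    filter_upwards [eventually_ge_atTop r₀, eventually_gt_atTop 0] with R hR hR0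
    rw [J_step hb hr₀ n hR]
    have : (Real.log r₀ - Real.log R) ^ (n + 1)
        = (-1 : ℝ) ^ (n + 1) * (Real.log R - Real.log r₀) ^ (n + 1) := by
      rw [← neg_pow, neg_sub]
    rw [this]
    ring

private lemma tendsto_K {b r₀ : ℝ} (hb : 2 ≤ b) (hr₀ : 0 < r₀) :
    Tendsto (fun R : ℝ => (∫ ρ in r₀..R, ρ ^ (b - 3)) / R ^ b) atTop (nhds 0) := by
  have hb0 : (0:ℝ) < b := lt_of_lt_of_le two_pos hb
  apply squeeze_zero_norm' (a := fun R : ℝ => 1 / (r₀ * R))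
  · filter_upwards [eventually_ge_atTop r₀, eventually_ge_atTop 1] with R hR hR1
    have hR0 : (0:ℝ) < R := lt_of_lt_of_le one_pos hR1
    have hRb : (0:ℝ) < R ^ b := Real.rpow_pos_of_pos hR0 b
    have hbound : ‖∫ ρ in r₀..R, ρ ^ (b - 3)‖ ≤ R ^ (b - 2) / r₀ * |R - r₀| := by
      apply intervalIntegral.norm_integral_le_of_norm_le_const
      intro x hx
      rw [Set.uIoc_of_le hR] at hx
      have hx0 : 0 < x := lt_trans hr₀ hx.1
      have h1 : x ^ (b - 3) = x ^ (b - 2) / x := by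
        rw [← Real.rpow_sub_one hx0.ne']; congr 1; ring
      rw [Real.norm_eq_abs, abs_of_nonneg (Real.rpow_nonneg hx0.le _), h1]
      apply div_le_div₀ (Real.rpow_nonneg hR0.le _)
        (Real.rpow_le_rpow hx0.le hx.2 (by linarith)) hr₀ hx.1.le
    have habs : |R - r₀| ≤ R := by
      rw [abs_of_nonneg (by linarith)]; linarith
    have h3 : ‖∫ ρ in r₀..R, ρ ^ (b - 3)‖ ≤ R ^ (b - 2) / r₀ * R :=
      hbound.trans (by gcongr)
    have hpow : R ^ (b - 2) * R = R ^ b / R := by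
      calc R ^ (b - 2) * R = R ^ (b - 2) * R ^ (1:ℝ) := by rw [Real.rpow_one]
        _ = R ^ (b - 2 + 1) := (Real.rpow_add hR0 _ _).symm
        _ = R ^ (b - 1) := by congr 1; ring
        _ = R ^ b / R := Real.rpow_sub_one hR0.ne' b
    have heq : R ^ (b - 2) / r₀ * R / R ^ b = 1 / (r₀ * R) := by
      rw [div_mul_eq_mul_div, hpow]
      field_simp
    calc ‖(∫ ρ in r₀..R, ρ ^ (b - 3)) / R ^ b‖
        = ‖∫ ρ in r₀..R, ρ ^ (b - 3)‖ / R ^ b := by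
          rw [norm_div, Real.norm_eq_abs (R ^ b), abs_of_pos hRb]
      _ ≤ R ^ (b - 2) / r₀ * R / R ^ b := by gcongr
      _ = 1 / (r₀ * R) := heq
  · exact tendsto_const_nhds.div_atTop (tendsto_id.const_mul_atTop hr₀)

theorem log_profile_mass_asymptotics
    (d : ℕ) (hd : 2 ≤ d) (L r₀ μ : ℝ) (hL : 0 < L) (hr₀ : 0 < r₀)
    (N : ℕ) (hN : 2 ≤ N) (g : ℕ → ℝ)
    (V : ℝ → ℝ) (hV : ∀ x, V x = ∑ n ∈ Finset.Icc 2 N, g n * x ^ n)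
    (ω₀ lam : ℝ)
    (hω₀ : ω₀ = r₀ ^ (d - 2) + r₀ ^ d / L ^ 2)
    (hlam : lam = (d : ℝ) * ((d : ℝ) - 1) + μ ^ 2)
    (ωinf : ℝ → ℝ)
    (hωinf : ∀ R₀, ωinf R₀ = (R₀ / r₀) ^ (-(μ ^ 2 / ((d : ℝ) - 1))) *
      (ω₀ + (1 / ((d : ℝ) - 1)) * ∫ ρ in r₀..R₀,
        (ρ / r₀) ^ (μ ^ 2 / ((d : ℝ) - 1)) * ρ ^ (d - 1) *
          ((1 + ρ ^ 2 / L ^ 2) * μ ^ 2 / ρ ^ 2 + 2 * V (μ * Real.log (ρ / R₀))))) :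
    Tendsto (fun R₀ : ℝ => lam * ωinf R₀ / R₀ ^ d) atTop
      (nhds (μ ^ 2 / L ^ 2 + 2 * ∑ n ∈ Finset.Icc 2 N,
        (n.factorial : ℝ) * g n *
          ((1 - (d : ℝ)) * μ / ((d : ℝ) * ((d : ℝ) - 1) + μ ^ 2)) ^ n)) := by
  have hd2 : (2:ℝ) ≤ (d:ℝ) := by exact_mod_cast hd
  have hd0 : (0:ℝ) < (d:ℝ) - 1 := by linarith
  set a := μ ^ 2 / ((d:ℝ) - 1) with ha_def
  have ha : 0 ≤ a := div_nonneg (sq_nonneg μ) hd0.le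
  set b := a + (d:ℝ) with hb_def
  have hb2 : (2:ℝ) ≤ b := by rw [hb_def]; linarith
  have hb0 : (0:ℝ) < b := by linarith
  have hlam' : lam = ((d:ℝ) - 1) * b := by
    rw [hlam, hb_def, ha_def]; field_simp; ring
  have T1 : Tendsto (fun R : ℝ => lam * ω₀ * r₀ ^ a / R ^ b) atTop (nhds 0) :=
    div_rpow_tendsto_zero hb0 _
  have T2 := (tendsto_K hb2 hr₀).const_mul (b * μ ^ 2)
  have T3 := (tendsto_J hb0 hr₀ 0).const_mul (b * (μ ^ 2 / L ^ 2))
  have T4 : Tendsto (fun R : ℝ => ∑ n ∈ Finset.Icc 2 N, (2 * b * g n * μ ^ n) *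
      ((∫ ρ in r₀..R, ρ ^ (b - 1) * (Real.log ρ - Real.log R) ^ n) / R ^ b)) atTop
      (nhds (∑ n ∈ Finset.Icc 2 N, (2 * b * g n * μ ^ n) *
        ((-1) ^ n * (n.factorial : ℝ) / b ^ (n + 1)))) :=
    tendsto_finset_sum _ (fun n _ => (tendsto_J hb0 hr₀ n).const_mul _)
  have TG := ((T1.add T2).add T3).add T4
  have hx : ((1 - (d:ℝ)) * μ / ((d:ℝ) * ((d:ℝ) - 1) + μ ^ 2)) = -μ / b := by
    rw [← hlam, hlam']
    rw [div_eq_div_iff (by nlinarith [hlam, sq_nonneg μ] : ((d:ℝ)-1) * b ≠ 0) hb0.ne']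
    ring
  have TG2 : Tendsto (fun R : ℝ => ((lam * ω₀ * r₀ ^ a / R ^ b
      + (b * μ ^ 2) * ((∫ ρ in r₀..R, ρ ^ (b - 3)) / R ^ b))
      + (b * (μ ^ 2 / L ^ 2)) *
          ((∫ ρ in r₀..R, ρ ^ (b - 1) * (Real.log ρ - Real.log R) ^ 0) / R ^ b))
      + ∑ n ∈ Finset.Icc 2 N, (2 * b * g n * μ ^ n) *
          ((∫ ρ in r₀..R, ρ ^ (b - 1) * (Real.log ρ - Real.log R) ^ n) / R ^ b))
      atTop (nhds (μ ^ 2 / L ^ 2 + 2 * ∑ n ∈ Finset.Icc 2 N,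
      (n.factorial : ℝ) * g n *
        ((1 - (d : ℝ)) * μ / ((d : ℝ) * ((d : ℝ) - 1) + μ ^ 2)) ^ n)) := by
    convert TG using 2
    rw [hx, Finset.mul_sum]
    simp only [pow_zero, Nat.factorial_zero, Nat.cast_one, zero_add, mul_zero, one_mul,
      add_zero]
    congr 1
    · field_simp
    · apply Finset.sum_congr rfl
      intro n _
      rw [neg_div, neg_pow, div_pow]
      field_simp [pow_succ]
      ring
  refine Tendsto.congr' ?_ TG2
  filter_upwards [eventually_ge_atTop r₀, eventually_gt_atTop 0] with R hR hR0
  have hRb0 : (0:ℝ) < R ^ b := Real.rpow_pos_of_pos hR0 b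
  rw [hωinf R]
  have key : r₀ ^ a * (∫ ρ in r₀..R, (ρ / r₀) ^ a * ρ ^ (d - 1) *
        ((1 + ρ ^ 2 / L ^ 2) * μ ^ 2 / ρ ^ 2 + 2 * V (μ * Real.log (ρ / R))))
      = μ ^ 2 * (∫ ρ in r₀..R, ρ ^ (b - 3))
        + ((μ ^ 2 / L ^ 2) * (∫ ρ in r₀..R, ρ ^ (b - 1) * (Real.log ρ - Real.log R) ^ 0)
          + ∑ n ∈ Finset.Icc 2 N, (2 * g n * μ ^ n) *
              (∫ ρ in r₀..R, ρ ^ (b - 1) * (Real.log ρ - Real.log R) ^ n)) := by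
    have hint3 : ∀ n ∈ Finset.Icc 2 N, IntervalIntegrable
        (fun ρ : ℝ => (2 * g n * μ ^ n) * (ρ ^ (b - 1) * (Real.log ρ - Real.log R) ^ n))
        volume r₀ R :=
      fun n _ => (integrable_aux (b - 1) (Real.log R) n hr₀ hR).const_mul _
    have hint1 : IntervalIntegrable (fun ρ : ℝ => μ ^ 2 * ρ ^ (b - 3)) volume r₀ R := by
      simpa using (integrable_aux (b - 3) 0 0 hr₀ hR).const_mul (μ ^ 2)
    have hint2 : IntervalIntegrable
        (fun ρ : ℝ => (μ ^ 2 / L ^ 2) * (ρ ^ (b - 1) * (Real.log ρ - Real.log R) ^ 0))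
        volume r₀ R :=
      (integrable_aux (b - 1) (Real.log R) 0 hr₀ hR).const_mul _
    have hint3' : IntervalIntegrable (fun ρ : ℝ => ∑ n ∈ Finset.Icc 2 N,
        (2 * g n * μ ^ n) * (ρ ^ (b - 1) * (Real.log ρ - Real.log R) ^ n)) volume r₀ R := by
      have h := IntervalIntegrable.sum (Finset.Icc 2 N) hint3
      simpa only [Finset.sum_fn] using h
    rw [← intervalIntegral.integral_const_mul]
    rw [intervalIntegral.integral_congr (g := fun ρ : ℝ =>
      μ ^ 2 * ρ ^ (b - 3) + ((μ ^ 2 / L ^ 2) * (ρ ^ (b - 1) * (Real.log ρ - Real.log R) ^ 0)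
        + ∑ n ∈ Finset.Icc 2 N, (2 * g n * μ ^ n) *
            (ρ ^ (b - 1) * (Real.log ρ - Real.log R) ^ n)))]
    · rw [intervalIntegral.integral_add hint1 (hint2.add hint3'),
        intervalIntegral.integral_add hint2 hint3',
        intervalIntegral.integral_finset_sum hint3]
      simp only [intervalIntegral.integral_const_mul]
    · intro ρ hρmem
      rw [Set.uIcc_of_le hR] at hρmem
      have hρ0 : 0 < ρ := lt_of_lt_of_le hr₀ hρmem.1
      have hdiv : (ρ / r₀) ^ a = ρ ^ a / r₀ ^ a := Real.div_rpow hρ0.le hr₀.le a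
      have hpd : (ρ:ℝ) ^ (d - 1) = ρ ^ ((d:ℝ) - 1) := by
        rw [← Real.rpow_natCast ρ (d - 1)]
        congr 1
        rw [Nat.cast_sub (by omega : 1 ≤ d), Nat.cast_one]
      have hmul : ρ ^ a * ρ ^ ((d:ℝ) - 1) = ρ ^ (b - 1) := by
        rw [← Real.rpow_add hρ0]; congr 1; rw [hb_def]; ring
      have hsplit : ρ ^ (b - 1) = ρ ^ (b - 3) * ρ ^ 2 := by
        rw [← Real.rpow_natCast ρ 2, ← Real.rpow_add hρ0]; congr 1; push_cast; ring
      have hlog : Real.log (ρ / R) = Real.log ρ - Real.log R :=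
        Real.log_div hρ0.ne' hR0.ne'
      have hra : r₀ ^ a ≠ 0 := (Real.rpow_pos_of_pos hr₀ a).ne'
      simp only [hV, hlog]
      have hsum : ρ ^ (b - 1) * (2 * ∑ n ∈ Finset.Icc 2 N,
            g n * (μ * (Real.log ρ - Real.log R)) ^ n)
          = ∑ n ∈ Finset.Icc 2 N, (2 * g n * μ ^ n) *
              (ρ ^ (b - 1) * (Real.log ρ - Real.log R) ^ n) := by
        simp only [Finset.mul_sum]
        apply Finset.sum_congr rfl
        intro n _
        rw [mul_pow]
        ring
      have hA : ρ ^ (b - 1) * ((1 + ρ ^ 2 / L ^ 2) * μ ^ 2 / ρ ^ 2)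
          = μ ^ 2 * ρ ^ (b - 3)
            + (μ ^ 2 / L ^ 2) * (ρ ^ (b - 1) * (Real.log ρ - Real.log R) ^ 0) := by
        rw [pow_zero, mul_one, hsplit]
        field_simp
      calc r₀ ^ a * ((ρ / r₀) ^ a * ρ ^ (d - 1) *
            ((1 + ρ ^ 2 / L ^ 2) * μ ^ 2 / ρ ^ 2
              + 2 * ∑ n ∈ Finset.Icc 2 N, g n * (μ * (Real.log ρ - Real.log R)) ^ n))
          = ρ ^ (b - 1) * ((1 + ρ ^ 2 / L ^ 2) * μ ^ 2 / ρ ^ 2)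
            + ρ ^ (b - 1) * (2 * ∑ n ∈ Finset.Icc 2 N,
                g n * (μ * (Real.log ρ - Real.log R)) ^ n) := by
            rw [hdiv, hpd, ← hmul]; field_simp
        _ = _ := by rw [hsum, hA]; ring
  have hRfrac : (R / r₀) ^ (-a) / R ^ d = r₀ ^ a / R ^ b := by
    rw [Real.rpow_neg (div_nonneg hR0.le hr₀.le), Real.div_rpow hR0.le hr₀.le, inv_div,
      div_div, ← Real.rpow_natCast R d, ← Real.rpow_add hR0]
  have hS : ∑ n ∈ Finset.Icc 2 N, (2 * b * g n * μ ^ n) *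
        ((∫ ρ in r₀..R, ρ ^ (b - 1) * (Real.log ρ - Real.log R) ^ n) / R ^ b)
      = b * ((∑ n ∈ Finset.Icc 2 N, (2 * g n * μ ^ n) *
          (∫ ρ in r₀..R, ρ ^ (b - 1) * (Real.log ρ - Real.log R) ^ n)) / R ^ b) := by
    rw [Finset.sum_div, Finset.mul_sum]
    apply Finset.sum_congr rfl
    intros
    ring
  rw [hS]
  symm
  calc lam * ((R / r₀) ^ (-a) * (ω₀ + 1 / ((d:ℝ) - 1) *
        ∫ ρ in r₀..R, (ρ / r₀) ^ a * ρ ^ (d - 1) *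
          ((1 + ρ ^ 2 / L ^ 2) * μ ^ 2 / ρ ^ 2 + 2 * V (μ * Real.log (ρ / R))))) / R ^ d
      = lam * (ω₀ + 1 / ((d:ℝ) - 1) *
          ∫ ρ in r₀..R, (ρ / r₀) ^ a * ρ ^ (d - 1) *
            ((1 + ρ ^ 2 / L ^ 2) * μ ^ 2 / ρ ^ 2 + 2 * V (μ * Real.log (ρ / R))))
          * ((R / r₀) ^ (-a) / R ^ d) := by ring
    _ = lam * (ω₀ + 1 / ((d:ℝ) - 1) *
          ∫ ρ in r₀..R, (ρ / r₀) ^ a * ρ ^ (d - 1) *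
            ((1 + ρ ^ 2 / L ^ 2) * μ ^ 2 / ρ ^ 2 + 2 * V (μ * Real.log (ρ / R))))
          * (r₀ ^ a / R ^ b) := by rw [hRfrac]
    _ = lam * ω₀ * r₀ ^ a / R ^ b
        + b * ((r₀ ^ a * ∫ ρ in r₀..R, (ρ / r₀) ^ a * ρ ^ (d - 1) *
            ((1 + ρ ^ 2 / L ^ 2) * μ ^ 2 / ρ ^ 2 + 2 * V (μ * Real.log (ρ / R)))) / R ^ b) := by
          rw [hlam']
          generalize (∫ ρ in r₀..R, (ρ / r₀) ^ a * ρ ^ (d - 1) *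
            ((1 + ρ ^ 2 / L ^ 2) * μ ^ 2 / ρ ^ 2 + 2 * V (μ * Real.log (ρ / R)))) = I
          field_simp
    _ = _ := by rw [key]; ring
end

section
/- Let d ≥ 2 be an integer, L > 0, r₀ > 0, N ≥ 2 an integer, and let g₂, …, g_N be real couplings such that for some μ ∈ ℝ one has μ²/L² + 2 Σ_{n=2}^{N} n!·g_n·[ (1−d)μ / (d(d−1)+μ²) ]ⁿ < 0. Set ω₀ = r₀^{d−2} + r₀^{d}/L². Then there exists R₀* > r₀ such that for all R₀ > R₀*, the quantity ω_{R₀}(∞) = (R₀/r₀)^{−μ²/(d−1)} [ ω₀ + (1/(d−1)) ∫_{r₀}^{R₀} (ρ/r₀)^{μ²/(d−1)} ρ^{d−1} ( (1 + ρ²/L²)·μ²/ρ² + 2 Σ_{n=2}^{N} g_n (μ log(ρ/R₀))ⁿ ) dρ ] is strictly negative. -/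
open Real Filter

noncomputable def Pp (γ : ℝ) : ℕ → ℝ → ℝ
  | 0 => fun _ => 1 / γ
  | (n+1) => fun x => (x ^ (n+1) - (n+1 : ℝ) * Pp γ n x) / γ

lemma Pp_hasDerivAt (γ : ℝ) (hγ : γ ≠ 0) (n : ℕ) (x : ℝ) :
    HasDerivAt (Pp γ n) (x ^ n - γ * Pp γ n x) x := by
  induction n generalizing x with
  | zero =>
      have : (x : ℝ) ^ 0 - γ * Pp γ 0 x = 0 := by
        simp [Pp]; field_simp; ring
      rw [this]
      exact hasDerivAt_const x (1 / γ)
  | succ n ih =>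
      have h1 : HasDerivAt (fun y : ℝ => (y ^ (n+1) - (n+1 : ℝ) * Pp γ n y) / γ)
          ((((n:ℝ)+1) * x ^ n - (n+1 : ℝ) * (x ^ n - γ * Pp γ n x)) / γ) x := by
        have := (((hasDerivAt_pow (n+1) x).sub ((ih x).const_mul ((n:ℝ)+1))).div_const γ)
        simpa using this
      have h2 : ((((n:ℝ)+1) * x ^ n - (n+1 : ℝ) * (x ^ n - γ * Pp γ n x)) / γ)
          = x ^ (n+1) - γ * Pp γ (n+1) x := by
        simp only [Pp]
        field_simp
        ring
      rw [h2] at h1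
      exact h1.congr_deriv rfl

lemma Pp_zero_val (γ : ℝ) (n : ℕ) :
    Pp γ n 0 = (-1) ^ n * n.factorial / γ ^ (n+1) := by
  induction n with
  | zero => simp [Pp]
  | succ n ih =>
      simp only [Pp, ih, Nat.factorial_succ]
      rw [zero_pow (by omega)]
      push_cast
      ring

lemma Pp_continuous (γ : ℝ) (n : ℕ) : Continuous (Pp γ n) := by
  induction n with
  | zero => exact continuous_const
  | succ n ih => exact (((continuous_pow (n+1)).sub (continuous_const.mul ih)).div_const γ)

lemma tendsto_log_pow_div_rpow (γ : ℝ) (hγ : 0 < γ) (k : ℕ) :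
    Tendsto (fun x : ℝ => (Real.log x) ^ k / x ^ γ) atTop (nhds 0) := by
  have h := isLittleO_log_rpow_rpow_atTop (k : ℝ) hγ
  have h2 : (fun x : ℝ => (Real.log x) ^ k) =o[atTop] fun x => x ^ γ := by
    refine h.congr' ?_ EventuallyEq.rfl
    filter_upwards [tendsto_log_atTop.eventually_ge_atTop 1] with x hx
    rw [rpow_natCast]
  exact h2.tendsto_div_nhds_zero

lemma tendsto_const_sub_log_pow_div_rpow (γ : ℝ) (hγ : 0 < γ) (c : ℝ) (k : ℕ) :
    Tendsto (fun x : ℝ => (c - Real.log x) ^ k / x ^ γ) atTop (nhds 0) := by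
  have : ∀ x : ℝ, (c - Real.log x) ^ k / x ^ γ
      = ∑ m ∈ Finset.range (k + 1), (c ^ m * (-1) ^ (k - m) * (k.choose m : ℝ))
          * ((Real.log x) ^ (k - m) / x ^ γ) := by
    intro x
    rw [eq_comm]
    have hsum : ∀ (m : ℕ), c ^ m * (-1) ^ (k - m) * (k.choose m : ℝ) * (Real.log x ^ (k - m) / x ^ γ)
        = (c ^ m * (-1) ^ (k - m) * (k.choose m : ℝ) * Real.log x ^ (k - m)) / x ^ γ := fun m => by ring
    simp only [hsum]
    rw [← Finset.sum_div]
    congr 1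
    rw [eq_comm]
    have : (c - Real.log x) ^ k = (c + (- Real.log x)) ^ k := by ring_nf
    rw [this, add_pow]
    refine Finset.sum_congr rfl fun m hm => ?_
    rw [neg_pow]
    ring
  simp only [this]
  have h0 : (0:ℝ) = ∑ m ∈ Finset.range (k + 1), (c ^ m * (-1) ^ (k - m) * (k.choose m : ℝ)) * 0 := by
    simp
  rw [h0]
  exact tendsto_finset_sum _ fun m _ =>
    ((tendsto_log_pow_div_rpow γ hγ (k - m)).const_mul _)

lemma tendsto_Pp_div_rpow (γ : ℝ) (hγ : 0 < γ) (c : ℝ) (n : ℕ) :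
    Tendsto (fun x : ℝ => Pp γ n (c - Real.log x) / x ^ γ) atTop (nhds 0) := by
  induction n with
  | zero =>
      simp only [Pp]
      have := (tendsto_rpow_atTop hγ).inv_tendsto_atTop
      have h2 : Tendsto (fun x : ℝ => (1/γ) * (x ^ γ)⁻¹) atTop (nhds ((1/γ) * 0)) :=
        this.const_mul _
      simpa [div_eq_mul_inv] using h2
  | succ n ih =>
      simp only [Pp]
      have h1 : Tendsto (fun x : ℝ =>
          ((c - Real.log x) ^ (n+1) / x ^ γ - ((n:ℝ)+1) * (Pp γ n (c - Real.log x) / x ^ γ)) / γ)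
          atTop (nhds ((0 - ((n:ℝ)+1) * 0) / γ)) :=
        ((tendsto_const_sub_log_pow_div_rpow γ hγ c (n+1)).sub (ih.const_mul _)).div_const γ
      simp only [mul_zero, sub_zero, zero_div] at h1
      refine h1.congr fun x => ?_
      push_cast
      ring

noncomputable def Fant (γ L μ : ℝ) (N : ℕ) (g : ℕ → ℝ) (R₀ ρ : ℝ) : ℝ :=
  μ^2 * ρ^(γ-2)/(γ-2) + μ^2/L^2 * ρ^γ/γ +
    2*∑ n ∈ Finset.Icc 2 N, g n * μ^n * (ρ^γ * Pp γ n (Real.log ρ - Real.log R₀))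

lemma Fant_hasDerivAt (γ L μ : ℝ) (N : ℕ) (g : ℕ → ℝ) (R₀ ρ : ℝ) (hρ : 0 < ρ)
    (hγ : γ ≠ 0) (hγ2 : γ ≠ 2) :
    HasDerivAt (Fant γ L μ N g R₀)
      (μ^2 * ρ^(γ-3) + μ^2/L^2 * ρ^(γ-1) +
        2*∑ n ∈ Finset.Icc 2 N, g n * μ^n * (ρ^(γ-1) * (Real.log ρ - Real.log R₀)^n)) ρ := by
  have hkey : ρ^γ * ρ⁻¹ = ρ^(γ-1) := by
    rw [Real.rpow_sub_one hρ.ne', div_eq_mul_inv]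
  -- term 1
  have h1 : HasDerivAt (fun x : ℝ => μ^2 * x^(γ-2)/(γ-2)) (μ^2 * ρ^(γ-3)) ρ := by
    have h := ((Real.hasDerivAt_rpow_const (p := γ-2) (Or.inl hρ.ne')).const_mul (μ^2)).div_const (γ-2)
    have he : γ - 2 - 1 = γ - 3 := by ring
    rw [he] at h
    refine h.congr_deriv ?_
    have : γ - 2 ≠ 0 := sub_ne_zero.mpr hγ2
    field_simp
  -- term 2
  have h2 : HasDerivAt (fun x : ℝ => μ^2/L^2 * x^γ/γ) (μ^2/L^2 * ρ^(γ-1)) ρ := by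
    have h := ((Real.hasDerivAt_rpow_const (p := γ) (Or.inl hρ.ne')).const_mul (μ^2/L^2)).div_const γ
    refine h.congr_deriv ?_
    rw [mul_comm γ (ρ^(γ-1)), ← mul_assoc, mul_div_assoc, div_self hγ, mul_one]
  -- term 3
  have h3 : HasDerivAt (fun x : ℝ =>
      2*∑ n ∈ Finset.Icc 2 N, g n * μ^n * (x^γ * Pp γ n (Real.log x - Real.log R₀)))
      (2*∑ n ∈ Finset.Icc 2 N, g n * μ^n * (ρ^(γ-1) * (Real.log ρ - Real.log R₀)^n)) ρ := by
    refine HasDerivAt.const_mul 2 (HasDerivAt.fun_sum fun n _ => ?_)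
    have hlog : HasDerivAt (fun x : ℝ => Real.log x - Real.log R₀) ρ⁻¹ ρ :=
      (Real.hasDerivAt_log hρ.ne').sub_const _
    have hP : HasDerivAt (fun x : ℝ => Pp γ n (Real.log x - Real.log R₀))
        (((Real.log ρ - Real.log R₀)^n - γ * Pp γ n (Real.log ρ - Real.log R₀)) * ρ⁻¹) ρ :=
      (Pp_hasDerivAt γ hγ n (Real.log ρ - Real.log R₀)).comp ρ hlog
    have hr : HasDerivAt (fun x : ℝ => x^γ) (γ * ρ^(γ-1)) ρ :=
      Real.hasDerivAt_rpow_const (Or.inl hρ.ne')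
    have hmul := (hr.mul hP).const_mul (g n * μ^n)
    refine hmul.congr_deriv ?_
    rw [← hkey]
    ring
  exact (h1.add h2).add h3

set_option maxHeartbeats 1000000 in
theorem analytic_sufficient_condition_for_negative_mass
    (d : ℕ) (hd : 2 ≤ d) (L r₀ : ℝ) (hL : 0 < L) (hr₀ : 0 < r₀)
    (N : ℕ) (hN : 2 ≤ N) (g : ℕ → ℝ) (μ : ℝ)
    (hneg : μ ^ 2 / L ^ 2 + 2 * ∑ n ∈ Finset.Icc 2 N,
      (n.factorial : ℝ) * g n *
        ((1 - (d : ℝ)) * μ / ((d : ℝ) * ((d : ℝ) - 1) + μ ^ 2)) ^ n < 0)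
    (ω₀ : ℝ) (hω₀ : ω₀ = r₀ ^ (d - 2) + r₀ ^ d / L ^ 2)
    (ωinf : ℝ → ℝ)
    (hωinf : ∀ R₀, ωinf R₀ = (R₀ / r₀) ^ (-(μ ^ 2 / ((d : ℝ) - 1))) *
      (ω₀ + (1 / ((d : ℝ) - 1)) * ∫ ρ in r₀..R₀,
        (ρ / r₀) ^ (μ ^ 2 / ((d : ℝ) - 1)) * ρ ^ (d - 1) *
          ((1 + ρ ^ 2 / L ^ 2) * μ ^ 2 / ρ ^ 2 +
            2 * ∑ n ∈ Finset.Icc 2 N, g n * (μ * Real.log (ρ / R₀)) ^ n))) :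
    ∃ R₀star > r₀, ∀ R₀ > R₀star, ωinf R₀ < 0 := by
  have hd' : (2:ℝ) ≤ (d:ℝ) := by exact_mod_cast hd
  have hdm1 : (0:ℝ) < (d:ℝ) - 1 := by linarith
  have hμ : μ ≠ 0 := by
    intro h
    rw [h] at hneg
    have hz : ∑ n ∈ Finset.Icc 2 N, (n.factorial:ℝ) * g n *
        ((1-(d:ℝ))*0/((d:ℝ)*((d:ℝ)-1)+0^2))^n = 0 :=
      Finset.sum_eq_zero fun n hn => by
        have h2n : 2 ≤ n := (Finset.mem_Icc.mp hn).1
        rw [mul_zero, zero_div, zero_pow (by omega), mul_zero]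
    rw [hz] at hneg; norm_num at hneg
  set α : ℝ := μ^2/((d:ℝ)-1) with hα_def
  have hαpos : 0 < α := div_pos (by positivity) hdm1
  set γ : ℝ := α + (d:ℝ) with hγ_def
  have hγ2 : 2 < γ := by rw [hγ_def]; linarith
  have hγpos : 0 < γ := by linarith
  have hγne : γ ≠ 0 := hγpos.ne'
  have hγne2 : γ ≠ 2 := hγ2.ne'
  have hγm2 : γ - 2 ≠ 0 := sub_ne_zero.mpr hγne2
  have hden : (0:ℝ) < (d:ℝ)*((d:ℝ)-1)+μ^2 := by nlinarith [sq_nonneg μ]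
  have hgd : ((d:ℝ)-1) * γ = (d:ℝ)*((d:ℝ)-1)+μ^2 := by
    rw [hγ_def, hα_def]; field_simp; ring
  have hbase : (1-(d:ℝ))*μ/((d:ℝ)*((d:ℝ)-1)+μ^2) = -μ/γ := by
    rw [← hgd]; field_simp; ring
  rw [show ((1 - (d : ℝ)) * μ / ((d : ℝ) * ((d : ℝ) - 1) + μ ^ 2)) = -μ/γ from hbase] at hneg
  set c : ℝ := μ ^ 2 / L ^ 2 + 2 * ∑ n ∈ Finset.Icc 2 N,
      (n.factorial : ℝ) * g n * (-μ/γ) ^ n with hc_def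
  have hcneg : c < 0 := hneg
  -- FTC step
  have hFTC : ∀ R₀, r₀ < R₀ →
      (∫ ρ in r₀..R₀, (ρ / r₀) ^ α * ρ ^ (d - 1) *
          ((1 + ρ ^ 2 / L ^ 2) * μ ^ 2 / ρ ^ 2 +
            2 * ∑ n ∈ Finset.Icc 2 N, g n * (μ * Real.log (ρ / R₀)) ^ n))
        = r₀ ^ (-α) * (Fant γ L μ N g R₀ R₀ - Fant γ L μ N g R₀ r₀) := by
    intro R₀ hR
    have hR₀pos : 0 < R₀ := hr₀.trans hR
    have huIcc : Set.uIcc r₀ R₀ = Set.Icc r₀ R₀ := Set.uIcc_of_le hR.le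
    have hpt : ∀ ρ ∈ Set.uIcc r₀ R₀,
        (ρ / r₀) ^ α * ρ ^ (d - 1) *
          ((1 + ρ ^ 2 / L ^ 2) * μ ^ 2 / ρ ^ 2 +
            2 * ∑ n ∈ Finset.Icc 2 N, g n * (μ * Real.log (ρ / R₀)) ^ n)
        = r₀ ^ (-α) * (μ^2 * ρ^(γ-3) + μ^2/L^2 * ρ^(γ-1) +
            2*∑ n ∈ Finset.Icc 2 N, g n * μ^n *
              (ρ^(γ-1) * (Real.log ρ - Real.log R₀)^n)) := by
      intro ρ hmem
      rw [huIcc] at hmem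
      have hρ : 0 < ρ := lt_of_lt_of_le hr₀ hmem.1
      have e1 : (ρ / r₀) ^ α = r₀^(-α) * ρ^α := by
        rw [Real.div_rpow hρ.le hr₀.le, Real.rpow_neg hr₀.le]; ring
      have e2 : (ρ:ℝ) ^ (d - 1) = ρ ^ ((d:ℝ) - 1) := by
        rw [← Real.rpow_natCast ρ (d-1)]
        congr 1
        rw [Nat.cast_sub (by omega : 1 ≤ d)]; norm_num
      have e3 : ρ^α * ρ^((d:ℝ)-1) = ρ^(γ-1) := by
        rw [← Real.rpow_add hρ]; congr 1; rw [hγ_def]; ring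
      have e4 : ρ^(γ-3) = ρ^(γ-1) / ρ^2 := by
        rw [show (ρ:ℝ)^2 = ρ^(2:ℝ) by rw [← Real.rpow_natCast ρ 2]; norm_num,
          ← Real.rpow_sub hρ]
        congr 1; ring
      have e5 : ∀ n : ℕ, (μ * Real.log (ρ/R₀))^n = μ^n * (Real.log ρ - Real.log R₀)^n := by
        intro n; rw [Real.log_div hρ.ne' hR₀pos.ne', mul_pow]
      have hS : ∑ n ∈ Finset.Icc 2 N, g n * μ^n *
            (ρ^(γ-1) * (Real.log ρ - Real.log R₀)^n)
          = ρ^(γ-1) * ∑ n ∈ Finset.Icc 2 N,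
              g n * (μ^n * (Real.log ρ - Real.log R₀)^n) := by
        rw [Finset.mul_sum]; exact Finset.sum_congr rfl fun n _ => by ring
      simp only [e5]
      rw [e1, e2, mul_assoc (r₀^(-α)), e3, e4, hS]
      set A := ρ^(γ-1) with hA_def
      set S := ∑ n ∈ Finset.Icc 2 N, g n * (μ^n * (Real.log ρ - Real.log R₀)^n) with hS_def
      field_simp
    have hderiv : ∀ ρ ∈ Set.uIcc r₀ R₀,
        HasDerivAt (fun ρ => r₀^(-α) * Fant γ L μ N g R₀ ρ)
          ((ρ / r₀) ^ α * ρ ^ (d - 1) *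
            ((1 + ρ ^ 2 / L ^ 2) * μ ^ 2 / ρ ^ 2 +
              2 * ∑ n ∈ Finset.Icc 2 N, g n * (μ * Real.log (ρ / R₀)) ^ n)) ρ := by
      intro ρ hmem
      have hρ : 0 < ρ := by
        rw [huIcc] at hmem; exact lt_of_lt_of_le hr₀ hmem.1
      rw [hpt ρ hmem]
      exact (Fant_hasDerivAt γ L μ N g R₀ ρ hρ hγne hγne2).const_mul _
    have hint : IntervalIntegrable (fun ρ => (ρ / r₀) ^ α * ρ ^ (d - 1) *
          ((1 + ρ ^ 2 / L ^ 2) * μ ^ 2 / ρ ^ 2 +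
            2 * ∑ n ∈ Finset.Icc 2 N, g n * (μ * Real.log (ρ / R₀)) ^ n))
        MeasureTheory.volume r₀ R₀ := by
      apply ContinuousOn.intervalIntegrable
      rw [huIcc]
      have hne : ∀ x ∈ Set.Icc r₀ R₀, x ≠ 0 :=
        fun x hx => (lt_of_lt_of_le hr₀ hx.1).ne'
      have c1 : ContinuousOn (fun ρ : ℝ => (ρ/r₀)^α) (Set.Icc r₀ R₀) := by
        apply ContinuousOn.rpow_const (continuousOn_id.div_const r₀)
        intro x hx
        exact Or.inl (div_ne_zero (hne x hx) hr₀.ne')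
      have c2 : ContinuousOn (fun ρ : ℝ => (ρ:ℝ) ^ (d-1)) (Set.Icc r₀ R₀) :=
        (continuous_pow (d-1)).continuousOn
      have c3 : ContinuousOn (fun ρ : ℝ => (1 + ρ^2/L^2)*μ^2/ρ^2) (Set.Icc r₀ R₀) := by
        apply ContinuousOn.div
        · fun_prop
        · exact (continuous_pow 2).continuousOn
        · intro x hx; exact pow_ne_zero 2 (hne x hx)
      have c4 : ContinuousOn (fun ρ : ℝ =>
          2 * ∑ n ∈ Finset.Icc 2 N, g n * (μ * Real.log (ρ / R₀)) ^ n) (Set.Icc r₀ R₀) := by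
        apply ContinuousOn.mul continuousOn_const
        apply continuousOn_finset_sum
        intro n _
        apply ContinuousOn.mul continuousOn_const
        apply ContinuousOn.pow
        apply ContinuousOn.mul continuousOn_const
        apply ContinuousOn.log (continuousOn_id.div_const R₀)
        intro x hx
        exact div_ne_zero (hne x hx) hR₀pos.ne'
      exact (c1.mul c2).mul (c3.add c4)
    have := intervalIntegral.integral_eq_sub_of_hasDerivAt hderiv hint
    rw [this]; ring
  -- constants
  set CK : ℝ := ∑ n ∈ Finset.Icc 2 N, g n * μ^n * Pp γ n 0 with hCK_def
  have hterm : ∀ n : ℕ, g n * μ^n * Pp γ n 0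
      = ((n.factorial:ℝ) * g n * (-μ/γ)^n)/γ := by
    intro n
    rw [Pp_zero_val, div_pow, neg_pow]
    field_simp
    ring
  have hCKc : μ^2/L^2/γ + 2*CK = c/γ := by
    rw [hCK_def, hc_def]
    simp only [hterm]
    rw [← Finset.sum_div]
    field_simp
  -- limits
  have T0 : ∀ b : ℝ, Filter.Tendsto (fun x:ℝ => b/x^γ) Filter.atTop (nhds 0) := by
    intro b
    have := (tendsto_rpow_atTop hγpos).inv_tendsto_atTop.const_mul b
    simpa [div_eq_mul_inv] using this
  have T1 : Filter.Tendsto (fun x:ℝ => x^(γ-2)/x^γ) Filter.atTop (nhds 0) := by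
    have h := tendsto_rpow_neg_atTop (show (0:ℝ) < 2 by norm_num)
    refine h.congr' ?_
    filter_upwards [Filter.eventually_gt_atTop (0:ℝ)] with x hx
    rw [show -(2:ℝ) = (γ-2) - γ by ring, Real.rpow_sub hx]
  have Tsum0 : Filter.Tendsto (fun x:ℝ => ∑ n ∈ Finset.Icc 2 N,
      g n * μ^n * r₀^γ * (Pp γ n (Real.log r₀ - Real.log x)/x^γ))
      Filter.atTop (nhds 0) := by
    have := tendsto_finset_sum (Finset.Icc 2 N)
      (fun n _ => ((tendsto_Pp_div_rpow γ hγpos (Real.log r₀) n).const_mul (g n * μ^n * r₀^γ)))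
    simpa using this
  have TB := ((((T1.const_mul (μ^2/(γ-2))).add_const (μ^2/L^2/γ + 2*CK)).sub
      (T0 (μ^2*r₀^(γ-2)/(γ-2) + μ^2/L^2*r₀^γ/γ))).sub (Tsum0.const_mul 2))
  have Tall := (T0 ω₀).add (TB.const_mul ((1/((d:ℝ)-1))*r₀^(-α)))
  -- identification of the rescaled function
  have hGeq : ∀ x:ℝ, 0 < x →
      (ω₀ + 1/((d:ℝ)-1) * (r₀^(-α) * (Fant γ L μ N g x x - Fant γ L μ N g x r₀))) / x^γ
      = ω₀/x^γ + (1/((d:ℝ)-1))*r₀^(-α) *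
          ((μ^2/(γ-2))*(x^(γ-2)/x^γ) + (μ^2/L^2/γ + 2*CK)
            - (μ^2*r₀^(γ-2)/(γ-2) + μ^2/L^2*r₀^γ/γ)/x^γ
            - 2*∑ n ∈ Finset.Icc 2 N,
                g n * μ^n * r₀^γ * (Pp γ n (Real.log r₀ - Real.log x)/x^γ)) := by
    intro x hx
    have hxγ : (0:ℝ) < x^γ := Real.rpow_pos_of_pos hx γ
    simp only [Fant, sub_self]
    rw [hCK_def]
    have hsum1 : ∑ n ∈ Finset.Icc 2 N, g n * μ^n * (x^γ * Pp γ n 0)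
        = x^γ * ∑ n ∈ Finset.Icc 2 N, g n * μ^n * Pp γ n 0 := by
      rw [Finset.mul_sum]; exact Finset.sum_congr rfl fun n _ => by ring
    have hsum2 : ∑ n ∈ Finset.Icc 2 N, g n * μ^n *
          (r₀^γ * Pp γ n (Real.log r₀ - Real.log x))
        = x^γ * ∑ n ∈ Finset.Icc 2 N, g n * μ^n * r₀^γ *
            (Pp γ n (Real.log r₀ - Real.log x)/x^γ) := by
      rw [Finset.mul_sum]
      refine Finset.sum_congr rfl fun n _ => ?_
      field_simp
    rw [hsum1, hsum2]
    set S1 := ∑ n ∈ Finset.Icc 2 N, g n * μ^n * Pp γ n 0 with hS1_def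
    set S2 := ∑ n ∈ Finset.Icc 2 N, g n * μ^n * r₀^γ *
        (Pp γ n (Real.log r₀ - Real.log x)/x^γ) with hS2_def
    set X := x^γ with hX_def
    set Y := x^(γ-2) with hY_def
    field_simp
    ring
  have hGlim : Filter.Tendsto (fun x:ℝ =>
      (ω₀ + 1/((d:ℝ)-1) * (r₀^(-α) * (Fant γ L μ N g x x - Fant γ L μ N g x r₀))) / x^γ)
      Filter.atTop (nhds (r₀^(-α) * c / (γ * ((d:ℝ)-1)))) := by
    have heq : (fun x:ℝ => ω₀/x^γ + (1/((d:ℝ)-1))*r₀^(-α) *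
          ((μ^2/(γ-2))*(x^(γ-2)/x^γ) + (μ^2/L^2/γ + 2*CK)
            - (μ^2*r₀^(γ-2)/(γ-2) + μ^2/L^2*r₀^γ/γ)/x^γ
            - 2*∑ n ∈ Finset.Icc 2 N,
                g n * μ^n * r₀^γ * (Pp γ n (Real.log r₀ - Real.log x)/x^γ)))
        =ᶠ[Filter.atTop] (fun x:ℝ =>
          (ω₀ + 1/((d:ℝ)-1) * (r₀^(-α) * (Fant γ L μ N g x x - Fant γ L μ N g x r₀))) / x^γ) := by
      filter_upwards [Filter.eventually_gt_atTop (0:ℝ)] with x hx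
      exact (hGeq x hx).symm
    have h2 := Tall.congr' heq
    have hlimeq : (0:ℝ) + (1/((d:ℝ)-1))*r₀^(-α) *
        ((μ^2/(γ-2))*0 + (μ^2/L^2/γ + 2*CK) - 0 - 2*0)
        = r₀^(-α) * c / (γ * ((d:ℝ)-1)) := by
      rw [show (μ^2/(γ-2))*0 + (μ^2/L^2/γ + 2*CK) - 0 - 2*0 = μ^2/L^2/γ + 2*CK by ring,
        hCKc]
      field_simp
      ring
    rw [hlimeq] at h2
    exact h2
  have hKneg : r₀^(-α) * c / (γ * ((d:ℝ)-1)) < 0 :=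
    div_neg_of_neg_of_pos
      (mul_neg_of_pos_of_neg (Real.rpow_pos_of_pos hr₀ _) hcneg)
      (mul_pos hγpos hdm1)
  have hev : ∀ᶠ x in Filter.atTop,
      ω₀ + 1/((d:ℝ)-1) * (r₀^(-α) * (Fant γ L μ N g x x - Fant γ L μ N g x r₀)) < 0 := by
    have h1 := hGlim.eventually_lt_const hKneg
    filter_upwards [h1, Filter.eventually_gt_atTop (0:ℝ)] with x hx hx0
    have hp : 0 < x^γ := Real.rpow_pos_of_pos hx0 γ
    rcases div_neg_iff.mp hx with ⟨_, h⟩ | ⟨h, _⟩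
    · linarith
    · exact h
  obtain ⟨a, ha⟩ := Filter.eventually_atTop.mp hev
  refine ⟨max a r₀ + 1, by have := le_max_right a r₀; linarith, ?_⟩
  intro R₀ hR₀
  have hRr : r₀ < R₀ := by have := le_max_right a r₀; linarith
  have hA := ha R₀ (by have := le_max_left a r₀; linarith)
  rw [hωinf R₀, hFTC R₀ hRr]
  exact mul_neg_of_pos_of_neg
    (Real.rpow_pos_of_pos (div_pos (hr₀.trans hRr) hr₀) _) hA
end

section
/- Let V(φ) = −(9/16)φ² + 9φ³ + 11φ⁴. There is no differentiable function W : ℝ → ℝ with W′(0) = 0 such that V(φ) = 3 + 2·W′(φ)² − 3·W(φ)² for all φ ∈ ℝ. -/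
set_option maxHeartbeats 2000000

noncomputable section SuperpotentialAux

private def polM : ℝ → ℝ := fun t => 1 + (3/16)*t^2 + 3*t^3 - (11/3)*t^4

private def polA : ℝ → ℝ := fun t => 1 + (4273/100000)*t + (17071/10000)*t^2 + (-7649/2000)*t^3 + (228457/30000)*t^4 + (-43883/5000)*t^5

private def polA' : ℝ → ℝ := fun t => (4273/100000) + (17071/5000)*t + (-22947/2000)*t^2 + (228457/7500)*t^3 + (-43883/1000)*t^4

lemma polA'_pos : ∀ t : ℝ, 0 ≤ t → t ≤ 12/25 → 0 < polA' t := by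
  intro t h0 h1
  simp only [polA, polA', polM]
  rcases le_or_gt t (3/100) with hc0 | hc0
  · have ha : 0 ≤ t := h0
    have hs0 : (0:ℝ) ≤ t - 0 := by linarith
    have hsw : t - 0 ≤ (3/100) := by linarith
    have hp2 : (t - 0)^2 ≤ (3/100)^2 := pow_le_pow_left₀ hs0 hsw 2
    have hn2 : (0:ℝ) ≤ (t - 0)^2 := pow_nonneg hs0 2
    have hp3 : (t - 0)^3 ≤ (3/100)^3 := pow_le_pow_left₀ hs0 hsw 3
    have hn3 : (0:ℝ) ≤ (t - 0)^3 := pow_nonneg hs0 3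
    have hp4 : (t - 0)^4 ≤ (3/100)^4 := pow_le_pow_left₀ hs0 hsw 4
    have hn4 : (0:ℝ) ≤ (t - 0)^4 := pow_nonneg hs0 4
    linarith [hs0, hsw, hp2, hn2, hp3, hn3, hp4, hn4]
  rcases le_or_gt t (57/400) with hc1 | hc1
  · have ha : (3/100) ≤ t := le_of_lt hc0
    have hs0 : (0:ℝ) ≤ t - (3/100) := by linarith
    have hsw : t - (3/100) ≤ (9/80) := by linarith
    have hp2 : (t - (3/100))^2 ≤ (9/80)^2 := pow_le_pow_left₀ hs0 hsw 2
    have hn2 : (0:ℝ) ≤ (t - (3/100))^2 := pow_nonneg hs0 2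
    have hp3 : (t - (3/100))^3 ≤ (9/80)^3 := pow_le_pow_left₀ hs0 hsw 3
    have hn3 : (0:ℝ) ≤ (t - (3/100))^3 := pow_nonneg hs0 3
    have hp4 : (t - (3/100))^4 ≤ (9/80)^4 := pow_le_pow_left₀ hs0 hsw 4
    have hn4 : (0:ℝ) ≤ (t - (3/100))^4 := pow_nonneg hs0 4
    linarith [hs0, hsw, hp2, hn2, hp3, hn3, hp4, hn4]
  rcases le_or_gt t (249/800) with hc2 | hc2
  · have ha : (57/400) ≤ t := le_of_lt hc1
    have hs0 : (0:ℝ) ≤ t - (57/400) := by linarith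
    have hsw : t - (57/400) ≤ (27/160) := by linarith
    have hp2 : (t - (57/400))^2 ≤ (27/160)^2 := pow_le_pow_left₀ hs0 hsw 2
    have hn2 : (0:ℝ) ≤ (t - (57/400))^2 := pow_nonneg hs0 2
    have hp3 : (t - (57/400))^3 ≤ (27/160)^3 := pow_le_pow_left₀ hs0 hsw 3
    have hn3 : (0:ℝ) ≤ (t - (57/400))^3 := pow_nonneg hs0 3
    have hp4 : (t - (57/400))^4 ≤ (27/160)^4 := pow_le_pow_left₀ hs0 hsw 4
    have hn4 : (0:ℝ) ≤ (t - (57/400))^4 := pow_nonneg hs0 4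
    linarith [hs0, hsw, hp2, hn2, hp3, hn3, hp4, hn4]
  have ha : (249/800) ≤ t := le_of_lt hc2
  have hs0 : (0:ℝ) ≤ t - (249/800) := by linarith
  have hsw : t - (249/800) ≤ (27/160) := by linarith
  have hp2 : (t - (249/800))^2 ≤ (27/160)^2 := pow_le_pow_left₀ hs0 hsw 2
  have hn2 : (0:ℝ) ≤ (t - (249/800))^2 := pow_nonneg hs0 2
  have hp3 : (t - (249/800))^3 ≤ (27/160)^3 := pow_le_pow_left₀ hs0 hsw 3
  have hn3 : (0:ℝ) ≤ (t - (249/800))^3 := pow_nonneg hs0 3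
  have hp4 : (t - (249/800))^4 ≤ (27/160)^4 := pow_le_pow_left₀ hs0 hsw 4
  have hn4 : (0:ℝ) ≤ (t - (249/800))^4 := pow_nonneg hs0 4
  linarith [hs0, hsw, hp2, hn2, hp3, hn3, hp4, hn4]

lemma polQ_pos : ∀ t : ℝ, 0 ≤ t → t ≤ 12/25 → 6 * polA t * (polA t - polM t) < polA' t ^ 2 := by
  intro t h0 h1
  simp only [polA, polA', polM]
  rcases le_or_gt t (3/100) with hc0 | hc0
  · have ha : 0 ≤ t := h0
    have hs0 : (0:ℝ) ≤ t - 0 := by linarith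
    have hsw : t - 0 ≤ (3/100) := by linarith
    have hp2 : (t - 0)^2 ≤ (3/100)^2 := pow_le_pow_left₀ hs0 hsw 2
    have hn2 : (0:ℝ) ≤ (t - 0)^2 := pow_nonneg hs0 2
    have hp3 : (t - 0)^3 ≤ (3/100)^3 := pow_le_pow_left₀ hs0 hsw 3
    have hn3 : (0:ℝ) ≤ (t - 0)^3 := pow_nonneg hs0 3
    have hp4 : (t - 0)^4 ≤ (3/100)^4 := pow_le_pow_left₀ hs0 hsw 4
    have hn4 : (0:ℝ) ≤ (t - 0)^4 := pow_nonneg hs0 4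
    have hp5 : (t - 0)^5 ≤ (3/100)^5 := pow_le_pow_left₀ hs0 hsw 5
    have hn5 : (0:ℝ) ≤ (t - 0)^5 := pow_nonneg hs0 5
    have hp6 : (t - 0)^6 ≤ (3/100)^6 := pow_le_pow_left₀ hs0 hsw 6
    have hn6 : (0:ℝ) ≤ (t - 0)^6 := pow_nonneg hs0 6
    have hp7 : (t - 0)^7 ≤ (3/100)^7 := pow_le_pow_left₀ hs0 hsw 7
    have hn7 : (0:ℝ) ≤ (t - 0)^7 := pow_nonneg hs0 7
    have hp8 : (t - 0)^8 ≤ (3/100)^8 := pow_le_pow_left₀ hs0 hsw 8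
    have hn8 : (0:ℝ) ≤ (t - 0)^8 := pow_nonneg hs0 8
    have hp9 : (t - 0)^9 ≤ (3/100)^9 := pow_le_pow_left₀ hs0 hsw 9
    have hn9 : (0:ℝ) ≤ (t - 0)^9 := pow_nonneg hs0 9
    have hp10 : (t - 0)^10 ≤ (3/100)^10 := pow_le_pow_left₀ hs0 hsw 10
    have hn10 : (0:ℝ) ≤ (t - 0)^10 := pow_nonneg hs0 10
    linarith [hs0, hsw, hp2, hn2, hp3, hn3, hp4, hn4, hp5, hn5, hp6, hn6, hp7, hn7, hp8, hn8, hp9, hn9, hp10, hn10]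
  rcases le_or_gt t (93/1600) with hc1 | hc1
  · have ha : (3/100) ≤ t := le_of_lt hc0
    have hs0 : (0:ℝ) ≤ t - (3/100) := by linarith
    have hsw : t - (3/100) ≤ (9/320) := by linarith
    have hp2 : (t - (3/100))^2 ≤ (9/320)^2 := pow_le_pow_left₀ hs0 hsw 2
    have hn2 : (0:ℝ) ≤ (t - (3/100))^2 := pow_nonneg hs0 2
    have hp3 : (t - (3/100))^3 ≤ (9/320)^3 := pow_le_pow_left₀ hs0 hsw 3
    have hn3 : (0:ℝ) ≤ (t - (3/100))^3 := pow_nonneg hs0 3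
    have hp4 : (t - (3/100))^4 ≤ (9/320)^4 := pow_le_pow_left₀ hs0 hsw 4
    have hn4 : (0:ℝ) ≤ (t - (3/100))^4 := pow_nonneg hs0 4
    have hp5 : (t - (3/100))^5 ≤ (9/320)^5 := pow_le_pow_left₀ hs0 hsw 5
    have hn5 : (0:ℝ) ≤ (t - (3/100))^5 := pow_nonneg hs0 5
    have hp6 : (t - (3/100))^6 ≤ (9/320)^6 := pow_le_pow_left₀ hs0 hsw 6
    have hn6 : (0:ℝ) ≤ (t - (3/100))^6 := pow_nonneg hs0 6
    have hp7 : (t - (3/100))^7 ≤ (9/320)^7 := pow_le_pow_left₀ hs0 hsw 7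
    have hn7 : (0:ℝ) ≤ (t - (3/100))^7 := pow_nonneg hs0 7
    have hp8 : (t - (3/100))^8 ≤ (9/320)^8 := pow_le_pow_left₀ hs0 hsw 8
    have hn8 : (0:ℝ) ≤ (t - (3/100))^8 := pow_nonneg hs0 8
    have hp9 : (t - (3/100))^9 ≤ (9/320)^9 := pow_le_pow_left₀ hs0 hsw 9
    have hn9 : (0:ℝ) ≤ (t - (3/100))^9 := pow_nonneg hs0 9
    have hp10 : (t - (3/100))^10 ≤ (9/320)^10 := pow_le_pow_left₀ hs0 hsw 10
    have hn10 : (0:ℝ) ≤ (t - (3/100))^10 := pow_nonneg hs0 10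
    linarith [hs0, hsw, hp2, hn2, hp3, hn3, hp4, hn4, hp5, hn5, hp6, hn6, hp7, hn7, hp8, hn8, hp9, hn9, hp10, hn10]
  rcases le_or_gt t (1419/12800) with hc2 | hc2
  · have ha : (93/1600) ≤ t := le_of_lt hc1
    have hs0 : (0:ℝ) ≤ t - (93/1600) := by linarith
    have hsw : t - (93/1600) ≤ (27/512) := by linarith
    have hp2 : (t - (93/1600))^2 ≤ (27/512)^2 := pow_le_pow_left₀ hs0 hsw 2
    have hn2 : (0:ℝ) ≤ (t - (93/1600))^2 := pow_nonneg hs0 2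
    have hp3 : (t - (93/1600))^3 ≤ (27/512)^3 := pow_le_pow_left₀ hs0 hsw 3
    have hn3 : (0:ℝ) ≤ (t - (93/1600))^3 := pow_nonneg hs0 3
    have hp4 : (t - (93/1600))^4 ≤ (27/512)^4 := pow_le_pow_left₀ hs0 hsw 4
    have hn4 : (0:ℝ) ≤ (t - (93/1600))^4 := pow_nonneg hs0 4
    have hp5 : (t - (93/1600))^5 ≤ (27/512)^5 := pow_le_pow_left₀ hs0 hsw 5
    have hn5 : (0:ℝ) ≤ (t - (93/1600))^5 := pow_nonneg hs0 5
    have hp6 : (t - (93/1600))^6 ≤ (27/512)^6 := pow_le_pow_left₀ hs0 hsw 6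
    have hn6 : (0:ℝ) ≤ (t - (93/1600))^6 := pow_nonneg hs0 6
    have hp7 : (t - (93/1600))^7 ≤ (27/512)^7 := pow_le_pow_left₀ hs0 hsw 7
    have hn7 : (0:ℝ) ≤ (t - (93/1600))^7 := pow_nonneg hs0 7
    have hp8 : (t - (93/1600))^8 ≤ (27/512)^8 := pow_le_pow_left₀ hs0 hsw 8
    have hn8 : (0:ℝ) ≤ (t - (93/1600))^8 := pow_nonneg hs0 8
    have hp9 : (t - (93/1600))^9 ≤ (27/512)^9 := pow_le_pow_left₀ hs0 hsw 9
    have hn9 : (0:ℝ) ≤ (t - (93/1600))^9 := pow_nonneg hs0 9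
    have hp10 : (t - (93/1600))^10 ≤ (27/512)^10 := pow_le_pow_left₀ hs0 hsw 10
    have hn10 : (0:ℝ) ≤ (t - (93/1600))^10 := pow_nonneg hs0 10
    linarith [hs0, hsw, hp2, hn2, hp3, hn3, hp4, hn4, hp5, hn5, hp6, hn6, hp7, hn7, hp8, hn8, hp9, hn9, hp10, hn10]
  rcases le_or_gt t (16077/102400) with hc3 | hc3
  · have ha : (1419/12800) ≤ t := le_of_lt hc2
    have hs0 : (0:ℝ) ≤ t - (1419/12800) := by linarith
    have hsw : t - (1419/12800) ≤ (189/4096) := by linarith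
    have hp2 : (t - (1419/12800))^2 ≤ (189/4096)^2 := pow_le_pow_left₀ hs0 hsw 2
    have hn2 : (0:ℝ) ≤ (t - (1419/12800))^2 := pow_nonneg hs0 2
    have hp3 : (t - (1419/12800))^3 ≤ (189/4096)^3 := pow_le_pow_left₀ hs0 hsw 3
    have hn3 : (0:ℝ) ≤ (t - (1419/12800))^3 := pow_nonneg hs0 3
    have hp4 : (t - (1419/12800))^4 ≤ (189/4096)^4 := pow_le_pow_left₀ hs0 hsw 4
    have hn4 : (0:ℝ) ≤ (t - (1419/12800))^4 := pow_nonneg hs0 4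
    have hp5 : (t - (1419/12800))^5 ≤ (189/4096)^5 := pow_le_pow_left₀ hs0 hsw 5
    have hn5 : (0:ℝ) ≤ (t - (1419/12800))^5 := pow_nonneg hs0 5
    have hp6 : (t - (1419/12800))^6 ≤ (189/4096)^6 := pow_le_pow_left₀ hs0 hsw 6
    have hn6 : (0:ℝ) ≤ (t - (1419/12800))^6 := pow_nonneg hs0 6
    have hp7 : (t - (1419/12800))^7 ≤ (189/4096)^7 := pow_le_pow_left₀ hs0 hsw 7
    have hn7 : (0:ℝ) ≤ (t - (1419/12800))^7 := pow_nonneg hs0 7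
    have hp8 : (t - (1419/12800))^8 ≤ (189/4096)^8 := pow_le_pow_left₀ hs0 hsw 8
    have hn8 : (0:ℝ) ≤ (t - (1419/12800))^8 := pow_nonneg hs0 8
    have hp9 : (t - (1419/12800))^9 ≤ (189/4096)^9 := pow_le_pow_left₀ hs0 hsw 9
    have hn9 : (0:ℝ) ≤ (t - (1419/12800))^9 := pow_nonneg hs0 9
    have hp10 : (t - (1419/12800))^10 ≤ (189/4096)^10 := pow_le_pow_left₀ hs0 hsw 10
    have hn10 : (0:ℝ) ≤ (t - (1419/12800))^10 := pow_nonneg hs0 10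
    linarith [hs0, hsw, hp2, hn2, hp3, hn3, hp4, hn4, hp5, hn5, hp6, hn6, hp7, hn7, hp8, hn8, hp9, hn9, hp10, hn10]
  rcases le_or_gt t (161691/819200) with hc4 | hc4
  · have ha : (16077/102400) ≤ t := le_of_lt hc3
    have hs0 : (0:ℝ) ≤ t - (16077/102400) := by linarith
    have hsw : t - (16077/102400) ≤ (1323/32768) := by linarith
    have hp2 : (t - (16077/102400))^2 ≤ (1323/32768)^2 := pow_le_pow_left₀ hs0 hsw 2
    have hn2 : (0:ℝ) ≤ (t - (16077/102400))^2 := pow_nonneg hs0 2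
    have hp3 : (t - (16077/102400))^3 ≤ (1323/32768)^3 := pow_le_pow_left₀ hs0 hsw 3
    have hn3 : (0:ℝ) ≤ (t - (16077/102400))^3 := pow_nonneg hs0 3
    have hp4 : (t - (16077/102400))^4 ≤ (1323/32768)^4 := pow_le_pow_left₀ hs0 hsw 4
    have hn4 : (0:ℝ) ≤ (t - (16077/102400))^4 := pow_nonneg hs0 4
    have hp5 : (t - (16077/102400))^5 ≤ (1323/32768)^5 := pow_le_pow_left₀ hs0 hsw 5
    have hn5 : (0:ℝ) ≤ (t - (16077/102400))^5 := pow_nonneg hs0 5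
    have hp6 : (t - (16077/102400))^6 ≤ (1323/32768)^6 := pow_le_pow_left₀ hs0 hsw 6
    have hn6 : (0:ℝ) ≤ (t - (16077/102400))^6 := pow_nonneg hs0 6
    have hp7 : (t - (16077/102400))^7 ≤ (1323/32768)^7 := pow_le_pow_left₀ hs0 hsw 7
    have hn7 : (0:ℝ) ≤ (t - (16077/102400))^7 := pow_nonneg hs0 7
    have hp8 : (t - (16077/102400))^8 ≤ (1323/32768)^8 := pow_le_pow_left₀ hs0 hsw 8
    have hn8 : (0:ℝ) ≤ (t - (16077/102400))^8 := pow_nonneg hs0 8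
    have hp9 : (t - (16077/102400))^9 ≤ (1323/32768)^9 := pow_le_pow_left₀ hs0 hsw 9
    have hn9 : (0:ℝ) ≤ (t - (16077/102400))^9 := pow_nonneg hs0 9
    have hp10 : (t - (16077/102400))^10 ≤ (1323/32768)^10 := pow_le_pow_left₀ hs0 hsw 10
    have hn10 : (0:ℝ) ≤ (t - (16077/102400))^10 := pow_nonneg hs0 10
    linarith [hs0, hsw, hp2, hn2, hp3, hn3, hp4, hn4, hp5, hn5, hp6, hn6, hp7, hn7, hp8, hn8, hp9, hn9, hp10, hn10]
  rcases le_or_gt t (878289/3276800) with hc5 | hc5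
  · have ha : (161691/819200) ≤ t := le_of_lt hc4
    have hs0 : (0:ℝ) ≤ t - (161691/819200) := by linarith
    have hsw : t - (161691/819200) ≤ (9261/131072) := by linarith
    have hp2 : (t - (161691/819200))^2 ≤ (9261/131072)^2 := pow_le_pow_left₀ hs0 hsw 2
    have hn2 : (0:ℝ) ≤ (t - (161691/819200))^2 := pow_nonneg hs0 2
    have hp3 : (t - (161691/819200))^3 ≤ (9261/131072)^3 := pow_le_pow_left₀ hs0 hsw 3
    have hn3 : (0:ℝ) ≤ (t - (161691/819200))^3 := pow_nonneg hs0 3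
    have hp4 : (t - (161691/819200))^4 ≤ (9261/131072)^4 := pow_le_pow_left₀ hs0 hsw 4
    have hn4 : (0:ℝ) ≤ (t - (161691/819200))^4 := pow_nonneg hs0 4
    have hp5 : (t - (161691/819200))^5 ≤ (9261/131072)^5 := pow_le_pow_left₀ hs0 hsw 5
    have hn5 : (0:ℝ) ≤ (t - (161691/819200))^5 := pow_nonneg hs0 5
    have hp6 : (t - (161691/819200))^6 ≤ (9261/131072)^6 := pow_le_pow_left₀ hs0 hsw 6
    have hn6 : (0:ℝ) ≤ (t - (161691/819200))^6 := pow_nonneg hs0 6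
    have hp7 : (t - (161691/819200))^7 ≤ (9261/131072)^7 := pow_le_pow_left₀ hs0 hsw 7
    have hn7 : (0:ℝ) ≤ (t - (161691/819200))^7 := pow_nonneg hs0 7
    have hp8 : (t - (161691/819200))^8 ≤ (9261/131072)^8 := pow_le_pow_left₀ hs0 hsw 8
    have hn8 : (0:ℝ) ≤ (t - (161691/819200))^8 := pow_nonneg hs0 8
    have hp9 : (t - (161691/819200))^9 ≤ (9261/131072)^9 := pow_le_pow_left₀ hs0 hsw 9
    have hn9 : (0:ℝ) ≤ (t - (161691/819200))^9 := pow_nonneg hs0 9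
    have hp10 : (t - (161691/819200))^10 ≤ (9261/131072)^10 := pow_le_pow_left₀ hs0 hsw 10
    have hn10 : (0:ℝ) ≤ (t - (161691/819200))^10 := pow_nonneg hs0 10
    linarith [hs0, hsw, hp2, hn2, hp3, hn3, hp4, hn4, hp5, hn5, hp6, hn6, hp7, hn7, hp8, hn8, hp9, hn9, hp10, hn10]
  rcases le_or_gt t (4207731/13107200) with hc6 | hc6
  · have ha : (878289/3276800) ≤ t := le_of_lt hc5
    have hs0 : (0:ℝ) ≤ t - (878289/3276800) := by linarith
    have hsw : t - (878289/3276800) ≤ (27783/524288) := by linarith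
    have hp2 : (t - (878289/3276800))^2 ≤ (27783/524288)^2 := pow_le_pow_left₀ hs0 hsw 2
    have hn2 : (0:ℝ) ≤ (t - (878289/3276800))^2 := pow_nonneg hs0 2
    have hp3 : (t - (878289/3276800))^3 ≤ (27783/524288)^3 := pow_le_pow_left₀ hs0 hsw 3
    have hn3 : (0:ℝ) ≤ (t - (878289/3276800))^3 := pow_nonneg hs0 3
    have hp4 : (t - (878289/3276800))^4 ≤ (27783/524288)^4 := pow_le_pow_left₀ hs0 hsw 4
    have hn4 : (0:ℝ) ≤ (t - (878289/3276800))^4 := pow_nonneg hs0 4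
    have hp5 : (t - (878289/3276800))^5 ≤ (27783/524288)^5 := pow_le_pow_left₀ hs0 hsw 5
    have hn5 : (0:ℝ) ≤ (t - (878289/3276800))^5 := pow_nonneg hs0 5
    have hp6 : (t - (878289/3276800))^6 ≤ (27783/524288)^6 := pow_le_pow_left₀ hs0 hsw 6
    have hn6 : (0:ℝ) ≤ (t - (878289/3276800))^6 := pow_nonneg hs0 6
    have hp7 : (t - (878289/3276800))^7 ≤ (27783/524288)^7 := pow_le_pow_left₀ hs0 hsw 7
    have hn7 : (0:ℝ) ≤ (t - (878289/3276800))^7 := pow_nonneg hs0 7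
    have hp8 : (t - (878289/3276800))^8 ≤ (27783/524288)^8 := pow_le_pow_left₀ hs0 hsw 8
    have hn8 : (0:ℝ) ≤ (t - (878289/3276800))^8 := pow_nonneg hs0 8
    have hp9 : (t - (878289/3276800))^9 ≤ (27783/524288)^9 := pow_le_pow_left₀ hs0 hsw 9
    have hn9 : (0:ℝ) ≤ (t - (878289/3276800))^9 := pow_nonneg hs0 9
    have hp10 : (t - (878289/3276800))^10 ≤ (27783/524288)^10 := pow_le_pow_left₀ hs0 hsw 10
    have hn10 : (0:ℝ) ≤ (t - (878289/3276800))^10 := pow_nonneg hs0 10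
    linarith [hs0, hsw, hp2, hn2, hp3, hn3, hp4, hn4, hp5, hn5, hp6, hn6, hp7, hn7, hp8, hn8, hp9, hn9, hp10, hn10]
  rcases le_or_gt t (18914649/52428800) with hc7 | hc7
  · have ha : (4207731/13107200) ≤ t := le_of_lt hc6
    have hs0 : (0:ℝ) ≤ t - (4207731/13107200) := by linarith
    have hsw : t - (4207731/13107200) ≤ (83349/2097152) := by linarith
    have hp2 : (t - (4207731/13107200))^2 ≤ (83349/2097152)^2 := pow_le_pow_left₀ hs0 hsw 2
    have hn2 : (0:ℝ) ≤ (t - (4207731/13107200))^2 := pow_nonneg hs0 2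
    have hp3 : (t - (4207731/13107200))^3 ≤ (83349/2097152)^3 := pow_le_pow_left₀ hs0 hsw 3
    have hn3 : (0:ℝ) ≤ (t - (4207731/13107200))^3 := pow_nonneg hs0 3
    have hp4 : (t - (4207731/13107200))^4 ≤ (83349/2097152)^4 := pow_le_pow_left₀ hs0 hsw 4
    have hn4 : (0:ℝ) ≤ (t - (4207731/13107200))^4 := pow_nonneg hs0 4
    have hp5 : (t - (4207731/13107200))^5 ≤ (83349/2097152)^5 := pow_le_pow_left₀ hs0 hsw 5
    have hn5 : (0:ℝ) ≤ (t - (4207731/13107200))^5 := pow_nonneg hs0 5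
    have hp6 : (t - (4207731/13107200))^6 ≤ (83349/2097152)^6 := pow_le_pow_left₀ hs0 hsw 6
    have hn6 : (0:ℝ) ≤ (t - (4207731/13107200))^6 := pow_nonneg hs0 6
    have hp7 : (t - (4207731/13107200))^7 ≤ (83349/2097152)^7 := pow_le_pow_left₀ hs0 hsw 7
    have hn7 : (0:ℝ) ≤ (t - (4207731/13107200))^7 := pow_nonneg hs0 7
    have hp8 : (t - (4207731/13107200))^8 ≤ (83349/2097152)^8 := pow_le_pow_left₀ hs0 hsw 8
    have hn8 : (0:ℝ) ≤ (t - (4207731/13107200))^8 := pow_nonneg hs0 8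
    have hp9 : (t - (4207731/13107200))^9 ≤ (83349/2097152)^9 := pow_le_pow_left₀ hs0 hsw 9
    have hn9 : (0:ℝ) ≤ (t - (4207731/13107200))^9 := pow_nonneg hs0 9
    have hp10 : (t - (4207731/13107200))^10 ≤ (83349/2097152)^10 := pow_le_pow_left₀ hs0 hsw 10
    have hn10 : (0:ℝ) ≤ (t - (4207731/13107200))^10 := pow_nonneg hs0 10
    linarith [hs0, hsw, hp2, hn2, hp3, hn3, hp4, hn4, hp5, hn5, hp6, hn6, hp7, hn7, hp8, hn8, hp9, hn9, hp10, hn10]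
  rcases le_or_gt t (81909771/209715200) with hc8 | hc8
  · have ha : (18914649/52428800) ≤ t := le_of_lt hc7
    have hs0 : (0:ℝ) ≤ t - (18914649/52428800) := by linarith
    have hsw : t - (18914649/52428800) ≤ (250047/8388608) := by linarith
    have hp2 : (t - (18914649/52428800))^2 ≤ (250047/8388608)^2 := pow_le_pow_left₀ hs0 hsw 2
    have hn2 : (0:ℝ) ≤ (t - (18914649/52428800))^2 := pow_nonneg hs0 2
    have hp3 : (t - (18914649/52428800))^3 ≤ (250047/8388608)^3 := pow_le_pow_left₀ hs0 hsw 3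
    have hn3 : (0:ℝ) ≤ (t - (18914649/52428800))^3 := pow_nonneg hs0 3
    have hp4 : (t - (18914649/52428800))^4 ≤ (250047/8388608)^4 := pow_le_pow_left₀ hs0 hsw 4
    have hn4 : (0:ℝ) ≤ (t - (18914649/52428800))^4 := pow_nonneg hs0 4
    have hp5 : (t - (18914649/52428800))^5 ≤ (250047/8388608)^5 := pow_le_pow_left₀ hs0 hsw 5
    have hn5 : (0:ℝ) ≤ (t - (18914649/52428800))^5 := pow_nonneg hs0 5
    have hp6 : (t - (18914649/52428800))^6 ≤ (250047/8388608)^6 := pow_le_pow_left₀ hs0 hsw 6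
    have hn6 : (0:ℝ) ≤ (t - (18914649/52428800))^6 := pow_nonneg hs0 6
    have hp7 : (t - (18914649/52428800))^7 ≤ (250047/8388608)^7 := pow_le_pow_left₀ hs0 hsw 7
    have hn7 : (0:ℝ) ≤ (t - (18914649/52428800))^7 := pow_nonneg hs0 7
    have hp8 : (t - (18914649/52428800))^8 ≤ (250047/8388608)^8 := pow_le_pow_left₀ hs0 hsw 8
    have hn8 : (0:ℝ) ≤ (t - (18914649/52428800))^8 := pow_nonneg hs0 8
    have hp9 : (t - (18914649/52428800))^9 ≤ (250047/8388608)^9 := pow_le_pow_left₀ hs0 hsw 9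
    have hn9 : (0:ℝ) ≤ (t - (18914649/52428800))^9 := pow_nonneg hs0 9
    have hp10 : (t - (18914649/52428800))^10 ≤ (250047/8388608)^10 := pow_le_pow_left₀ hs0 hsw 10
    have hn10 : (0:ℝ) ≤ (t - (18914649/52428800))^10 := pow_nonneg hs0 10
    linarith [hs0, hsw, hp2, hn2, hp3, hn3, hp4, hn4, hp5, hn5, hp6, hn6, hp7, hn7, hp8, hn8, hp9, hn9, hp10, hn10]
  rcases le_or_gt t (346392609/838860800) with hc9 | hc9
  · have ha : (81909771/209715200) ≤ t := le_of_lt hc8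
    have hs0 : (0:ℝ) ≤ t - (81909771/209715200) := by linarith
    have hsw : t - (81909771/209715200) ≤ (750141/33554432) := by linarith
    have hp2 : (t - (81909771/209715200))^2 ≤ (750141/33554432)^2 := pow_le_pow_left₀ hs0 hsw 2
    have hn2 : (0:ℝ) ≤ (t - (81909771/209715200))^2 := pow_nonneg hs0 2
    have hp3 : (t - (81909771/209715200))^3 ≤ (750141/33554432)^3 := pow_le_pow_left₀ hs0 hsw 3
    have hn3 : (0:ℝ) ≤ (t - (81909771/209715200))^3 := pow_nonneg hs0 3
    have hp4 : (t - (81909771/209715200))^4 ≤ (750141/33554432)^4 := pow_le_pow_left₀ hs0 hsw 4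
    have hn4 : (0:ℝ) ≤ (t - (81909771/209715200))^4 := pow_nonneg hs0 4
    have hp5 : (t - (81909771/209715200))^5 ≤ (750141/33554432)^5 := pow_le_pow_left₀ hs0 hsw 5
    have hn5 : (0:ℝ) ≤ (t - (81909771/209715200))^5 := pow_nonneg hs0 5
    have hp6 : (t - (81909771/209715200))^6 ≤ (750141/33554432)^6 := pow_le_pow_left₀ hs0 hsw 6
    have hn6 : (0:ℝ) ≤ (t - (81909771/209715200))^6 := pow_nonneg hs0 6
    have hp7 : (t - (81909771/209715200))^7 ≤ (750141/33554432)^7 := pow_le_pow_left₀ hs0 hsw 7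
    have hn7 : (0:ℝ) ≤ (t - (81909771/209715200))^7 := pow_nonneg hs0 7
    have hp8 : (t - (81909771/209715200))^8 ≤ (750141/33554432)^8 := pow_le_pow_left₀ hs0 hsw 8
    have hn8 : (0:ℝ) ≤ (t - (81909771/209715200))^8 := pow_nonneg hs0 8
    have hp9 : (t - (81909771/209715200))^9 ≤ (750141/33554432)^9 := pow_le_pow_left₀ hs0 hsw 9
    have hn9 : (0:ℝ) ≤ (t - (81909771/209715200))^9 := pow_nonneg hs0 9
    have hp10 : (t - (81909771/209715200))^10 ≤ (750141/33554432)^10 := pow_le_pow_left₀ hs0 hsw 10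
    have hn10 : (0:ℝ) ≤ (t - (81909771/209715200))^10 := pow_nonneg hs0 10
    linarith [hs0, hsw, hp2, hn2, hp3, hn3, hp4, hn4, hp5, hn5, hp6, hn6, hp7, hn7, hp8, hn8, hp9, hn9, hp10, hn10]
  rcases le_or_gt t (1441831011/3355443200) with hc10 | hc10
  · have ha : (346392609/838860800) ≤ t := le_of_lt hc9
    have hs0 : (0:ℝ) ≤ t - (346392609/838860800) := by linarith
    have hsw : t - (346392609/838860800) ≤ (2250423/134217728) := by linarith
    have hp2 : (t - (346392609/838860800))^2 ≤ (2250423/134217728)^2 := pow_le_pow_left₀ hs0 hsw 2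
    have hn2 : (0:ℝ) ≤ (t - (346392609/838860800))^2 := pow_nonneg hs0 2
    have hp3 : (t - (346392609/838860800))^3 ≤ (2250423/134217728)^3 := pow_le_pow_left₀ hs0 hsw 3
    have hn3 : (0:ℝ) ≤ (t - (346392609/838860800))^3 := pow_nonneg hs0 3
    have hp4 : (t - (346392609/838860800))^4 ≤ (2250423/134217728)^4 := pow_le_pow_left₀ hs0 hsw 4
    have hn4 : (0:ℝ) ≤ (t - (346392609/838860800))^4 := pow_nonneg hs0 4
    have hp5 : (t - (346392609/838860800))^5 ≤ (2250423/134217728)^5 := pow_le_pow_left₀ hs0 hsw 5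
    have hn5 : (0:ℝ) ≤ (t - (346392609/838860800))^5 := pow_nonneg hs0 5
    have hp6 : (t - (346392609/838860800))^6 ≤ (2250423/134217728)^6 := pow_le_pow_left₀ hs0 hsw 6
    have hn6 : (0:ℝ) ≤ (t - (346392609/838860800))^6 := pow_nonneg hs0 6
    have hp7 : (t - (346392609/838860800))^7 ≤ (2250423/134217728)^7 := pow_le_pow_left₀ hs0 hsw 7
    have hn7 : (0:ℝ) ≤ (t - (346392609/838860800))^7 := pow_nonneg hs0 7
    have hp8 : (t - (346392609/838860800))^8 ≤ (2250423/134217728)^8 := pow_le_pow_left₀ hs0 hsw 8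
    have hn8 : (0:ℝ) ≤ (t - (346392609/838860800))^8 := pow_nonneg hs0 8
    have hp9 : (t - (346392609/838860800))^9 ≤ (2250423/134217728)^9 := pow_le_pow_left₀ hs0 hsw 9
    have hn9 : (0:ℝ) ≤ (t - (346392609/838860800))^9 := pow_nonneg hs0 9
    have hp10 : (t - (346392609/838860800))^10 ≤ (2250423/134217728)^10 := pow_le_pow_left₀ hs0 hsw 10
    have hn10 : (0:ℝ) ≤ (t - (346392609/838860800))^10 := pow_nonneg hs0 10
    linarith [hs0, hsw, hp2, hn2, hp3, hn3, hp4, hn4, hp5, hn5, hp6, hn6, hp7, hn7, hp8, hn8, hp9, hn9, hp10, hn10]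
  have ha : (1441831011/3355443200) ≤ t := le_of_lt hc10
  have hs0 : (0:ℝ) ≤ t - (1441831011/3355443200) := by linarith
  have hsw : t - (1441831011/3355443200) ≤ (6751269/134217728) := by linarith
  have hp2 : (t - (1441831011/3355443200))^2 ≤ (6751269/134217728)^2 := pow_le_pow_left₀ hs0 hsw 2
  have hn2 : (0:ℝ) ≤ (t - (1441831011/3355443200))^2 := pow_nonneg hs0 2
  have hp3 : (t - (1441831011/3355443200))^3 ≤ (6751269/134217728)^3 := pow_le_pow_left₀ hs0 hsw 3
  have hn3 : (0:ℝ) ≤ (t - (1441831011/3355443200))^3 := pow_nonneg hs0 3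
  have hp4 : (t - (1441831011/3355443200))^4 ≤ (6751269/134217728)^4 := pow_le_pow_left₀ hs0 hsw 4
  have hn4 : (0:ℝ) ≤ (t - (1441831011/3355443200))^4 := pow_nonneg hs0 4
  have hp5 : (t - (1441831011/3355443200))^5 ≤ (6751269/134217728)^5 := pow_le_pow_left₀ hs0 hsw 5
  have hn5 : (0:ℝ) ≤ (t - (1441831011/3355443200))^5 := pow_nonneg hs0 5
  have hp6 : (t - (1441831011/3355443200))^6 ≤ (6751269/134217728)^6 := pow_le_pow_left₀ hs0 hsw 6
  have hn6 : (0:ℝ) ≤ (t - (1441831011/3355443200))^6 := pow_nonneg hs0 6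
  have hp7 : (t - (1441831011/3355443200))^7 ≤ (6751269/134217728)^7 := pow_le_pow_left₀ hs0 hsw 7
  have hn7 : (0:ℝ) ≤ (t - (1441831011/3355443200))^7 := pow_nonneg hs0 7
  have hp8 : (t - (1441831011/3355443200))^8 ≤ (6751269/134217728)^8 := pow_le_pow_left₀ hs0 hsw 8
  have hn8 : (0:ℝ) ≤ (t - (1441831011/3355443200))^8 := pow_nonneg hs0 8
  have hp9 : (t - (1441831011/3355443200))^9 ≤ (6751269/134217728)^9 := pow_le_pow_left₀ hs0 hsw 9
  have hn9 : (0:ℝ) ≤ (t - (1441831011/3355443200))^9 := pow_nonneg hs0 9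
  have hp10 : (t - (1441831011/3355443200))^10 ≤ (6751269/134217728)^10 := pow_le_pow_left₀ hs0 hsw 10
  have hn10 : (0:ℝ) ≤ (t - (1441831011/3355443200))^10 := pow_nonneg hs0 10
  linarith [hs0, hsw, hp2, hn2, hp3, hn3, hp4, hn4, hp5, hn5, hp6, hn6, hp7, hn7, hp8, hn8, hp9, hn9, hp10, hn10]

private lemma hasDerivAt_polA (t : ℝ) : HasDerivAt polA (polA' t) t := by
  have h := (((((hasDerivAt_const t (1:ℝ)).add ((hasDerivAt_pow 1 t).const_mul (4273/100000))).add
      ((hasDerivAt_pow 2 t).const_mul (17071/10000))).add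
      ((hasDerivAt_pow 3 t).const_mul (-7649/2000))).add
      ((hasDerivAt_pow 4 t).const_mul (228457/30000))).add
      ((hasDerivAt_pow 5 t).const_mul (-43883/5000))
  have hfun : polA = (fun x : ℝ =>
      1 + 4273 / 100000 * x ^ 1 + 17071 / 10000 * x ^ 2 + -7649 / 2000 * x ^ 3 + 228457 / 30000 * x ^ 4 +
        -43883 / 5000 * x ^ 5) := by
    funext x; simp only [polA]; ring
  rw [hfun]
  refine h.congr_deriv ?_
  simp only [polA']
  push_cast
  ring

end SuperpotentialAux

theorem no_global_superpotential :
    ¬ ∃ W : ℝ → ℝ, Differentiable ℝ W ∧ deriv W 0 = 0 ∧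
      ∀ φ : ℝ, -(9 / 16) * φ ^ 2 + 9 * φ ^ 3 + 11 * φ ^ 4 =
        3 + 2 * deriv W φ ^ 2 - 3 * W φ ^ 2 := by
  rintro ⟨W, hW, hW0, hV⟩
  set B : ℝ → ℝ := fun φ => polA (-φ) with hBdef
  have hB : ∀ φ : ℝ, HasDerivAt B (-(polA' (-φ))) φ := by
    intro φ
    have h1 : HasDerivAt (fun x : ℝ => -x) (-1) φ := (hasDerivAt_id φ).neg
    exact ((hasDerivAt_polA (-φ)).comp φ h1).congr_deriv (by ring)
  have hu : ∀ φ : ℝ, HasDerivAt (fun x => W x ^ 2) (2 * W φ * deriv W φ) φ := by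
    intro φ
    have := ((hW φ).hasDerivAt).pow 2
    exact this.congr_deriv (by norm_num)
  have hm : ∀ φ : ℝ, polM (-φ) ≤ W φ ^ 2 := by
    intro φ
    have h := hV φ
    have h2 := sq_nonneg (deriv W φ)
    simp only [polM]
    nlinarith [h, h2, sq_nonneg φ]
  have hW0sq : W 0 ^ 2 = 1 := by
    have h := hV 0
    rw [hW0] at h
    norm_num at h
    linarith
  have hkey : ∀ φ : ℝ, (2 * W φ * deriv W φ) ^ 2 = 6 * W φ ^ 2 * (W φ ^ 2 - polM (-φ)) := by
    intro φ
    have h := hV φ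
    simp only [polM]
    linear_combination (-2 * W φ ^ 2) * h
  -- near 0, W^2 < B on the left, since (W^2-B)(0)=0 with positive derivative
  have hg : HasDerivAt (fun x => W x ^ 2 - B x) (polA' 0) 0 := by
    have h := (hu 0).sub (hB 0)
    rw [hW0] at h
    exact h.congr_deriv (by ring)
  have hg0 : W 0 ^ 2 - B 0 = 0 := by
    rw [hW0sq]
    simp [hBdef, polA]
  have hA'0 : (0:ℝ) < polA' 0 := polA'_pos 0 le_rfl (by norm_num)
  obtain ⟨δ, hδpos, hδ⟩ : ∃ δ > 0, ∀ φ : ℝ, -δ < φ → φ < 0 → W φ ^ 2 < B φ := by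
    have hslope := hasDerivAt_iff_tendsto_slope.mp hg
    have h2 : Filter.Tendsto (slope (fun x => W x ^ 2 - B x) 0) (nhdsWithin 0 (Set.Iio 0))
        (nhds (polA' 0)) :=
      hslope.mono_left (nhdsWithin_mono _ (fun x hx => ne_of_lt hx))
    have h3 : ∀ᶠ φ in nhdsWithin 0 (Set.Iio 0), 0 < slope (fun x => W x ^ 2 - B x) 0 φ :=
      h2.eventually (eventually_gt_nhds hA'0)
    rw [eventually_nhdsWithin_iff, Metric.eventually_nhds_iff] at h3
    obtain ⟨ε, hε, h4⟩ := h3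
    refine ⟨ε, hε, fun φ h5 h6 => ?_⟩
    have h7 : 0 < slope (fun x => W x ^ 2 - B x) 0 φ := by
      apply h4 _ h6
      rw [Real.dist_eq, sub_zero, abs_of_neg h6]
      linarith
    rw [slope_def_field, hg0, sub_zero, sub_zero] at h7
    by_contra h8
    push_neg at h8
    have h9 : (W φ ^ 2 - B φ) / φ ≤ 0 :=
      div_nonpos_of_nonneg_of_nonpos (by linarith) (le_of_lt h6)
    linarith
  -- the barrier-crossing point c
  set δ0 : ℝ := min δ (12/25) with hδ0def
  have hδ0pos : 0 < δ0 := lt_min hδpos (by norm_num)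
  have hδ0T : δ0 ≤ 12/25 := min_le_right _ _
  set S : Set ℝ := {φ | φ ∈ Set.Icc (-(12/25)) (-δ0) ∧ B φ ≤ W φ ^ 2} with hSdef
  have hconB : Continuous B := by
    rw [continuous_iff_continuousAt]; exact fun φ => (hB φ).continuousAt
  have hconu : Continuous (fun x : ℝ => W x ^ 2) := (hW.continuous).pow 2
  have hclosed : IsClosed S := by
    have h : S = Set.Icc (-(12/25)) (-δ0) ∩ {φ | B φ ≤ W φ ^ 2} := rfl
    rw [h]
    exact isClosed_Icc.inter (isClosed_le hconB hconu)
  have hTmem : (-(12/25) : ℝ) ∈ S := by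
    refine ⟨⟨le_rfl, by linarith⟩, ?_⟩
    have h1 := hm (-(12/25))
    rw [neg_neg] at h1
    have h2 : polA (12/25) < polM (12/25) := by
      simp only [polA, polM]; norm_num
    have h3 : B (-(12/25)) = polA (12/25) := by
      simp [hBdef]
    linarith [h3 ▸ (h2.trans_le h1 : polA (12/25) < W (-(12/25)) ^ 2).le]
  have hcpt : IsCompact S := isCompact_Icc.of_isClosed_subset hclosed (fun x hx => hx.1)
  set c := sSup S with hcdef
  have hcS : c ∈ S := hcpt.sSup_mem ⟨_, hTmem⟩
  have hcub : ∀ x ∈ S, x ≤ c := fun x hx => le_csSup hcpt.bddAbove hx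
  have hcneg : c < 0 := lt_of_le_of_lt hcS.1.2 (by linarith)
  have hcT : -(12/25) ≤ c := hcS.1.1
  have hlt : ∀ φ, c < φ → φ < 0 → W φ ^ 2 < B φ := by
    intro φ h1 h2
    by_cases h3 : φ ≤ -δ0
    · by_contra h4
      push_neg at h4
      have hφS : φ ∈ S := ⟨⟨by linarith, h3⟩, h4⟩
      linarith [hcub φ hφS]
    · push_neg at h3
      have h5 : -δ < φ := by
        have := min_le_left δ (12/25 : ℝ)
        have : -δ ≤ -δ0 := by rw [hδ0def]; simp only [neg_le_neg_iff]; exact this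
        linarith
      exact hδ φ h5 h2
  have hceq : W c ^ 2 = B c := by
    rcases eq_or_lt_of_le hcS.2 with h | h
    · exact h.symm
    · exfalso
      have hF : Continuous (fun x => W x ^ 2 - B x) := hconu.sub hconB
      have h1 : ∀ᶠ x in nhds c, 0 < W x ^ 2 - B x :=
        hF.continuousAt.eventually (eventually_gt_nhds (by linarith : (0:ℝ) < W c ^ 2 - B c))
      have h2 : ∀ᶠ x in nhds c, x < 0 := eventually_lt_nhds hcneg
      have h3 : ∀ᶠ x in nhdsWithin c (Set.Ioi c), (0 < W x ^ 2 - B x ∧ x < 0) ∧ x ∈ Set.Ioi c :=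
        (((h1.and h2).filter_mono nhdsWithin_le_nhds).and eventually_mem_nhdsWithin)
      obtain ⟨x, ⟨hx1, hx2⟩, hx3⟩ := h3.exists
      have := hlt x hx3 hx2
      linarith
  -- derivative comparison at c
  have hFd : HasDerivAt (fun x => W x ^ 2 - B x) (2 * W c * deriv W c + polA' (-c)) c := by
    have h := (hu c).sub (hB c)
    exact h.congr_deriv (by ring)
  have hder : 2 * W c * deriv W c + polA' (-c) ≤ 0 := by
    have hslope := hasDerivAt_iff_tendsto_slope.mp hFd
    have h2 : Filter.Tendsto (slope (fun x => W x ^ 2 - B x) c) (nhdsWithin c (Set.Ioi c))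
        (nhds (2 * W c * deriv W c + polA' (-c))) :=
      hslope.mono_left (nhdsWithin_mono _ (fun x hx => ne_of_gt hx))
    refine le_of_tendsto h2 ?_
    have hmem : Set.Ioo c 0 ∈ nhdsWithin c (Set.Ioi c) :=
      Ioo_mem_nhdsGT_of_mem ⟨le_rfl, hcneg⟩
    filter_upwards [hmem] with x hx
    have hx1 : W x ^ 2 < B x := hlt x hx.1 hx.2
    rw [slope_def_field]
    have hFc : W c ^ 2 - B c = 0 := by rw [hceq]; ring
    apply div_nonpos_of_nonpos_of_nonneg
    · rw [hFc]; linarith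
    · linarith [hx.1]
  -- final contradiction
  have hc1 : (0:ℝ) ≤ -c := by linarith
  have hc2 : -c ≤ 12/25 := by linarith
  have hApos := polA'_pos (-c) hc1 hc2
  have hQ := polQ_pos (-c) hc1 hc2
  have hkc := hkey c
  have hBc : B c = polA (-c) := rfl
  rw [hceq, hBc] at hkc
  have h1 : 0 ≤ -(2 * W c * deriv W c) - polA' (-c) := by linarith
  have h2 : 0 ≤ -(2 * W c * deriv W c) + polA' (-c) := by linarith
  nlinarith [mul_nonneg h1 h2, hkc, hQ]
end

section
/- Let d = 3, L = 1, V(φ) = −(9/16)φ² + 9φ³ + 11φ⁴, Δ = 3/2 + 3/(2√2), r₀ = 2.5, and ω₀ = r₀ + r₀³. Define φ(r) = (3.8/r)^Δ · [ −1 + (3.2/r)² − (2.4/r)⁴ ] for r ≥ r₀, h(r) = (1/2) ∫_{r₀}^{r} ρ·φ′(ρ)² dρ, χ(r) = (1 + r²)·φ′(r)² + 2V(φ(r)), and ω(r) = e^{−h(r)} [ ω₀ + (1/2) ∫_{r₀}^{r} e^{h(ρ)} ρ² χ(ρ) dρ ]. Then ω(r) < r + r³ for every r > r₀. -/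
open Filter Set intervalIntegral

noncomputable def D0 : ℝ := 3 / 2 + 3 / (2 * Real.sqrt 2)
noncomputable def fa (r : ℝ) : ℝ := (3.8 / r) ^ D0 * (-1 + (3.2 / r) ^ 2 - (2.4 / r) ^ 4)
noncomputable def psa (r : ℝ) : ℝ :=
  D0 * (3.8 / r) ^ (D0 - 1) * (-3.8 / r ^ 2) * (-1 + (3.2 / r) ^ 2 - (2.4 / r) ^ 4)
  + (3.8 / r) ^ D0 * (2 * (3.2 / r) * (-3.2 / r ^ 2) - 4 * (2.4 / r) ^ 3 * (-2.4 / r ^ 2))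
noncomputable def fc (r : ℝ) : ℝ := fa (max r 2)
noncomputable def psc (r : ℝ) : ℝ := psa (max r 2)
noncomputable def Kc (r : ℝ) : ℝ := r * psc r ^ 2
noncomputable def Hc (r : ℝ) : ℝ := (1/2) * ∫ ρ in (2.5:ℝ)..r, Kc ρ
noncomputable def Vp (x : ℝ) : ℝ := -(9/16) * x^2 + 9 * x^3 + 11 * x^4
noncomputable def Xc (ρ : ℝ) : ℝ :=
  Real.exp (Hc ρ) * ρ^2 * ((1 + ρ^2) * psc ρ ^ 2 + 2 * Vp (fc ρ))
noncomputable def Gc (r : ℝ) : ℝ :=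
  Real.exp (Hc r) * (r + r^3) - (2.5 + 2.5^3) - (1/2) * ∫ ρ in (2.5:ℝ)..r, Xc ρ

lemma fa_hasDeriv {r : ℝ} (hr : 0 < r) : HasDerivAt fa (psa r) r := by
  have hrne : r ≠ 0 := hr.ne'
  have hbase : (0:ℝ) < 3.8 / r := by positivity
  have hdiv : HasDerivAt (fun x : ℝ => 3.8 / x) (-3.8 / r ^ 2) r := by
    simpa [div_eq_mul_inv, neg_div, mul_comm, mul_assoc] using (hasDerivAt_inv hrne).const_mul (3.8:ℝ)
  have h1 : HasDerivAt (fun x : ℝ => (3.8 / x) ^ D0)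
      (D0 * (3.8 / r) ^ (D0 - 1) * (-3.8 / r ^ 2)) r :=
    (Real.hasDerivAt_rpow_const (Or.inl hbase.ne')).comp r hdiv
  have hdiv2 : HasDerivAt (fun x : ℝ => 3.2 / x) (-3.2 / r ^ 2) r := by
    simpa [div_eq_mul_inv, neg_div, mul_comm, mul_assoc] using (hasDerivAt_inv hrne).const_mul (3.2:ℝ)
  have hdiv3 : HasDerivAt (fun x : ℝ => 2.4 / x) (-2.4 / r ^ 2) r := by
    simpa [div_eq_mul_inv, neg_div, mul_comm, mul_assoc] using (hasDerivAt_inv hrne).const_mul (2.4:ℝ)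
  have h2 : HasDerivAt (fun x : ℝ => (3.2 / x) ^ 2) (2 * (3.2 / r) * (-3.2 / r ^ 2)) r := by
    simpa using hdiv2.fun_pow 2
  have h3 : HasDerivAt (fun x : ℝ => (2.4 / x) ^ 4) (4 * (2.4 / r) ^ 3 * (-2.4 / r ^ 2)) r := by
    simpa using hdiv3.fun_pow 4
  have hb : HasDerivAt (fun x : ℝ => -1 + (3.2 / x) ^ 2 - (2.4 / x) ^ 4)
      (2 * (3.2 / r) * (-3.2 / r ^ 2) - 4 * (2.4 / r) ^ 3 * (-2.4 / r ^ 2)) r := by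
    simpa using (h2.const_add (-1:ℝ)).fun_sub h3
  exact h1.mul hb

lemma psa_contAt {r : ℝ} (hr : 0 < r) : ContinuousAt psa r := by
  have hrne : r ≠ 0 := hr.ne'
  unfold psa
  fun_prop (disch := first | exact Or.inl (by positivity : (3.8/r) ≠ 0) | positivity)

lemma fa_contAt {r : ℝ} (hr : 0 < r) : ContinuousAt fa r := by
  have hrne : r ≠ 0 := hr.ne'
  unfold fa
  fun_prop (disch := first | exact Or.inl (by positivity : (3.8/r) ≠ 0) | positivity)

lemma D0_pos : 0 < D0 := by
  have h2 : (0:ℝ) < Real.sqrt 2 := Real.sqrt_pos.2 (by norm_num)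
  unfold D0; positivity

lemma D0_le3 : D0 ≤ 3 := by
  have h2 : (1:ℝ) ≤ Real.sqrt 2 := by
    rw [show (1:ℝ) = Real.sqrt 1 by simp]
    exact Real.sqrt_le_sqrt (by norm_num)
  have : 3 / (2 * Real.sqrt 2) ≤ 3 / 2 := by
    apply div_le_div_of_nonneg_left (by norm_num) (by norm_num)
    nlinarith
  unfold D0; linarith

lemma bracket_bounds {r : ℝ} (hr : (2.5:ℝ) ≤ r) :
    -1 ≤ -1 + (3.2 / r) ^ 2 - (2.4 / r) ^ 4 ∧ -1 + (3.2 / r) ^ 2 - (2.4 / r) ^ 4 ≤ -17/81 := by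
  have hr0 : (0:ℝ) < r := by linarith
  set u : ℝ := (2.4 / r) ^ 2 with hu
  have hxu : (3.2 / r) ^ 2 = (16/9) * u := by rw [hu]; field_simp; ring
  have hupos : 0 < u := by positivity
  have hule : u ≤ (2.4/2.5) ^ 2 := by
    apply pow_le_pow_left₀ (by positivity)
    apply div_le_div_of_nonneg_left (by norm_num) (by norm_num) hr
  constructor
  · rw [hxu, hu]; nlinarith [sq_nonneg u]
  · rw [hxu, hu]; nlinarith [sq_nonneg (u - 8/9)]

lemma fa_bounds {r : ℝ} (hr : (2.5:ℝ) ≤ r) : -1 ≤ fa r ∧ fa r ≤ 0 := by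
  have hr0 : (0:ℝ) < r := by linarith
  have hbase : (0:ℝ) < 3.8 / r := by positivity
  have hA : (0:ℝ) < (3.8 / r) ^ D0 := Real.rpow_pos_of_pos hbase _
  obtain ⟨hb1, hb2⟩ := bracket_bounds hr
  have hfle : fa r ≤ 0 := by
    unfold fa
    exact mul_nonpos_of_nonneg_of_nonpos hA.le (by linarith)
  refine ⟨?_, hfle⟩
  by_cases hcase : (3.8:ℝ) ≤ r
  · have hA1 : (3.8 / r) ^ D0 ≤ 1 :=
      Real.rpow_le_one hbase.le (by rw [div_le_one hr0]; exact hcase) D0_pos.le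
    unfold fa
    nlinarith
  · push_neg at hcase
    have hb1' : (1:ℝ) ≤ 3.8 / r := by rw [le_div_iff₀ hr0]; linarith
    have hnn : (0:ℝ) ≤ 1 - (3.2 / r) ^ 2 + (2.4 / r) ^ 4 := by nlinarith [hb2]
    have hA3 : (3.8 / r) ^ D0 ≤ (3.8 / r) ^ (3:ℕ) := by
      calc (3.8 / r) ^ D0 ≤ (3.8 / r) ^ (3:ℝ) :=
            Real.rpow_le_rpow_of_exponent_le hb1' D0_le3
        _ = (3.8 / r) ^ (3:ℕ) := by rw [← Real.rpow_natCast]; norm_num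
    have key : (3.8 / r) ^ (3:ℕ) * (1 - (3.2 / r) ^ 2 + (2.4 / r) ^ 4) ≤ 1 := by
      have hs : (6.25:ℝ) ≤ r^2 := by nlinarith
      have cube : (3.8:ℝ)^3 * ((r^2)^2 - 3.2^2 * r^2 + 2.4^4) ≤ 2.5 * (r^2)^3 := by
        nlinarith [sq_nonneg (r^2 - 6.25), sq_nonneg (r^2 - 8), mul_nonneg (sub_nonneg.2 hs) (sq_nonneg (r^2 - 8)), mul_nonneg (sub_nonneg.2 hs) (sq_nonneg (r^2-6.25))]
      have h7 : (2.5:ℝ) * (r^2)^3 ≤ r^3 * (r^2)^2 := by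
        nlinarith [mul_le_mul_of_nonneg_left hr (pow_nonneg hr0.le 6)]
      have e : (3.8 / r) ^ (3:ℕ) * (1 - (3.2 / r) ^ 2 + (2.4 / r) ^ 4)
          = (3.8^3 * ((r^2)^2 - 3.2^2 * r^2 + 2.4^4)) / (r^3 * (r^2)^2) := by
        field_simp
      rw [e, div_le_one (by positivity)]
      linarith
    have hAb : (3.8 / r) ^ D0 * (1 - (3.2 / r) ^ 2 + (2.4 / r) ^ 4) ≤ 1 :=
      le_trans (mul_le_mul_of_nonneg_right hA3 hnn) key
    unfold fa
    nlinarith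

lemma Vp_bound {x : ℝ} (h1 : -1 ≤ x) (h2 : x ≤ 0) : Vp x ≤ 23/16 := by
  have key : (x+1) * (11*x^3 - 2*x^2 + (23/16)*x - 23/16) ≤ 0 := by
    apply mul_nonpos_of_nonneg_of_nonpos (by linarith)
    nlinarith [pow_nonneg (neg_nonneg.2 h2) 3, sq_nonneg x]
  unfold Vp
  nlinarith [key]

lemma max_pos (r : ℝ) : (0:ℝ) < max r 2 := lt_of_lt_of_le two_pos (le_max_right r 2)
lemma cont_max : Continuous (fun r : ℝ => max r 2) := continuous_id.max continuous_const

lemma psc_cont : Continuous psc := by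
  rw [continuous_iff_continuousAt]
  intro x
  exact ContinuousAt.comp (psa_contAt (max_pos x))
    (cont_max.continuousAt : ContinuousAt (fun r : ℝ => max r 2) x)

lemma fc_cont : Continuous fc := by
  rw [continuous_iff_continuousAt]
  intro x
  exact ContinuousAt.comp (fa_contAt (max_pos x))
    (cont_max.continuousAt : ContinuousAt (fun r : ℝ => max r 2) x)

lemma Kc_cont : Continuous Kc := continuous_id.mul (psc_cont.pow 2)

lemma Hc_hasDeriv (r : ℝ) : HasDerivAt Hc ((1/2) * Kc r) r := by
  have := (intervalIntegral.integral_hasDerivAt_right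
    (Kc_cont.intervalIntegrable 2.5 r)
    (Kc_cont.stronglyMeasurableAtFilter _ _)
    Kc_cont.continuousAt)
  exact this.const_mul (1/2)

lemma Hc_cont : Continuous Hc :=
  continuous_iff_continuousAt.2 fun r => (Hc_hasDeriv r).continuousAt

lemma Vp_cont : Continuous Vp := by unfold Vp; fun_prop

lemma Xc_cont : Continuous Xc := by
  unfold Xc
  exact ((Real.continuous_exp.comp Hc_cont).mul (continuous_pow 2)).mul
    ((continuous_const.add (continuous_pow 2)).mul (psc_cont.pow 2) |>.add
      (continuous_const.mul (Vp_cont.comp fc_cont)))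

lemma Gc_hasDeriv (r : ℝ) :
    HasDerivAt Gc (Real.exp (Hc r) * ((1/2) * Kc r) * (r + r^3)
      + Real.exp (Hc r) * (1 + 3 * r^2) - (1/2) * Xc r) r := by
  have h1 : HasDerivAt (fun x : ℝ => Real.exp (Hc x) * (x + x^3))
      (Real.exp (Hc r) * ((1/2) * Kc r) * (r + r^3) + Real.exp (Hc r) * (1 + 3 * r^2)) r := by
    have hexp := (Hc_hasDeriv r).exp
    have hpoly : HasDerivAt (fun x : ℝ => x + x^3) (1 + 3 * r^2) r := by
      simpa using (hasDerivAt_id r).fun_add (hasDerivAt_pow 3 r)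
    exact hexp.mul hpoly
  have h2 : HasDerivAt (fun x : ℝ => (2.5 + 2.5^3 : ℝ) + (1/2) * ∫ ρ in (2.5:ℝ)..x, Xc ρ)
      ((1/2) * Xc r) r := by
    have := (intervalIntegral.integral_hasDerivAt_right
      (Xc_cont.intervalIntegrable 2.5 r)
      (Xc_cont.stronglyMeasurableAtFilter _ _)
      Xc_cont.continuousAt).const_mul (1/2)
    simpa using this.const_add (2.5 + 2.5^3 : ℝ)
  have h3 := h1.sub h2
  have heq : Gc = fun x => (Real.exp (Hc x) * (x + x^3)) -
      ((2.5 + 2.5^3 : ℝ) + (1/2) * ∫ ρ in (2.5:ℝ)..x, Xc ρ) := by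
    funext x; unfold Gc; ring
  rw [heq]
  exact h3

lemma Gc_deriv_pos {r : ℝ} (hr : (2.5:ℝ) < r) : 0 < deriv Gc r := by
  rw [(Gc_hasDeriv r).deriv]
  have hm : max r 2 = r := max_eq_left (by linarith)
  have hE : 0 < Real.exp (Hc r) := Real.exp_pos _
  obtain ⟨hf1, hf2⟩ := fa_bounds hr.le
  have hV : Vp (fa r) ≤ 23/16 := Vp_bound hf1 hf2
  simp only [Kc, Xc, psc, fc, hm]
  have key : Real.exp (Hc r) * ((1/2) * (r * psa r ^ 2)) * (r + r^3)
      + Real.exp (Hc r) * (1 + 3*r^2)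
      - (1/2) * (Real.exp (Hc r) * r^2 * ((1+r^2) * psa r^2 + 2 * Vp (fa r)))
      = Real.exp (Hc r) * (1 + 3*r^2 - r^2 * Vp (fa r)) := by ring
  rw [key]
  apply mul_pos hE
  nlinarith [sq_nonneg r]

lemma Gc_cont : Continuous Gc :=
  continuous_iff_continuousAt.2 fun r => (Gc_hasDeriv r).continuousAt

lemma Gc_mono : StrictMonoOn Gc (Ici (2.5:ℝ)) := by
  apply strictMonoOn_of_deriv_pos (convex_Ici _) Gc_cont.continuousOn
  intro x hx
  rw [interior_Ici] at hx
  exact Gc_deriv_pos hx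

lemma Gc_at : Gc 2.5 = 0 := by
  unfold Gc Hc
  simp [intervalIntegral.integral_same]

lemma Gc_pos {r : ℝ} (hr : (2.5:ℝ) < r) : 0 < Gc r := by
  have := Gc_mono self_mem_Ici (mem_Ici.2 hr.le) hr
  rwa [Gc_at] at this

theorem explicit_dataset_outermost_minimal
    (r₀ Δ ω₀ : ℝ) (hr₀ : r₀ = 2.5)
    (hΔ : Δ = 3 / 2 + 3 / (2 * Real.sqrt 2))
    (hω₀ : ω₀ = r₀ + r₀ ^ 3)
    (V φ h χ ω : ℝ → ℝ)
    (hV : ∀ x, V x = -(9 / 16) * x ^ 2 + 9 * x ^ 3 + 11 * x ^ 4)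
    (hφ : ∀ r ≥ r₀, φ r = (3.8 / r) ^ Δ * (-1 + (3.2 / r) ^ 2 - (2.4 / r) ^ 4))
    (hh : ∀ r, h r = (1 / 2) * ∫ ρ in r₀..r, ρ * deriv φ ρ ^ 2)
    (hχ : ∀ r, χ r = (1 + r ^ 2) * deriv φ r ^ 2 + 2 * V (φ r))
    (hω : ∀ r, ω r = Real.exp (-h r) *
      (ω₀ + (1 / 2) * ∫ ρ in r₀..r, Real.exp (h ρ) * ρ ^ 2 * χ ρ)) :
    ∀ r > r₀, ω r < r + r ^ 3 := by
  subst hr₀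
  subst hω₀
  have hphi' : ∀ x ≥ (2.5:ℝ), φ x = fa x := by
    intro x hx
    rw [hφ x hx, hΔ]
    simp only [fa, D0]
  have hder : ∀ x ∈ Ioi (2.5:ℝ), deriv φ x = psc x := by
    intro x hx
    have hx' : (2.5:ℝ) < x := hx
    have hx0 : (0:ℝ) < x := by linarith [hx']
    have heq : φ =ᶠ[nhds x] fa := by
      filter_upwards [Ioi_mem_nhds hx'] with y hy using hphi' y (le_of_lt hy)
    have hd : HasDerivAt φ (psa x) x := (fa_hasDeriv hx0).congr_of_eventuallyEq heq
    rw [hd.deriv]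
    unfold psc
    rw [max_eq_left (by linarith [hx'] : (2:ℝ) ≤ x)]
  have hH : ∀ x ≥ (2.5:ℝ), h x = Hc x := by
    intro x hx
    rw [hh x]
    unfold Hc
    congr 1
    apply intervalIntegral.integral_congr_ae
    filter_upwards with y hy
    rw [Set.uIoc_of_le hx] at hy
    rw [hder y hy.1]
    rfl
  intro r hr
  have hr' : (2.5:ℝ) < r := hr
  have hX : (∫ ρ in (2.5:ℝ)..r, Real.exp (h ρ) * ρ ^ 2 * χ ρ) = ∫ ρ in (2.5:ℝ)..r, Xc ρ := by
    apply intervalIntegral.integral_congr_ae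
    filter_upwards with y hy
    rw [Set.uIoc_of_le hr'.le] at hy
    have hy1 : (2.5:ℝ) < y := hy.1
    have hy2 : (2:ℝ) ≤ y := by linarith
    rw [hH y hy1.le, hχ y, hder y hy1, hV (φ y), hphi' y hy1.le]
    unfold Xc fc Vp
    rw [max_eq_left hy2]
  have hGr : 0 < Gc r := Gc_pos hr'
  rw [hω r, hH r hr'.le, hX]
  have h1 : 2.5 + 2.5 ^ 3 + 1 / 2 * ∫ ρ in (2.5:ℝ)..r, Xc ρ < Real.exp (Hc r) * (r + r^3) := by
    unfold Gc at hGr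
    linarith
  calc Real.exp (-Hc r) * (2.5 + 2.5 ^ 3 + 1 / 2 * ∫ ρ in (2.5:ℝ)..r, Xc ρ)
      < Real.exp (-Hc r) * (Real.exp (Hc r) * (r + r^3)) :=
        mul_lt_mul_of_pos_left h1 (Real.exp_pos _)
    _ = r + r ^ 3 := by rw [← mul_assoc, ← Real.exp_add]; simp
end
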